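/- arXiv:1105.2652 — 6 statements merged into one kernel-verified Lean document; each statement's English description precedes it below -/
import Mathlib

section
/- Suppose (P1) and (C1)–(C3) hold. If ∫₀^∞ t Σ_{j=1}^d ψ_j(t) dt = ∞, where ψ_j(t) = min_{|x|=t} p_j(x), and the function r ↦ r^{2N-2} Σ_{j=1}^d ψ_j(r) is nondecreasing for all sufficiently large r, then the system Δu_i = p_i(x) f_i(u_1,…,u_d), i = 1,…,d, has no nonnegative nontrivial entire bounded radial solution on ℝ^N. -/
open MeasureTheory Set Filter

/-- The Laplacian of a function on Euclidean space, as the sum of the pure second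
derivatives in the coordinate directions. -/
noncomputable def lap {N : ℕ} (u : EuclideanSpace ℝ (Fin N) → ℝ)
    (x : EuclideanSpace ℝ (Fin N)) : ℝ :=
  ∑ i : Fin N,
    iteratedFDeriv ℝ 2 u x ![EuclideanSpace.single i 1, EuclideanSpace.single i 1]

variable {N : ℕ}

lemma second_deriv_line (w : EuclideanSpace ℝ (Fin N) → ℝ) (hw : ContDiff ℝ 2 w)
    (x v : EuclideanSpace ℝ (Fin N)) :
    iteratedFDeriv ℝ 2 w x ![v, v] = deriv (deriv (fun t : ℝ => w (x + t • v))) 0 := by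
  have hline : ∀ t : ℝ, HasDerivAt (fun s : ℝ => x + s • v) v t := by
    intro t
    simpa using ((hasDerivAt_id t).smul_const v).const_add x
  have hd1 : ∀ t : ℝ, HasDerivAt (fun s : ℝ => w (x + s • v)) (fderiv ℝ w (x + t • v) v) t := by
    intro t
    exact ((hw.differentiable (by norm_num)).differentiableAt.hasFDerivAt).comp_hasDerivAt t
      (hline t)
  have hD1 : deriv (fun s : ℝ => w (x + s • v)) = fun t => fderiv ℝ w (x + t • v) v := by
    funext t; exact (hd1 t).deriv
  rw [hD1]
  have hfd : ContDiff ℝ 1 (fderiv ℝ w) := hw.fderiv_right (by norm_num)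
  have h2 : HasDerivAt (fun t : ℝ => fderiv ℝ w (x + t • v) v)
      ((fderiv ℝ (fderiv ℝ w) x v) v) 0 := by
    have hΦ : HasDerivAt (fun t : ℝ => fderiv ℝ w (x + t • v)) (fderiv ℝ (fderiv ℝ w) x v) 0 := by
      have hx0 : x + (0:ℝ) • v = x := by simp
      have := ((hfd.differentiable one_ne_zero).differentiableAt.hasFDerivAt
        (x := x + (0:ℝ) • v)).comp_hasDerivAt 0 (hline 0)
      rwa [hx0] at this
    exact ((ContinuousLinearMap.apply ℝ ℝ v).hasFDerivAt.comp_hasDerivAt 0 hΦ)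
  rw [iteratedFDeriv_two_apply]
  simp only [Matrix.cons_val_zero, Matrix.cons_val_one, Matrix.head_cons]
  exact h2.deriv.symm

lemma deriv2_sqrt_comp (g : ℝ → ℝ) (hg : ContDiff ℝ 2 g) (r : ℝ) (hr : 0 < r) :
    deriv (deriv (fun t : ℝ => g (Real.sqrt (r ^ 2 + t ^ 2)))) 0 = deriv g r / r := by
  set ρ : ℝ → ℝ := fun t => Real.sqrt (r ^ 2 + t ^ 2) with hρdef
  have hpos : ∀ t : ℝ, 0 < r ^ 2 + t ^ 2 := fun t => by positivity
  have hρ0 : ρ 0 = r := by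
    simp only [hρdef]; rw [show r ^ 2 + (0:ℝ) ^ 2 = r ^ 2 by ring, Real.sqrt_sq hr.le]
  have hρpos : ∀ t, 0 < ρ t := fun t => Real.sqrt_pos.mpr (hpos t)
  have hρ : ∀ t : ℝ, HasDerivAt ρ (t * (ρ t)⁻¹) t := by
    intro t
    have hin : HasDerivAt (fun t : ℝ => r ^ 2 + t ^ 2) (2 * t) t := by
      simpa using (hasDerivAt_pow 2 t).const_add (r ^ 2)
    have := (Real.hasDerivAt_sqrt (hpos t).ne').comp t hin
    convert this using 1 <;> try rfl
    rw [hρdef]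
    field_simp
  have hg1 : Differentiable ℝ g := hg.differentiable (by norm_num)
  have hgd : ContDiff ℝ 1 (deriv g) := by
    have h := (contDiff_succ_iff_deriv (n := 1)).mp (by exact_mod_cast hg)
    exact h.2.2
  have hφ : ∀ t : ℝ, HasDerivAt (fun t : ℝ => g (ρ t)) (deriv g (ρ t) * (t * (ρ t)⁻¹)) t :=
    fun t => ((hg1 (ρ t)).hasDerivAt).comp t (hρ t)
  have hDφ : deriv (fun t : ℝ => g (ρ t)) = fun t => deriv g (ρ t) * (t * (ρ t)⁻¹) := by
    funext t; exact (hφ t).deriv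
  have hA : HasDerivAt (fun t : ℝ => deriv g (ρ t)) (deriv (deriv g) (ρ 0) * (0 * (ρ 0)⁻¹)) 0 :=
    ((hgd.differentiable one_ne_zero (ρ 0)).hasDerivAt).comp 0 (hρ 0)
  have hBinv : HasDerivAt (fun t : ℝ => (ρ t)⁻¹) (-(0 * (ρ 0)⁻¹) / (ρ 0) ^ 2) 0 :=
    (hρ 0).inv (hρpos 0).ne'
  have hB : HasDerivAt (fun t : ℝ => t * (ρ t)⁻¹)
      (1 * (ρ 0)⁻¹ + 0 * (-(0 * (ρ 0)⁻¹) / (ρ 0) ^ 2)) 0 :=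
    (hasDerivAt_id 0).mul hBinv
  have hAB := hA.mul hB
  rw [hDφ]
  rw [HasDerivAt.deriv (f := fun t => deriv g (ρ t) * (t * (ρ t)⁻¹)) hAB]
  rw [hρ0]
  field_simp
  ring

lemma radial_repr (w : EuclideanSpace ℝ (Fin N) → ℝ)
    (hrad : ∀ x y, ‖x‖ = ‖y‖ → w x = w y) (i₀ : Fin N) (y : EuclideanSpace ℝ (Fin N)) :
    w y = w (‖y‖ • EuclideanSpace.single i₀ (1:ℝ)) := by
  apply hrad
  rw [norm_smul, EuclideanSpace.norm_single]
  simp [abs_of_nonneg (norm_nonneg y)]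

lemma radial_lap (w : EuclideanSpace ℝ (Fin N) → ℝ) (hw : ContDiff ℝ 2 w)
    (hrad : ∀ x y, ‖x‖ = ‖y‖ → w x = w y) (i₀ : Fin N) (r : ℝ) (hr : 0 < r) :
    lap w (r • EuclideanSpace.single i₀ (1:ℝ)) =
      deriv (deriv (fun t : ℝ => w (t • EuclideanSpace.single i₀ (1:ℝ)))) r +
      ((N : ℝ) - 1) * deriv (fun t : ℝ => w (t • EuclideanSpace.single i₀ (1:ℝ))) r / r := by
  classical
  set e₁ : EuclideanSpace ℝ (Fin N) := EuclideanSpace.single i₀ (1:ℝ) with he₁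
  set g : ℝ → ℝ := fun t => w (t • e₁) with hgdef
  have hg : ContDiff ℝ 2 g := hw.comp ((contDiff_id (E := ℝ)).smul contDiff_const)
  have hwg : ∀ y, w y = g ‖y‖ := by
    intro y
    rw [hgdef]
    exact radial_repr w hrad i₀ y
  -- the diagonal term
  have hdiag : iteratedFDeriv ℝ 2 w (r • e₁) ![e₁, e₁] = deriv (deriv g) r := by
    rw [second_deriv_line w hw]
    have hline : (fun t : ℝ => w (r • e₁ + t • e₁)) = fun t => g (r + t) := by
      funext t; rw [hgdef]; simp only [add_smul]
    rw [hline]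
    have h1 : deriv (fun t : ℝ => g (r + t)) = fun t => deriv g (r + t) := by
      funext t; exact deriv_comp_const_add g r t
    rw [h1]
    have h2 := deriv_comp_const_add (deriv g) r 0
    simpa using h2
  -- the off-diagonal terms
  have hoff : ∀ i : Fin N, i ≠ i₀ →
      iteratedFDeriv ℝ 2 w (r • e₁) ![EuclideanSpace.single i 1, EuclideanSpace.single i 1]
        = deriv g r / r := by
    intro i hi
    rw [second_deriv_line w hw]
    have hnorm : ∀ t : ℝ, ‖r • e₁ + t • EuclideanSpace.single i (1:ℝ)‖
        = Real.sqrt (r ^ 2 + t ^ 2) := by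
      intro t
      have hinner : inner ℝ (r • e₁) (t • EuclideanSpace.single i (1:ℝ)) = (0:ℝ) := by
        rw [real_inner_smul_left, real_inner_smul_right, he₁,
          EuclideanSpace.inner_single_left]
        simp [EuclideanSpace.single_apply, hi.symm]
      have hsq : ‖r • e₁ + t • EuclideanSpace.single i (1:ℝ)‖ ^ 2 = r ^ 2 + t ^ 2 := by
        rw [norm_add_sq_real, hinner]
        rw [norm_smul, norm_smul, he₁, EuclideanSpace.norm_single, EuclideanSpace.norm_single]
        simp [mul_pow, sq_abs]
      rw [← hsq, Real.sqrt_sq (norm_nonneg _)]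
    have hline : (fun t : ℝ => w (r • e₁ + t • EuclideanSpace.single i (1:ℝ)))
        = fun t => g (Real.sqrt (r ^ 2 + t ^ 2)) := by
      funext t; rw [hwg, hnorm]
    rw [hline]
    exact deriv2_sqrt_comp g hg r hr
  -- sum up
  rw [lap]
  have hterm : ∀ i : Fin N,
      iteratedFDeriv ℝ 2 w (r • e₁) ![EuclideanSpace.single i 1, EuclideanSpace.single i 1]
        = if i = i₀ then deriv (deriv g) r else deriv g r / r := by
    intro i
    by_cases h : i = i₀
    · subst h; simp only [if_pos rfl]; exact hdiag
    · rw [if_neg h]; exact hoff i h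
  rw [Finset.sum_congr rfl fun i _ => hterm i]
  rw [← Finset.add_sum_erase Finset.univ _ (Finset.mem_univ i₀), if_pos rfl]
  have hrest : ∑ i ∈ Finset.univ.erase i₀,
      (if i = i₀ then deriv (deriv g) r else deriv g r / r) = ((N:ℝ) - 1) * (deriv g r / r) := by
    rw [Finset.sum_congr rfl fun i hi => if_neg (Finset.ne_of_mem_erase hi)]
    rw [Finset.sum_const, Finset.card_erase_of_mem (Finset.mem_univ i₀)]
    simp only [Finset.card_univ, Fintype.card_fin, nsmul_eq_mul]
    have hN1 : (1:ℕ) ≤ N := Nat.one_le_iff_ne_zero.mpr (by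
      rintro rfl; exact absurd i₀.2 (by simp))
    rw [Nat.cast_sub hN1]
    norm_num
  rw [hrest, mul_div_assoc]

lemma deriv_nonneg_of_ode (n : ℕ) (hn : 2 ≤ n) (g : ℝ → ℝ) (hg : ContDiff ℝ 2 g)
    (h : ∀ r : ℝ, 0 < r → 0 ≤ deriv (deriv g) r + ((n:ℝ) - 1) * deriv g r / r) :
    ∀ r : ℝ, 0 < r → 0 ≤ deriv g r := by
  have hg1 : Differentiable ℝ g := hg.differentiable (by norm_num)
  have hgd : ContDiff ℝ 1 (deriv g) := by
    have h := (contDiff_succ_iff_deriv (n := 1)).mp (by exact_mod_cast hg)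
    exact h.2.2
  set φ : ℝ → ℝ := fun t => t ^ (n - 1) * deriv g t with hφdef
  have hφ' : ∀ r : ℝ, 0 < r →
      HasDerivAt φ (r ^ (n - 1) * (deriv (deriv g) r + ((n:ℝ) - 1) * deriv g r / r)) r := by
    intro r hr
    have h1 : HasDerivAt (fun t : ℝ => t ^ (n - 1)) ((n - 1 : ℕ) * r ^ (n - 2)) r := by
      have he : n - 2 = n - 1 - 1 := by omega
      rw [he]
      exact hasDerivAt_pow (n - 1) r
    have h2 : HasDerivAt (deriv g) (deriv (deriv g) r) r :=
      ((hgd.differentiable one_ne_zero) r).hasDerivAt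
    have := h1.mul h2
    convert this using 1 <;> try rfl
    have hpow : r ^ (n - 1) = r ^ (n - 2) * r := by
      rw [← pow_succ]; congr 1; omega
    have hn1 : ((n - 1 : ℕ) : ℝ) = (n : ℝ) - 1 := by
      push_cast [Nat.cast_sub (by omega : 1 ≤ n)]; ring
    rw [hpow, hn1]
    field_simp
    ring
  have hφc : ContinuousOn φ (Ici 0) :=
    ((continuous_pow (n - 1)).mul (hgd.continuous)).continuousOn
  have hφmono : MonotoneOn φ (Ici 0) := by
    apply monotoneOn_of_hasDerivWithinAt_nonneg (convex_Ici 0) hφc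
      (f' := fun r => r ^ (n - 1) * (deriv (deriv g) r + ((n:ℝ) - 1) * deriv g r / r))
    · intro x hx
      rw [interior_Ici] at hx
      exact (hφ' x hx).hasDerivWithinAt
    · intro x hx
      rw [interior_Ici] at hx
      exact mul_nonneg (pow_nonneg hx.le _) (h x hx)
  intro r hr
  have h0 : φ 0 = 0 := by
    simp only [hφdef]
    rw [zero_pow (by omega : n - 1 ≠ 0), zero_mul]
  have := hφmono (self_mem_Ici) (le_of_lt hr : (0:ℝ) ≤ r) hr.le
  rw [h0] at this
  have hrp : (0:ℝ) < r ^ (n - 1) := pow_pos hr _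
  have h2 : 0 ≤ r ^ (n - 1) * deriv g r := this
  nlinarith [h2, hrp]

lemma zpow_mq (n : ℕ) (hn : 3 ≤ n) (s : ℝ) (hs : 0 < s) (c : ℝ) :
    (s ^ (2 * n - 2) * c) * s ^ ((3:ℤ) - 2 * n) = s * c := by
  have h1 : s ^ (2 * n - 2) = s ^ (((2 * n - 2 : ℕ)):ℤ) := (zpow_natCast s _).symm
  rw [h1, mul_right_comm, ← zpow_add₀ hs.ne']
  have : ((2 * n - 2 : ℕ):ℤ) + ((3:ℤ) - 2 * n) = 1 := by
    have : ((2 * n - 2 : ℕ):ℤ) = 2 * n - 2 := by push_cast [Nat.cast_sub (by omega : 2 ≤ 2*n)]; ring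
    rw [this]; ring
  rw [this, zpow_one]

lemma zpow_mq2 (n : ℕ) (hn : 3 ≤ n) (s : ℝ) (hs : 0 < s) (c : ℝ) :
    (s ^ (2 * n - 2) * c) * s ^ ((1:ℤ) - n) = s ^ (n - 1) * c := by
  have h1 : s ^ (2 * n - 2) = s ^ (((2 * n - 2 : ℕ)):ℤ) := (zpow_natCast s _).symm
  have h2 : s ^ (n - 1) = s ^ (((n - 1 : ℕ)):ℤ) := (zpow_natCast s _).symm
  rw [h1, h2, mul_right_comm, ← zpow_add₀ hs.ne']
  congr 1
  have e1 : ((2 * n - 2 : ℕ):ℤ) = 2 * n - 2 := by push_cast [Nat.cast_sub (by omega : 2 ≤ 2*n)]; ring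
  have e2 : ((n - 1 : ℕ):ℤ) = n - 1 := by push_cast [Nat.cast_sub (by omega : 1 ≤ n)]; ring
  rw [e1, e2]; ring

lemma integrable_of_ode (n : ℕ) (hn : 3 ≤ n) (g q : ℝ → ℝ) (hg : ContDiff ℝ 2 g)
    (M : ℝ) (hM : ∀ t, |g t| ≤ M)
    (R₀ r1 ε : ℝ) (hr1R : R₀ ≤ r1) (hr11 : 1 ≤ r1) (hε : 0 < ε)
    (hqnn : ∀ t : ℝ, 0 < t → 0 ≤ q t)
    (hqmono : MonotoneOn (fun r : ℝ => r ^ (2 * n - 2) * q r) (Ici R₀))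
    (hgd' : ∀ r : ℝ, 0 < r → 0 ≤ deriv g r)
    (hode : ∀ r : ℝ, r1 ≤ r →
      ε * q r ≤ deriv (deriv g) r + ((n:ℝ) - 1) * deriv g r / r) :
    IntegrableOn (fun s : ℝ => s * q s) (Ioi r1) := by
  have hr10 : (0:ℝ) < r1 := lt_of_lt_of_le one_pos hr11
  set m : ℝ → ℝ := fun r => r ^ (2 * n - 2) * q r with hmdef
  have hmnn : ∀ t : ℝ, 0 < t → 0 ≤ m t := fun t ht =>
    mul_nonneg (pow_nonneg ht.le _) (hqnn t ht)
  have hg1 : Differentiable ℝ g := hg.differentiable (by norm_num)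
  have hgd : ContDiff ℝ 1 (deriv g) := by
    have h := (contDiff_succ_iff_deriv (n := 1)).mp (by exact_mod_cast hg)
    exact h.2.2
  have hgd1 : Differentiable ℝ (deriv g) := hgd.differentiable one_ne_zero
  set φ : ℝ → ℝ := fun t => t ^ (n - 1) * deriv g t with hφdef
  have hφ' : ∀ r : ℝ, 0 < r →
      HasDerivAt φ (r ^ (n - 1) * (deriv (deriv g) r + ((n:ℝ) - 1) * deriv g r / r)) r := by
    intro r hr
    have h1 : HasDerivAt (fun t : ℝ => t ^ (n - 1)) ((n - 1 : ℕ) * r ^ (n - 2)) r := by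
      have he : n - 2 = n - 1 - 1 := by omega
      rw [he]
      exact hasDerivAt_pow (n - 1) r
    have := h1.mul ((hgd1 r).hasDerivAt)
    convert this using 1 <;> try rfl
    have hpow : r ^ (n - 1) = r ^ (n - 2) * r := by
      rw [← pow_succ]; congr 1; omega
    have hn1 : ((n - 1 : ℕ) : ℝ) = (n : ℝ) - 1 := by
      push_cast [Nat.cast_sub (by omega : 1 ≤ n)]; ring
    rw [hpow, hn1]
    field_simp
    ring
  set cn : ℝ := ((2:ℝ) ^ ((n:ℤ) - 2) - 1) / ((n:ℝ) - 2) with hcndef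
  have h2n : (1:ℝ) < (2:ℝ) ^ ((n:ℤ) - 2) := by
    apply one_lt_zpow₀ one_lt_two
    omega
  have hcn : 0 < cn := by
    apply div_pos (by linarith)
    have : (3:ℝ) ≤ (n:ℝ) := by exact_mod_cast hn
    linarith
  -- Step 1 : pointwise lower bound for deriv g
  have key : ∀ R : ℝ, 2 * r1 ≤ R →
      ε * m (R / 2) * cn * R ^ ((3:ℤ) - 2 * n) ≤ deriv g R := by
    intro R hR
    have hR0 : (0:ℝ) < R := by linarith
    have hR2 : r1 ≤ R / 2 := by linarith
    have hR20 : (0:ℝ) < R / 2 := by linarith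
    set K : ℝ := ε * m (R / 2) with hKdef
    have hK : 0 ≤ K := mul_nonneg hε.le (hmnn _ hR20)
    set η : ℝ → ℝ := fun t => φ t + K / ((n:ℝ) - 2) * t ^ ((2:ℤ) - n) with hηdef
    have hn2 : (0:ℝ) < (n:ℝ) - 2 := by
      have : (3:ℝ) ≤ (n:ℝ) := by exact_mod_cast hn
      linarith
    -- derivative of η
    have hetaD : ∀ t : ℝ, r1 ≤ t → HasDerivAt η
        ((t ^ (n - 1) * (deriv (deriv g) t + ((n:ℝ) - 1) * deriv g t / t))
          + K / ((n:ℝ) - 2) * ((((2:ℤ) - (n:ℤ)) : ℝ) * t ^ ((2:ℤ) - n - 1))) t := by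
      intro t ht
      have ht0 : (0:ℝ) < t := lt_of_lt_of_le hr10 ht
      have hz := hasDerivAt_zpow ((2:ℤ) - n) t (Or.inl ht0.ne')
      have h2 := hz.const_mul (K / ((n:ℝ) - 2))
      have hsum := (hφ' t ht0).add h2
      convert hsum using 2 <;> try rfl
      push_cast
      ring
    have hηnonneg : ∀ t : ℝ, R / 2 ≤ t → t ≤ R → 0 ≤
        ((t ^ (n - 1) * (deriv (deriv g) t + ((n:ℝ) - 1) * deriv g t / t))
          + K / ((n:ℝ) - 2) * ((((2:ℤ) - (n:ℤ)) : ℝ) * t ^ ((2:ℤ) - n - 1))) := by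
      intro t ht htR
      have htr1 : r1 ≤ t := le_trans hR2 ht
      have ht0 : (0:ℝ) < t := lt_of_lt_of_le hr10 htr1
      have hz1 : t ^ ((2:ℤ) - n - 1) = t ^ ((1:ℤ) - n) := by
        congr 1; ring
      have hsecond : K / ((n:ℝ) - 2) * ((((2:ℤ) - (n:ℤ)) : ℝ) * t ^ ((2:ℤ) - n - 1))
          = -(K * t ^ ((1:ℤ) - n)) := by
        rw [hz1]
        have : ((((2:ℤ) - (n:ℤ)) : ℝ)) = -(((n:ℝ)) - 2) := by push_cast; ring
        rw [this]
        field_simp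
      rw [hsecond, ← sub_eq_add_neg, sub_nonneg]
      -- goal now: K * t ^ (1 - n) ≤ t ^ (n-1) * (...)
      have hlow : ε * q t ≤ deriv (deriv g) t + ((n:ℝ) - 1) * deriv g t / t := hode t htr1
      have hm : m (R / 2) ≤ m t := hqmono (by simp only [mem_Ici]; linarith)
        (by simp only [mem_Ici]; linarith) (by linarith)
      have htz : (0:ℝ) < t ^ ((1:ℤ) - n) := zpow_pos ht0 _
      calc K * t ^ ((1:ℤ) - n) = ε * m (R/2) * t ^ ((1:ℤ) - n) := by rw [hKdef]
        _ ≤ ε * m t * t ^ ((1:ℤ) - n) := by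
            apply mul_le_mul_of_nonneg_right _ htz.le
            exact mul_le_mul_of_nonneg_left hm hε.le
        _ = t ^ (n - 1) * (ε * q t) := by
            rw [hmdef]
            have := zpow_mq2 n hn t ht0 (q t)
            calc ε * (t ^ (2*n-2) * q t) * t ^ ((1:ℤ) - n)
                = ((t ^ (2*n-2) * q t) * t ^ ((1:ℤ) - n)) * ε := by ring
              _ = (t ^ (n-1) * q t) * ε := by rw [this]
              _ = t ^ (n - 1) * (ε * q t) := by ring
        _ ≤ t ^ (n - 1) * (deriv (deriv g) t + ((n:ℝ) - 1) * deriv g t / t) := by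
            apply mul_le_mul_of_nonneg_left hlow (pow_nonneg ht0.le _)
    -- monotonicity of η on [R/2, R]
    have hηc : ContinuousOn η (Icc (R/2) R) := fun t ht =>
      ((hetaD t (le_trans hR2 ht.1)).continuousAt).continuousWithinAt
    have hηmono : MonotoneOn η (Icc (R/2) R) := by
      apply monotoneOn_of_hasDerivWithinAt_nonneg (convex_Icc _ _) hηc
        (f' := fun t => (t ^ (n - 1) * (deriv (deriv g) t + ((n:ℝ) - 1) * deriv g t / t))
          + K / ((n:ℝ) - 2) * ((((2:ℤ) - (n:ℤ)) : ℝ) * t ^ ((2:ℤ) - n - 1)))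
      · intro x hx
        rw [interior_Icc] at hx
        exact (hetaD x (le_trans hR2 hx.1.le)).hasDerivWithinAt
      · intro x hx
        rw [interior_Icc] at hx
        exact hηnonneg x hx.1.le hx.2.le
    have hle := hηmono (⟨le_refl _, by linarith⟩ : R/2 ∈ Icc (R/2) R)
      (⟨by linarith, le_refl _⟩ : R ∈ Icc (R/2) R) (by linarith)
    have hφR2 : 0 ≤ φ (R/2) := mul_nonneg (pow_nonneg hR20.le _) (hgd' _ hR20)
    have hhalf : (R/2) ^ ((2:ℤ) - n) = R ^ ((2:ℤ) - n) * (2:ℝ) ^ ((n:ℤ) - 2) := by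
      rw [div_zpow, div_eq_mul_inv, ← zpow_neg]
      congr 1
      ring
    have hstep : K * cn * R ^ ((2:ℤ) - n) ≤ φ R := by
      have h1 : φ (R/2) + K / ((n:ℝ)-2) * (R/2) ^ ((2:ℤ)-n)
          ≤ φ R + K / ((n:ℝ)-2) * R ^ ((2:ℤ)-n) := hle
      have heq : K * cn * R ^ ((2:ℤ)-n)
          = K / ((n:ℝ)-2) * ((R/2) ^ ((2:ℤ)-n) - R ^ ((2:ℤ)-n)) := by
        rw [hhalf, hcndef]
        field_simp
      linarith [heq, h1, hφR2]
    have hRpow : (0:ℝ) < R ^ (n-1) := pow_pos hR0 _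
    have hz3 : ε * m (R / 2) * cn * R ^ ((3:ℤ) - 2*n)
        = (K * cn * R ^ ((2:ℤ)-n)) / R ^ (n-1) := by
      rw [hKdef, ← zpow_natCast R (n-1), mul_div_assoc, ← zpow_sub₀ hR0.ne']
      congr 1
      have : ((n-1:ℕ):ℤ) = (n:ℤ)-1 := by omega
      rw [this]
      ring_nf
    rw [hz3, div_le_iff₀ hRpow]
    calc K * cn * R ^ ((2:ℤ)-n) ≤ φ R := hstep
      _ = deriv g R * R ^ (n-1) := by rw [hφdef]; ring
  -- Step 2 : integral bound
  set c2 : ℝ := ε * cn * (2:ℝ) ^ ((3:ℤ) - 2*n) with hc2def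
  have hc2 : 0 < c2 := by
    apply mul_pos (mul_pos hε hcn)
    exact zpow_pos two_pos _
  set C' : ℝ := 2 * c2 with hC'def
  have hC' : 0 < C' := by positivity
  have hIoc : ∀ S : ℝ, r1 ≤ S → IntegrableOn (fun s : ℝ => s * q s) (Ioc r1 S) := by
    intro S hS
    have hmm : MonotoneOn m (uIcc r1 S) := by
      rw [uIcc_of_le hS]
      intro x hx y hy hxy
      exact hqmono (by simp only [mem_Ici]; linarith [hx.1])
        (by simp only [mem_Ici]; linarith [hy.1]) hxy
    have h1 : IntervalIntegrable m volume r1 S := hmm.intervalIntegrable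
    have h2 : ContinuousOn (fun s : ℝ => s ^ ((3:ℤ) - 2*n)) (uIcc r1 S) := by
      intro x hx
      rw [uIcc_of_le hS] at hx
      have hx0 : x ≠ 0 := by have := hx.1; intro h; rw [h] at this; linarith
      exact (continuousAt_zpow₀ x _ (Or.inl hx0)).continuousWithinAt
    have h3 := h1.mul_continuousOn h2
    have h4 : IntegrableOn (fun s : ℝ => m s * s ^ ((3:ℤ) - 2*n)) (Ioc r1 S) :=
      (intervalIntegrable_iff_integrableOn_Ioc_of_le hS).mp h3
    apply h4.congr_fun ?_ measurableSet_Ioc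
    intro s hs
    have hs0 : (0:ℝ) < s := lt_of_lt_of_le hr10 hs.1.le
    exact zpow_mq n hn s hs0 (q s)
  have hgderiv_int : ∀ a b : ℝ, IntervalIntegrable (deriv g) volume a b :=
    fun a b => (hgd.continuous).intervalIntegrable _ _
  have hbound : ∀ S : ℝ, r1 ≤ S → (∫ s in r1..S, s * q s) ≤ 2*M / C' := by
    intro S hS
    have hab : 2*r1 ≤ 2*S := by linarith
    have hFTC : ∫ R in (2*r1)..(2*S), deriv g R = g (2*S) - g (2*r1) :=
      intervalIntegral.integral_deriv_eq_sub (fun x _ => hg1 x) (hgderiv_int _ _)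
    set W : ℝ → ℝ := fun R => ε * m (R/2) * cn * R ^ ((3:ℤ) - 2*n) with hWdef
    have hWint : IntervalIntegrable W volume (2*r1) (2*S) := by
      have hmW : MonotoneOn (fun R : ℝ => m (R/2)) (uIcc (2*r1) (2*S)) := by
        rw [uIcc_of_le hab]
        intro x hx y hy hxy
        exact hqmono (by simp only [mem_Ici]; linarith [hx.1])
          (by simp only [mem_Ici]; linarith [hy.1]) (by linarith)
      have h1 : IntervalIntegrable (fun R : ℝ => m (R/2)) volume (2*r1) (2*S) :=
        hmW.intervalIntegrable
      have h2 : ContinuousOn (fun R : ℝ => ε * cn * R ^ ((3:ℤ) - 2*n)) (uIcc (2*r1) (2*S)) := by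
        intro x hx
        rw [uIcc_of_le hab] at hx
        have hx0 : x ≠ 0 := by have := hx.1; intro h; rw [h] at this; linarith
        exact (continuousAt_const.mul (continuousAt_zpow₀ x _ (Or.inl hx0))).continuousWithinAt
      have h3 := h1.mul_continuousOn h2
      have hWeq : W = fun R => m (R/2) * (ε * cn * R ^ ((3:ℤ) - 2*n)) :=
        funext fun R => by simp only [hWdef]; ring
      rw [hWeq]
      exact h3
    have hWle : ∀ R ∈ Icc (2*r1) (2*S), W R ≤ deriv g R := fun R hR => key R hR.1
    have hint1 : (∫ R in (2*r1)..(2*S), W R) ≤ ∫ R in (2*r1)..(2*S), deriv g R :=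
      intervalIntegral.integral_mono_on hab hWint (hgderiv_int _ _) hWle
    set F : ℝ → ℝ := fun s => ε * m s * cn * (2*s) ^ ((3:ℤ) - 2*n) with hFdef
    have hWF : W = fun R => F (R/2) := by
      funext R
      simp only [hWdef, hFdef]
      rw [show 2*(R/2) = R by ring]
    have hintW : (∫ R in (2*r1)..(2*S), W R) = 2 * ∫ s in r1..S, F s := by
      rw [hWF, intervalIntegral.integral_comp_div (f := F) (by norm_num : (2:ℝ) ≠ 0)]
      rw [show (2*r1)/2 = r1 by ring, show (2*S)/2 = S by ring]
      simp [smul_eq_mul]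
    have hFeq : EqOn F (fun s => c2 * (s * q s)) (uIcc r1 S) := by
      intro s hs
      rw [uIcc_of_le hS] at hs
      have hs0 : (0:ℝ) < s := lt_of_lt_of_le hr10 hs.1
      have h5 := zpow_mq n hn s hs0 (q s)
      simp only [hFdef, hc2def, hmdef]
      rw [mul_zpow]
      calc ε * (s ^ (2*n-2) * q s) * cn * ((2:ℝ) ^ ((3:ℤ)-2*n) * s ^ ((3:ℤ)-2*n))
          = (ε * cn * (2:ℝ) ^ ((3:ℤ)-2*n)) * ((s ^ (2*n-2) * q s) * s ^ ((3:ℤ)-2*n)) := by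
            ring
        _ = (ε * cn * (2:ℝ) ^ ((3:ℤ)-2*n)) * (s * q s) := by rw [h5]
    have hintF : (∫ s in r1..S, F s) = c2 * ∫ s in r1..S, s * q s := by
      rw [intervalIntegral.integral_congr hFeq, intervalIntegral.integral_const_mul]
    have hgb : g (2*S) - g (2*r1) ≤ 2*M := by
      have h6 := abs_le.mp (hM (2*S))
      have h7 := abs_le.mp (hM (2*r1))
      linarith [h6.2, h7.1]
    have hfinal : C' * ∫ s in r1..S, s * q s ≤ 2*M := by
      have h8 : 2 * (c2 * ∫ s in r1..S, s * q s) ≤ 2*M := by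
        rw [← hintF, ← hintW]
        linarith [hint1, hFTC.le, hgb]
      rw [hC'def]
      linarith
    rw [le_div_iff₀ hC']
    linarith [hfinal]
  apply integrableOn_Ioi_of_intervalIntegral_norm_bounded (2*M/C') r1
    (b := fun i : ℝ => i) (l := atTop) ?_ tendsto_id ?_
  · intro i
    rcases le_or_gt i r1 with h | h
    · rw [Ioc_eq_empty (by exact not_lt.mpr h)]
      exact integrableOn_empty
    · exact hIoc i h.le
  · filter_upwards [eventually_ge_atTop r1] with i hi
    have heq : EqOn (fun s : ℝ => ‖s * q s‖) (fun s : ℝ => s * q s) (uIcc r1 i) := by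
      intro s hs
      rw [uIcc_of_le hi] at hs
      have hs0 : (0:ℝ) < s := lt_of_lt_of_le hr10 hs.1
      simp only [Real.norm_eq_abs]
      exact abs_of_nonneg (mul_nonneg hs0.le (hqnn s hs0))
    rw [intervalIntegral.integral_congr heq]
    exact hbound i hi

lemma psi_int_small (p : EuclideanSpace ℝ (Fin N) → ℝ) (hp : Continuous p)
    (hpnn : ∀ x, 0 ≤ p x) (ψ : ℝ → ℝ)
    (hψ : ∀ t ≥ (0:ℝ), IsLeast (p '' {x | ‖x‖ = t}) (ψ t)) (a : ℝ) (ha : 0 < a) :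
    IntegrableOn (fun t : ℝ => t * ψ t) (Ioc 0 a) := by
  set K : Set (EuclideanSpace ℝ (Fin N)) := Metric.closedBall 0 (a + 1) with hKdef
  have hK : IsCompact K := isCompact_closedBall 0 (a + 1)
  have hmemK : ∀ x : EuclideanSpace ℝ (Fin N), ‖x‖ ≤ a → x ∈ K := by
    intro x hx
    simp only [hKdef, Metric.mem_closedBall, dist_zero_right]
    linarith
  -- minimizers
  have hmin : ∀ t : ℝ, 0 ≤ t → ∃ x, ‖x‖ = t ∧ p x = ψ t := by
    intro t ht
    obtain ⟨x, hx1, hx2⟩ := (hψ t ht).1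
    exact ⟨x, hx1, hx2⟩
  have hψle : ∀ t : ℝ, 0 ≤ t → ∀ x : EuclideanSpace ℝ (Fin N), ‖x‖ = t → ψ t ≤ p x := by
    intro t ht x hx
    exact (hψ t ht).2 ⟨x, hx, rfl⟩
  -- continuity on Ioc 0 a
  have hcont : ContinuousOn ψ (Ioc 0 a) := by
    intro t ht
    rw [Metric.continuousWithinAt_iff]
    intro ε hε
    obtain ⟨δ0, hδ0, hδ⟩ := Metric.uniformContinuousOn_iff.mp
      (hK.uniformContinuousOn_of_continuous hp.continuousOn) ε hε
    refine ⟨min δ0 1, by positivity, ?_⟩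
    intro s hs hdist
    have hs0 : 0 < s := hs.1
    have ht0 : 0 < t := ht.1
    have hst : dist s t < δ0 := lt_of_lt_of_le hdist (min_le_left _ _)
    -- scaled point comparison, generic
    have hcompare : ∀ b c : ℝ, 0 < b → 0 < c → b ≤ a → c ≤ a → dist b c < δ0 →
        ψ b < ψ c + ε := by
      intro b c hb hc hba hca hbc
      obtain ⟨x, hx1, hx2⟩ := hmin c hc.le
      set y := (b / c) • x with hydef
      have hy : ‖y‖ = b := by
        rw [hydef, norm_smul, hx1, Real.norm_eq_abs]
        rw [abs_of_pos (div_pos hb hc)]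
        field_simp
      have hyx : dist y x = dist b c := by
        rw [hydef, dist_eq_norm]
        have : (b / c) • x - x = ((b / c) - 1) • x := by
          rw [sub_smul, one_smul]
        rw [this, norm_smul, hx1, Real.norm_eq_abs]
        rw [Real.dist_eq]
        have : b / c - 1 = (b - c) / c := by field_simp
        rw [this, abs_div, abs_of_pos hc]
        field_simp
      have hyK : y ∈ K := hmemK y (by rw [hy]; exact hba)
      have hxK : x ∈ K := hmemK x (by rw [hx1]; exact hca)
      have hd : dist (p y) (p x) < ε := hδ y hyK x hxK (by rw [hyx]; exact hbc)
      have h1 : ψ b ≤ p y := hψle b hb.le y hy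
      have h2 : p y < p x + ε := by
        have := abs_lt.mp (by rwa [Real.dist_eq] at hd)
        linarith [this.2]
      rw [hx2] at h2
      linarith
    have hsa : s ≤ a := hs.2
    have hta : t ≤ a := ht.2
    have hA := hcompare s t hs0 ht0 hsa hta hst
    have hB := hcompare t s ht0 hs0 hta hsa (by rwa [dist_comm] at hst)
    rw [Real.dist_eq]
    rw [abs_sub_lt_iff]
    constructor <;> linarith
  -- bound
  obtain ⟨xm, hxmK, hxmax⟩ := hK.exists_isMaxOn ⟨0, by
    simp only [hKdef, Metric.mem_closedBall, dist_self]; linarith⟩ hp.continuousOn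
  have hbd : ∀ t ∈ Ioc (0:ℝ) a, ‖t * ψ t‖ ≤ a * |p xm| + 1 := by
    intro t ht
    have ht0 : 0 < t := ht.1
    obtain ⟨x, hx1, hx2⟩ := hmin t ht0.le
    have hψt : ψ t ≤ p xm := by
      rw [← hx2]
      exact hxmax (hmemK x (by rw [hx1]; exact ht.2))
    have hψnn : 0 ≤ ψ t := by rw [← hx2]; exact hpnn x
    rw [Real.norm_eq_abs, abs_of_nonneg (mul_nonneg ht0.le hψnn)]
    have h1 : t * ψ t ≤ a * p xm := mul_le_mul ht.2 hψt hψnn ha.le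
    have h2 : p xm ≤ |p xm| := le_abs_self _
    nlinarith [ha.le]
  have hmeas : AEStronglyMeasurable (fun t : ℝ => t * ψ t) (volume.restrict (Ioc 0 a)) :=
    (continuousOn_id.mul hcont).aestronglyMeasurable measurableSet_Ioc
  refine Integrable.mono' (g := fun _ => a * |p xm| + 1) ?_ hmeas ?_
  · exact integrableOn_const measure_Ioc_lt_top.ne
  · exact (ae_restrict_iff' measurableSet_Ioc).mpr (ae_of_all _ hbd)

theorem stmt1
    (N d : ℕ) (hN : 3 ≤ N) (hd : 1 ≤ d)
    (p : Fin d → EuclideanSpace ℝ (Fin N) → ℝ)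
    (f : Fin d → (Fin d → ℝ) → ℝ)
    -- (P1)
    (α : NNReal) (hα : 0 < α ∧ α < 1)
    (hp_nonneg : ∀ j x, 0 ≤ p j x)
    (hP1 : ∀ j x, ∃ C : NNReal, ∃ s ∈ nhds x, HolderOnWith C α (p j) s)
    -- (C1)
    (hf_nonneg : ∀ j v, (∀ i, 0 ≤ v i) → 0 ≤ f j v)
    (hC1 : ∀ j, ContDiffOn ℝ 1 (f j) {v : Fin d → ℝ | ∀ i, 0 ≤ v i})
    (hf0 : ∀ j, f j (fun _ => 0) = 0)
    (hfpos : ∀ j v, (∀ i, 0 ≤ v i) → (∃ i, 0 < v i) → 0 < f j v)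
    -- (C2)
    (hC2 : ∀ j v w, (∀ i, 0 ≤ v i) → (∀ i, v i ≤ w i) → f j v ≤ f j w)
    -- (C3)
    (hC3 : ¬ IntegrableOn
      (fun s : ℝ => (∫ t in (0:ℝ)..s, ∑ i, f i (fun _ => t)) ^ (-(1/2) : ℝ)) (Ioi 1))
    -- ψ j t = min_{|x| = t} p j x
    (ψ : Fin d → ℝ → ℝ)
    (hψ : ∀ j, ∀ t ≥ (0:ℝ), IsLeast (p j '' {x | ‖x‖ = t}) (ψ j t))
    -- ∫₀^∞ t Σⱼ ψⱼ(t) dt = ∞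
    (hdiv : ¬ IntegrableOn (fun t : ℝ => t * ∑ j, ψ j t) (Ioi 0))
    -- r ↦ r^{2N-2} Σⱼ ψⱼ(r) is nondecreasing for large r
    (R₀ : ℝ)
    (hmono : MonotoneOn (fun r : ℝ => r ^ (2 * N - 2) * ∑ j, ψ j r) (Ici R₀)) :
    -- conclusion: no nonnegative nontrivial entire bounded radial solution exists
    ¬ ∃ u : Fin d → EuclideanSpace ℝ (Fin N) → ℝ,
      (∀ i, ContDiff ℝ 2 (u i)) ∧
      (∀ i x, 0 ≤ u i x) ∧
      (∃ i x, u i x ≠ 0) ∧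
      (∀ i, ∃ M : ℝ, ∀ x, |u i x| ≤ M) ∧
      (∀ i x y, ‖x‖ = ‖y‖ → u i x = u i y) ∧
      (∀ i x, lap (u i) x = p i x * f i (fun j => u j x)) := by
  rintro ⟨u, hu2, hupos, ⟨i₀, x₀, hx₀⟩, hubd, hurad, hulap⟩
  have hN0 : 0 < N := by omega
  set j₀ : Fin N := ⟨0, hN0⟩ with hj₀
  set e₁ : EuclideanSpace ℝ (Fin N) := EuclideanSpace.single j₀ 1 with he₁
  have hpcont : ∀ j, Continuous (p j) := by
    intro j
    rw [continuous_iff_continuousAt]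
    intro x
    obtain ⟨C, s, hs, hH⟩ := hP1 j x
    exact (hH.continuousOn hα.1).continuousAt hs
  set G : Fin d → ℝ → ℝ := fun i t => u i (t • e₁) with hGdef
  have hGc : ∀ i, ContDiff ℝ 2 (G i) := fun i => (hu2 i).comp (contDiff_id.smul contDiff_const)
  have hlapG : ∀ i, ∀ r : ℝ, 0 < r →
      lap (u i) (r • e₁) = deriv (deriv (G i)) r + ((N:ℝ) - 1) * deriv (G i) r / r :=
    fun i r hr => radial_lap (u i) (hu2 i) (hurad i) j₀ r hr
  have hlapnn : ∀ i x, 0 ≤ lap (u i) x := by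
    intro i x
    rw [hulap i x]
    exact mul_nonneg (hp_nonneg i x) (hf_nonneg i _ (fun k => hupos k x))
  have hGd : ∀ i, ∀ r : ℝ, 0 < r → 0 ≤ deriv (G i) r := by
    intro i
    apply deriv_nonneg_of_ode N (by omega) (G i) (hGc i)
    intro r hr
    rw [← hlapG i r hr]
    exact hlapnn i _
  have hGmono : ∀ i, MonotoneOn (G i) (Ici 0) := by
    intro i
    apply monotoneOn_of_deriv_nonneg (convex_Ici 0) ((hGc i).continuous.continuousOn)
    · intro x _
      exact (((hGc i).differentiable (by norm_num)) x).differentiableWithinAt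
    · intro x hx
      rw [interior_Ici] at hx
      exact hGd i x hx
  have huG : ∀ i x, u i x = G i ‖x‖ := fun i x => radial_repr (u i) (hurad i) j₀ x
  have hc : 0 < u i₀ x₀ := lt_of_le_of_ne (hupos i₀ x₀) (Ne.symm hx₀)
  set c : ℝ := u i₀ x₀ with hcdef
  set r₀ : ℝ := ‖x₀‖ with hr₀def
  have hulow : ∀ r : ℝ, r₀ ≤ r → c ≤ G i₀ r := by
    intro r hr
    have h1 : G i₀ r₀ = c := (huG i₀ x₀).symm
    rw [← h1]
    exact hGmono i₀ (mem_Ici.mpr (norm_nonneg x₀))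
      (mem_Ici.mpr (le_trans (norm_nonneg _) hr)) hr
  haveI : Nonempty (Fin d) := ⟨⟨0, hd⟩⟩
  set εf : Fin d → ℝ := fun j => f j (fun k => if k = i₀ then c else 0) with hεfdef
  have hεfpos : ∀ j, 0 < εf j := fun j => hfpos j _
    (fun k => by by_cases h : k = i₀ <;> simp [h, hc.le]) ⟨i₀, by simp [hc]⟩
  set ε : ℝ := Finset.univ.inf' Finset.univ_nonempty εf with hεdef
  have hεpos : 0 < ε := (Finset.lt_inf'_iff _).mpr (fun j _ => hεfpos j)
  have hεle : ∀ j, ε ≤ εf j := fun j => Finset.inf'_le _ (Finset.mem_univ j)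
  set q : ℝ → ℝ := fun t => ∑ j, ψ j t with hqdef
  have hψnn : ∀ j (t : ℝ), 0 ≤ t → 0 ≤ ψ j t := by
    intro j t ht
    obtain ⟨x, _, hx2⟩ := (hψ j t ht).1
    rw [← hx2]
    exact hp_nonneg j x
  have hqnn : ∀ t : ℝ, 0 < t → 0 ≤ q t := fun t ht =>
    Finset.sum_nonneg fun j _ => hψnn j t ht.le
  have hnorm_re₁ : ∀ r : ℝ, 0 ≤ r → ‖r • e₁‖ = r := by
    intro r hr
    rw [norm_smul, Real.norm_eq_abs, abs_of_nonneg hr, he₁, EuclideanSpace.norm_single]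
    simp
  have hψle : ∀ j (r : ℝ), 0 ≤ r → ψ j r ≤ p j (r • e₁) := by
    intro j r hr
    exact (hψ j r hr).2 ⟨r • e₁, hnorm_re₁ r hr, rfl⟩
  set g : ℝ → ℝ := fun t => ∑ i, G i t with hgdef
  have hgc : ContDiff ℝ 2 g := ContDiff.sum fun i _ => hGc i
  choose Mi hMi using hubd
  set M : ℝ := ∑ i, Mi i with hMdef
  have hgM : ∀ t, |g t| ≤ M := by
    intro t
    calc |g t| ≤ ∑ i, |G i t| := Finset.abs_sum_le_sum_abs _ _
      _ ≤ ∑ i, Mi i := Finset.sum_le_sum fun i _ => hMi i _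
  have hGdiff : ∀ i, Differentiable ℝ (G i) := fun i => (hGc i).differentiable (by norm_num)
  have hGdC : ∀ i, Differentiable ℝ (deriv (G i)) := by
    intro i
    have h := (contDiff_succ_iff_deriv (n := 1)).mp (by exact_mod_cast hGc i)
    exact h.2.2.differentiable one_ne_zero
  have hderg : deriv g = fun t => ∑ i, deriv (G i) t := by
    funext t
    exact deriv_fun_sum (fun i _ => (hGdiff i).differentiableAt)
  have hderg2 : ∀ r : ℝ, deriv (deriv g) r = ∑ i, deriv (deriv (G i)) r := by
    intro r
    rw [hderg]
    exact deriv_fun_sum (fun i _ => (hGdC i).differentiableAt)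
  have hgd' : ∀ r : ℝ, 0 < r → 0 ≤ deriv g r := by
    intro r hr
    rw [hderg]
    exact Finset.sum_nonneg fun i _ => hGd i r hr
  set r1 : ℝ := max (max r₀ R₀) 1 with hr1def
  have hr11 : (1:ℝ) ≤ r1 := le_max_right _ _
  have hr1R : R₀ ≤ r1 := le_trans (le_max_right _ _) (le_max_left _ _)
  have hr1r₀ : r₀ ≤ r1 := le_trans (le_max_left _ _) (le_max_left _ _)
  have hr10 : (0:ℝ) < r1 := lt_of_lt_of_le one_pos hr11
  have hode : ∀ r : ℝ, r1 ≤ r →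
      ε * q r ≤ deriv (deriv g) r + ((N:ℝ) - 1) * deriv g r / r := by
    intro r hr
    have hr0 : (0:ℝ) < r := lt_of_lt_of_le hr10 hr
    have hrr₀ : r₀ ≤ r := le_trans hr1r₀ hr
    have hsum : deriv (deriv g) r + ((N:ℝ) - 1) * deriv g r / r
        = ∑ i, (deriv (deriv (G i)) r + ((N:ℝ) - 1) * deriv (G i) r / r) := by
      rw [hderg2, hderg, Finset.sum_add_distrib]
      congr 1
      rw [Finset.mul_sum, Finset.sum_div]
    rw [hsum]
    have hterm : ∀ j, ε * ψ j r ≤ deriv (deriv (G j)) r + ((N:ℝ) - 1) * deriv (G j) r / r := by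
      intro j
      rw [← hlapG j r hr0, hulap j]
      have hfj : εf j ≤ f j (fun k => u k (r • e₁)) := by
        apply hC2 j _ _ (fun k => by by_cases h : k = i₀ <;> simp [h, hc.le])
        intro k
        by_cases h : k = i₀
        · rw [if_pos h, h, huG i₀ (r • e₁), hnorm_re₁ r hr0.le]
          exact hulow r hrr₀
        · simp only [if_neg h]
          exact hupos k _
      calc ε * ψ j r = ψ j r * ε := by ring
        _ ≤ p j (r • e₁) * f j (fun k => u k (r • e₁)) :=
            mul_le_mul (hψle j r hr0.le) (le_trans (hεle j) hfj) hεpos.le (hp_nonneg j _)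
    calc ε * q r = ∑ j, ε * ψ j r := by rw [hqdef]; exact Finset.mul_sum _ _ _
      _ ≤ _ := Finset.sum_le_sum fun j _ => hterm j
  have hqmono : MonotoneOn (fun r : ℝ => r ^ (2 * N - 2) * q r) (Ici R₀) := hmono
  have hInt1 : IntegrableOn (fun s : ℝ => s * q s) (Ioi r1) :=
    integrable_of_ode N hN g q hgc M hgM R₀ r1 ε hr1R hr11 hεpos hqnn hqmono hgd' hode
  have hInt0 : IntegrableOn (fun s : ℝ => s * q s) (Ioc 0 r1) := by
    have hj : ∀ j : Fin d, IntegrableOn (fun t : ℝ => t * ψ j t) (Ioc 0 r1) := fun j =>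
      psi_int_small (p j) (hpcont j) (hp_nonneg j) (ψ j) (hψ j) r1 hr10
    have hsum := MeasureTheory.integrable_finset_sum (μ := volume.restrict (Ioc 0 r1))
      (s := Finset.univ) (f := fun j (t : ℝ) => t * ψ j t) (fun j _ => hj j)
    have : (fun t : ℝ => ∑ j, t * ψ j t) = fun s : ℝ => s * q s := by
      funext t
      rw [hqdef, Finset.mul_sum]
    rwa [this] at hsum
  apply hdiv
  have hu01 : Ioc (0:ℝ) r1 ∪ Ioi r1 = Ioi 0 := Ioc_union_Ioi_eq_Ioi hr10.le
  have : IntegrableOn (fun s : ℝ => s * q s) (Ioi 0) := by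
    rw [← hu01]
    exact hInt0.union hInt1
  exact this
end

section
/- Assume that p_j : ℝ^N → [0,∞), j = 1,…,d, are spherically symmetric continuous functions (i.e. p_j(x) = p_j(|x|)), that f_1,…,f_d satisfy (C1)–(C3), and that r ↦ r^{2N-2} Σ_{j=1}^d p_j(r) is nondecreasing for all sufficiently large r. If ∫₀^∞ t^{1-N} ∫₀^t s^{N-1} p_j(s) ds dt = ∞ for every j = 1,…,d, then every nonnegative nontrivial entire radial solution (u_1,…,u_d) of the system Δu_i = p_i(x) f_i(u_1,…,u_d), i = 1,…,d, is large, i.e., u_i(x) → ∞ as |x| → ∞ for every i. -/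
open MeasureTheory Set Filter

variable {E : Type*} [NormedAddCommGroup E] [NormedSpace ℝ E]

theorem line_deriv_eq (f : E → ℝ) (hf : ContDiff ℝ 2 f) (x v : E) (t : ℝ) :
    HasDerivAt (fun s : ℝ => f (x + s • v)) (fderiv ℝ f (x + t • v) v) t := by
  have hL : HasDerivAt (fun s : ℝ => x + s • v) v t := by
    simpa using ((hasDerivAt_id t).smul_const v).const_add x
  exact (hf.differentiable (by norm_num) _).hasFDerivAt.comp_hasDerivAt t hL

theorem line_deriv2_eq (f : E → ℝ) (hf : ContDiff ℝ 2 f) (x v : E) :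
    HasDerivAt (fun s : ℝ => fderiv ℝ f (x + s • v) v)
      (fderiv ℝ (fderiv ℝ f) x v v) 0 := by
  have hL : HasDerivAt (fun s : ℝ => x + s • v) v 0 := by
    simpa using ((hasDerivAt_id (0:ℝ)).smul_const v).const_add x
  have hF : Differentiable ℝ (fderiv ℝ f) := by
    have : ContDiff ℝ 1 (fderiv ℝ f) := hf.fderiv_right (by norm_num)
    exact this.differentiable (by norm_num)
  have h1 : HasDerivAt (fun s : ℝ => fderiv ℝ f (x + s • v))
      (fderiv ℝ (fderiv ℝ f) x v) 0 := by
    have hx : x + (0:ℝ) • v = x := by simp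
    have := ((hF (x + (0:ℝ) • v)).hasFDerivAt).comp_hasDerivAt 0 hL
    rw [hx] at this
    exact this
  have := (ContinuousLinearMap.apply ℝ ℝ v).hasFDerivAt.comp_hasDerivAt 0 h1
  exact this

theorem second_dir_deriv (f : E → ℝ) (hf : ContDiff ℝ 2 f) (x v : E) :
    fderiv ℝ (fderiv ℝ f) x v v
      = deriv (deriv (fun s : ℝ => f (x + s • v))) 0 := by
  have hd : deriv (fun s : ℝ => f (x + s • v)) = fun s => fderiv ℝ f (x + s • v) v := by
    funext t; exact (line_deriv_eq f hf x v t).deriv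
  rw [hd]
  exact (line_deriv2_eq f hf x v).deriv.symm

theorem sqrt_comp_deriv2 (φ : ℝ → ℝ) (hφd : Differentiable ℝ φ)
    (hφ2 : Differentiable ℝ (deriv φ)) (r : ℝ) (hr : 0 < r) :
    deriv (deriv (fun t : ℝ => φ (Real.sqrt (r^2 + t^2)))) 0 = deriv φ r / r := by
  set h : ℝ → ℝ := fun t => Real.sqrt (r^2 + t^2) with hh_def
  have hpos : ∀ t : ℝ, 0 < r^2 + t^2 := fun t => by positivity
  have hhpos : ∀ t : ℝ, 0 < h t := fun t => Real.sqrt_pos.2 (hpos t)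
  have hh : ∀ t : ℝ, HasDerivAt h (t / h t) t := by
    intro t
    have hq : HasDerivAt (fun t : ℝ => r^2 + t^2) (2*t) t := by
      simpa using ((hasDerivAt_pow 2 t).const_add (r^2))
    have := (Real.hasDerivAt_sqrt (hpos t).ne').comp t hq
    convert this using 1 <;> try rfl
    have hne := (hhpos t).ne'
    simp only [hh_def] at hne ⊢
    field_simp
  have h0 : h 0 = r := by simp [hh_def, Real.sqrt_sq hr.le]
  have hg : deriv (fun t : ℝ => φ (h t)) = fun t => deriv φ (h t) * (t / h t) := by
    funext t
    exact (((hφd (h t)).hasDerivAt).comp t (hh t)).deriv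
  rw [hg]
  have hA : HasDerivAt (fun t : ℝ => deriv φ (h t)) (deriv (deriv φ) (h 0) * (0 / h 0)) 0 :=
    ((hφ2 (h 0)).hasDerivAt).comp 0 (hh 0)
  have hB : HasDerivAt (fun t : ℝ => t / h t) ((1 * h 0 - 0 * (0 / h 0)) / (h 0)^2) 0 :=
    (hasDerivAt_id 0).div (hh 0) (hhpos 0).ne'
  have := (hA.mul hB).deriv
  rw [show (fun t => deriv φ (h t) * (t / h t)) = ((fun t => deriv φ (h t)) * fun t => t / h t)
    from rfl, this, h0]
  field_simp
  ring

theorem lap_radial {N : ℕ} (hN : 3 ≤ N) (i0 : Fin N) (u : EuclideanSpace ℝ (Fin N) → ℝ)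
    (hu : ContDiff ℝ 2 u)
    (hrad : ∀ x y : EuclideanSpace ℝ (Fin N), ‖x‖ = ‖y‖ → u x = u y)
    (r : ℝ) (hr : 0 < r) :
    lap u (r • EuclideanSpace.single i0 1)
      = deriv (deriv (fun s : ℝ => u (s • EuclideanSpace.single i0 1))) r
        + ((N : ℝ) - 1) *
          (deriv (fun s : ℝ => u (s • EuclideanSpace.single i0 1)) r / r) := by
  set e : Fin N → EuclideanSpace ℝ (Fin N) := fun i => EuclideanSpace.single i 1 with he
  set φ : ℝ → ℝ := fun s => u (s • e i0) with hφ_def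
  set x : EuclideanSpace ℝ (Fin N) := r • e i0 with hx_def
  have hnorme : ∀ i, ‖e i‖ = 1 := fun i => by simp [he]
  have hφu : ∀ y : EuclideanSpace ℝ (Fin N), u y = φ ‖y‖ := by
    intro y
    refine hrad y (‖y‖ • e i0) ?_
    rw [norm_smul, hnorme]
    simp
  -- φ is C²
  have hφC : ContDiff ℝ 2 φ := hu.comp ((contDiff_id.smul contDiff_const))
  have hφC' : ContDiff ℝ ((1:ℕ)+1) φ := by exact_mod_cast hφC
  rw [contDiff_succ_iff_deriv] at hφC'
  have hφd : Differentiable ℝ φ := hφC'.1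
  have hφ2 : Differentiable ℝ (deriv φ) := hφC'.2.2.differentiable (by norm_num)
  -- each diagonal term
  have hterm : ∀ i : Fin N,
      iteratedFDeriv ℝ 2 u x ![e i, e i] = deriv (deriv (fun t : ℝ => u (x + t • e i))) 0 := by
    intro i
    rw [iteratedFDeriv_two_apply]
    simpa using second_dir_deriv u hu x (e i)
  have hmain : ∀ i : Fin N, i ≠ i0 →
      deriv (deriv (fun t : ℝ => u (x + t • e i))) 0 = deriv φ r / r := by
    intro i hi
    have hnorm : ∀ t : ℝ, ‖x + t • e i‖ = Real.sqrt (r^2 + t^2) := by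
      intro t
      have horth : inner ℝ (x) (t • e i) = (0:ℝ) := by
        rw [hx_def, real_inner_smul_left, real_inner_smul_right, he]
        have : inner ℝ (EuclideanSpace.single i0 (1:ℝ)) (EuclideanSpace.single i (1:ℝ)) = (0:ℝ) := by
          rw [EuclideanSpace.inner_single_left]
          simp [EuclideanSpace.single_apply, (Ne.symm hi)]
        rw [this]; ring
      have hsq : ‖x + t • e i‖^2 = r^2 + t^2 := by
        rw [norm_add_sq_real, horth]
        rw [norm_smul, norm_smul, hnorme, hnorme]
        simp [mul_pow, sq_abs]
      rw [← hsq, Real.sqrt_sq (norm_nonneg _)]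
    have hfun : (fun t : ℝ => u (x + t • e i)) = fun t : ℝ => φ (Real.sqrt (r^2 + t^2)) := by
      funext t; rw [hφu (x + t • e i), hnorm t]
    rw [hfun]
    exact sqrt_comp_deriv2 φ hφd hφ2 r hr
  have hrad0 : deriv (deriv (fun t : ℝ => u (x + t • e i0))) 0 = deriv (deriv φ) r := by
    have hfun : (fun t : ℝ => u (x + t • e i0)) = fun t : ℝ => φ (r + t) := by
      funext t; rw [hφ_def]; congr 1; rw [hx_def, add_smul]
    rw [hfun]
    have h1 : deriv (fun t : ℝ => φ (r + t)) = fun t => deriv φ (r + t) := by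
      funext t; exact deriv_comp_const_add φ r t
    rw [h1]
    have := deriv_comp_const_add (deriv φ) r 0
    simpa using this
  -- assemble
  rw [lap]
  have hthis : ∀ i : Fin N, (iteratedFDeriv ℝ 2 u x) ![EuclideanSpace.single i 1, EuclideanSpace.single i 1]
      = if i = i0 then deriv (deriv φ) r else deriv φ r / r := by
    intro i
    by_cases h : i = i0
    · rw [if_pos h, h]
      exact (hterm i0).trans hrad0
    · rw [if_neg h]
      exact (hterm i).trans (hmain i h)
  rw [Finset.sum_congr rfl (fun i _ => hthis i)]
  rw [← Finset.add_sum_erase _ _ (Finset.mem_univ i0), if_pos rfl]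
  congr 1
  rw [Finset.sum_congr rfl (fun i hi => if_neg (Finset.ne_of_mem_erase hi))]
  rw [Finset.sum_const, Finset.card_erase_of_mem (Finset.mem_univ i0), Finset.card_univ,
    Fintype.card_fin, nsmul_eq_mul]
  congr 1
  rw [Nat.cast_sub (by omega), Nat.cast_one]

theorem mono_of_deriv {a : ℝ} {g g' : ℝ → ℝ} (hc : ContinuousOn g (Ici a))
    (hd : ∀ t ∈ Ioi a, HasDerivAt g (g' t) t) (h0 : ∀ t ∈ Ioi a, 0 ≤ g' t) :
    MonotoneOn g (Ici a) := by
  apply monotoneOn_of_deriv_nonneg (convex_Ici a) hc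
  · intro t ht; rw [interior_Ici] at ht
    exact (hd t ht).differentiableAt.differentiableWithinAt
  · intro t ht; rw [interior_Ici] at ht
    rw [(hd t ht).deriv]; exact h0 t ht

theorem primitive_hasDerivAt {g : ℝ → ℝ} (hg : ContinuousOn g (Ici (0:ℝ)))
    {a t : ℝ} (ha : 0 ≤ a) (ht : 0 < t) :
    HasDerivAt (fun r => ∫ s in a..r, g s) (g t) t := by
  refine intervalIntegral.integral_hasDerivAt_right ?_ ?_ ?_
  · refine (hg.mono ?_).intervalIntegrable
    intro y hy; rw [Set.mem_uIcc] at hy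
    rcases hy with h | h
    · exact le_trans ha h.1
    · exact le_trans ht.le h.1
  · exact ((hg.mono Ioi_subset_Ici_self).stronglyMeasurableAtFilter isOpen_Ioi) t ht
  · exact hg.continuousAt (Ici_mem_nhds ht)

theorem primitive_hasDerivAt' {g : ℝ → ℝ} {b a t : ℝ} (hg : ContinuousOn g (Ioi b))
    (ha : b < a) (ht : b < t) :
    HasDerivAt (fun r => ∫ s in a..r, g s) (g t) t := by
  refine intervalIntegral.integral_hasDerivAt_right ?_ ?_ ?_
  · refine (hg.mono ?_).intervalIntegrable
    intro y hy; rw [Set.mem_uIcc] at hy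
    rcases hy with h | h
    · exact lt_of_lt_of_le ha h.1
    · exact lt_of_lt_of_le ht h.1
  · exact (hg.stronglyMeasurableAtFilter isOpen_Ioi) t ht
  · exact hg.continuousAt (Ioi_mem_nhds ht)

theorem stmt3
    (N d : ℕ) (hN : 3 ≤ N) (hd : 1 ≤ d)
    -- spherically symmetric continuous nonnegative pⱼ, given by their radial profiles
    (p : Fin d → ℝ → ℝ)
    (hp_cont : ∀ j, ContinuousOn (p j) (Ici 0))
    (hp_nonneg : ∀ j, ∀ t ≥ (0:ℝ), 0 ≤ p j t)
    (f : Fin d → (Fin d → ℝ) → ℝ)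
    -- (C1)
    (hf_nonneg : ∀ j v, (∀ i, 0 ≤ v i) → 0 ≤ f j v)
    (hC1 : ∀ j, ContDiffOn ℝ 1 (f j) {v : Fin d → ℝ | ∀ i, 0 ≤ v i})
    (hf0 : ∀ j, f j (fun _ => 0) = 0)
    (hfpos : ∀ j v, (∀ i, 0 ≤ v i) → (∃ i, 0 < v i) → 0 < f j v)
    -- (C2)
    (hC2 : ∀ j v w, (∀ i, 0 ≤ v i) → (∀ i, v i ≤ w i) → f j v ≤ f j w)
    -- (C3)
    (hC3 : ¬ IntegrableOn
      (fun s : ℝ => (∫ t in (0:ℝ)..s, ∑ i, f i (fun _ => t)) ^ (-(1/2) : ℝ)) (Ioi 1))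
    -- r ↦ r^{2N-2} Σⱼ pⱼ(r) is nondecreasing for large r
    (R₀ : ℝ)
    (hmono : MonotoneOn (fun r : ℝ => r ^ (2 * N - 2) * ∑ j, p j r) (Ici R₀))
    -- ∫₀^∞ t^{1-N} ∫₀^t s^{N-1} pⱼ(s) ds dt = ∞ for every j
    (hdiv : ∀ j, ¬ IntegrableOn
      (fun t : ℝ => (∫ s in (0:ℝ)..t, s ^ (N - 1) * p j s) / t ^ (N - 1)) (Ioi 0)) :
    -- conclusion: every nonnegative nontrivial entire radial solution is large
    ∀ u : Fin d → EuclideanSpace ℝ (Fin N) → ℝ,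
      (∀ i, ContDiff ℝ 2 (u i)) →
      (∀ i x, 0 ≤ u i x) →
      (∃ i x, u i x ≠ 0) →
      (∀ i x y, ‖x‖ = ‖y‖ → u i x = u i y) →
      (∀ i x, lap (u i) x = p i ‖x‖ * f i (fun j => u j x)) →
      ∀ i, Tendsto (u i) (Filter.comap norm Filter.atTop) Filter.atTop := by
  intro u huC hupos huntriv hurad hulap i
  have hN0 : 0 < N := by omega
  set n : ℕ := N - 1 with hn
  have hn2 : 2 ≤ n := by omega
  have hncast : (n : ℝ) = (N : ℝ) - 1 := by
    rw [hn, Nat.cast_sub (by omega : 1 ≤ N), Nat.cast_one]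
  set i0 : Fin N := ⟨0, hN0⟩ with hi0
  set e0 : EuclideanSpace ℝ (Fin N) := EuclideanSpace.single i0 1 with he0
  set φ : Fin d → ℝ → ℝ := fun j r => u j (r • e0) with hφdef
  have hnorm_e0 : ‖e0‖ = 1 := by rw [he0]; simp
  have hnorm_smul : ∀ r : ℝ, 0 ≤ r → ‖r • e0‖ = r := by
    intro r hr; rw [norm_smul, hnorm_e0, mul_one, Real.norm_eq_abs, abs_of_nonneg hr]
  have hφnn : ∀ j r, 0 ≤ φ j r := fun j r => hupos j _
  have hφC : ∀ j, ContDiff ℝ 2 (φ j) := fun j => (huC j).comp (contDiff_id.smul contDiff_const)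
  have hφsplit : ∀ j, Differentiable ℝ (φ j) ∧ Differentiable ℝ (deriv (φ j))
      ∧ Continuous (deriv (φ j)) := by
    intro j
    have h2 : ContDiff ℝ ((1:ℕ)+1) (φ j) := by exact_mod_cast hφC j
    rw [contDiff_succ_iff_deriv] at h2
    exact ⟨h2.1, h2.2.2.differentiable (by norm_num), h2.2.2.continuous⟩
  have hφd : ∀ j, Differentiable ℝ (φ j) := fun j => (hφsplit j).1
  have hφ2 : ∀ j, Differentiable ℝ (deriv (φ j)) := fun j => (hφsplit j).2.1
  have hφ'C : ∀ j, Continuous (deriv (φ j)) := fun j => (hφsplit j).2.2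
  -- the radial ODE
  have hODE : ∀ j, ∀ r : ℝ, 0 < r →
      deriv (deriv (φ j)) r + ((N:ℝ) - 1) * (deriv (φ j) r / r)
        = p j r * f j (fun k => φ k r) := by
    intro j r hr
    have h1 := lap_radial hN i0 (u j) (huC j) (hurad j) r hr
    have h2 := hulap j (r • e0)
    rw [hnorm_smul r hr.le] at h2
    rw [← he0] at h1
    rw [h1] at h2
    exact h2
  -- continuity of the composed nonlinearity
  have hcont_fφ : ∀ j, Continuous (fun r => f j (fun k => φ k r)) := by
    intro j
    have hc : Continuous (fun r : ℝ => (fun k => φ k r)) :=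
      continuous_pi (fun k => (hφC k).continuous)
    have h : ContinuousOn (fun r => f j (fun k => φ k r)) univ :=
      (hC1 j).continuousOn.comp (hc.continuousOn (s := univ))
        (fun r _ => (fun k => hφnn k r : ∀ k, 0 ≤ φ k r))
    rw [continuousOn_univ] at h
    exact h
  have hfφnn : ∀ j r, 0 ≤ f j (fun k => φ k r) := fun j r => hf_nonneg j _ (fun k => hφnn k r)
  -- the weighted derivative w
  set w : Fin d → ℝ → ℝ := fun j r => r ^ n * deriv (φ j) r with hwdef
  have hw_deriv : ∀ j, ∀ r : ℝ, 0 < r →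
      HasDerivAt (w j) (r ^ n * (p j r * f j (fun k => φ k r))) r := by
    intro j r hr
    have h3 := (hasDerivAt_pow n r).mul ((hφ2 j r).hasDerivAt)
    have hval : (n:ℝ) * r ^ (n-1) * deriv (φ j) r + r ^ n * deriv (deriv (φ j)) r
        = r ^ n * (p j r * f j (fun k => φ k r)) := by
      have hode := hODE j r hr
      have hrn : r ^ n = r ^ (n-1) * r := by
        rw [← pow_succ]; congr 1; omega
      have h4 : deriv (deriv (φ j)) r
          = p j r * f j (fun k => φ k r) - ((N:ℝ)-1) * (deriv (φ j) r / r) := by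
        linarith
      rw [h4, hrn, hncast]
      field_simp
      ring
    rw [← hval]
    exact h3
  have hw_cont : ∀ j, Continuous (w j) := fun j => (continuous_pow n).mul (hφ'C j)
  have hw0 : ∀ j, w j 0 = 0 := by
    intro j; simp only [hwdef]; rw [zero_pow (by omega : n ≠ 0), zero_mul]
  have hw_mono : ∀ j, MonotoneOn (w j) (Ici 0) := by
    intro j
    refine mono_of_deriv (hw_cont j).continuousOn (fun t ht => hw_deriv j t ht) ?_
    intro t ht
    exact mul_nonneg (pow_nonneg (le_of_lt ht) n)
      (mul_nonneg (hp_nonneg j t (le_of_lt ht)) (hfφnn j t))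
  have hw_nn : ∀ j, ∀ r : ℝ, 0 ≤ r → 0 ≤ w j r := by
    intro j r hr
    have := hw_mono j (self_mem_Ici) hr hr
    rwa [hw0 j] at this
  have hφ'_nn : ∀ j, ∀ r : ℝ, 0 < r → 0 ≤ deriv (φ j) r := by
    intro j r hr
    have h1 := hw_nn j r hr.le
    simp only [hwdef] at h1
    have h2 : 0 < r ^ n := pow_pos hr n
    nlinarith
  have hφmono : ∀ j, MonotoneOn (φ j) (Ici 0) := by
    intro j
    exact mono_of_deriv (hφC j).continuous.continuousOn
      (fun t _ => ((hφd j) t).hasDerivAt) (fun t ht => hφ'_nn j t ht)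
  -- nontriviality gives a positive value
  obtain ⟨k, x₀, hx₀⟩ := huntriv
  have hukφ : ∀ j (x : EuclideanSpace ℝ (Fin N)), u j x = φ j ‖x‖ := by
    intro j x
    exact hurad j x (‖x‖ • e0) (by rw [hnorm_smul ‖x‖ (norm_nonneg x)])
  have hx₀' : 0 < φ k ‖x₀‖ := by
    rw [← hukφ]; exact lt_of_le_of_ne (hupos k x₀) (Ne.symm hx₀)
  set r₀ : ℝ := ‖x₀‖ + 1 with hr₀def
  have hr₀ : 0 < r₀ := by positivity
  have hφk : 0 < φ k r₀ :=
    lt_of_lt_of_le hx₀' ((hφmono k) (mem_Ici.2 (norm_nonneg x₀)) (mem_Ici.2 (by positivity)) (by rw [hr₀def]; linarith))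
  set c : Fin d → ℝ := fun i' => f i' (fun j => if j = k then φ k r₀ else 0) with hcdef
  have hvnn : ∀ j, (0:ℝ) ≤ (if j = k then φ k r₀ else 0) := by
    intro j; by_cases h : j = k <;> simp [h, hφk.le]
  have hc : ∀ i', 0 < c i' := fun i' => hfpos i' _ hvnn ⟨k, by simpa using hφk⟩
  have hfge : ∀ i' s, r₀ ≤ s → c i' ≤ f i' (fun j => φ j s) := by
    intro i' s hs
    refine hC2 i' _ _ hvnn ?_
    intro j
    by_cases h : j = k
    · simp only [h, if_pos rfl]
      exact (hφmono k) (le_of_lt hr₀) (le_trans hr₀.le hs) hs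
    · simp [h, hφnn j s]
  -- the source terms q
  set q : Fin d → ℝ → ℝ := fun i' s => s ^ n * p i' s with hqdef
  have hq_cont : ∀ i', ContinuousOn (q i') (Ici 0) :=
    fun i' => (continuous_pow n).continuousOn.mul (hp_cont i')
  have hq_nn : ∀ i' s, 0 ≤ s → 0 ≤ q i' s :=
    fun i' s hs => mul_nonneg (pow_nonneg hs n) (hp_nonneg i' s hs)
  -- step 1: lower bound for w
  have hwP : ∀ r, r₀ ≤ r → c i * (∫ s in r₀..r, q i s) ≤ w i r := by
    intro r hr
    set W : ℝ → ℝ := fun r => w i r - c i * ∫ s in r₀..r, q i s with hWdef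
    have hWmono : MonotoneOn W (Ici r₀) := by
      refine mono_of_deriv
        (g' := fun t => t ^ n * (p i t * f i (fun k => φ k t)) - c i * q i t) ?_ ?_ ?_
      · refine (hw_cont i).continuousOn.sub ?_
        intro t ht
        exact (ContinuousAt.continuousWithinAt
          ((primitive_hasDerivAt (hq_cont i) hr₀.le (lt_of_lt_of_le hr₀ ht)).continuousAt)).const_smul (c i) |>.congr (fun _ _ => rfl) rfl
      · intro t ht
        have h1 := hw_deriv i t (lt_trans hr₀ ht)
        have h2 := (primitive_hasDerivAt (hq_cont i) hr₀.le (lt_trans hr₀ ht)).const_mul (c i)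
        exact h1.sub h2
      · intro t ht
        have hct := hfge i t (le_of_lt ht)
        have hpt := hp_nonneg i t (le_of_lt (lt_trans hr₀ ht))
        have htn : (0:ℝ) ≤ t ^ n := pow_nonneg (le_of_lt (lt_trans hr₀ ht)) n
        have hqt : q i t = t ^ n * p i t := rfl
        have hkey := mul_le_mul_of_nonneg_left hct (mul_nonneg htn hpt)
        show 0 ≤ t ^ n * (p i t * f i fun k => φ k t) - c i * q i t
        rw [hqt]
        nlinarith [hkey]
    have := hWmono (self_mem_Ici) hr hr
    simp only [hWdef, intervalIntegral.integral_same, mul_zero, sub_zero] at this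
    have hwr₀ := hw_nn i r₀ hr₀.le
    linarith
  have hφ'ge : ∀ t, r₀ ≤ t → c i * (∫ s in r₀..t, q i s) / t ^ n ≤ deriv (φ i) t := by
    intro t ht
    have h1 := hwP t ht
    have h2 : (0:ℝ) < t ^ n := pow_pos (lt_of_lt_of_le hr₀ ht) n
    rw [div_le_iff₀ h2]
    have h3 : w i t = t ^ n * deriv (φ i) t := rfl
    nlinarith [h1]
  set Q : ℝ → ℝ := fun t => (∫ s in r₀..t, q i s) / t ^ n with hQdef
  have hP_cont : ContinuousOn (fun t => ∫ s in r₀..t, q i s) (Ioi 0) := by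
    intro t ht
    exact ((primitive_hasDerivAt (hq_cont i) hr₀.le ht).continuousAt).continuousWithinAt
  have hQcont : ContinuousOn Q (Ioi 0) :=
    hP_cont.div (continuous_pow n).continuousOn (fun t ht => (pow_pos ht n).ne')
  have hQnn : ∀ t, r₀ ≤ t → 0 ≤ Q t := by
    intro t ht
    exact div_nonneg
      (intervalIntegral.integral_nonneg ht (fun s hs => hq_nn i s (le_trans hr₀.le hs.1)))
      (pow_nonneg (le_trans hr₀.le ht) n)
  -- step 2 : lower bound for φ
  have hφlow : ∀ r, r₀ ≤ r → φ i r₀ + c i * ∫ t in r₀..r, Q t ≤ φ i r := by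
    intro r hr
    set V : ℝ → ℝ := fun r => φ i r - c i * ∫ t in r₀..r, Q t with hVdef
    have hVmono : MonotoneOn V (Ici r₀) := by
      refine mono_of_deriv (g' := fun t => deriv (φ i) t - c i * Q t) ?_ ?_ ?_
      · refine ((hφC i).continuous.continuousOn).sub ?_
        intro t ht
        exact (((primitive_hasDerivAt' hQcont hr₀ (lt_of_lt_of_le hr₀ ht)).const_mul
          (c i)).continuousAt).continuousWithinAt
      · intro t ht
        exact (((hφd i) t).hasDerivAt).sub
          ((primitive_hasDerivAt' hQcont hr₀ (lt_trans hr₀ ht)).const_mul (c i))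
      · intro t ht
        have h1 := hφ'ge t (le_of_lt ht)
        have h2 : c i * Q t = c i * (∫ s in r₀..t, q i s) / t ^ n := by
          rw [hQdef]; ring
        show 0 ≤ deriv (φ i) t - c i * Q t
        linarith
    have hV := hVmono self_mem_Ici (mem_Ici.2 hr) hr
    simp only [hVdef, intervalIntegral.integral_same, mul_zero, sub_zero] at hV
    linarith
  -- splitting of the primitive
  have hdivi := hdiv i
  set C₀ : ℝ := ∫ s in (0:ℝ)..r₀, q i s with hC₀def
  have hC₀nn : 0 ≤ C₀ :=
    intervalIntegral.integral_nonneg hr₀.le (fun s hs => hq_nn i s hs.1)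
  have hqInt : ∀ a b : ℝ, 0 ≤ a → 0 ≤ b → IntervalIntegrable (q i) volume a b := by
    intro a b ha hb
    refine ((hq_cont i).mono ?_).intervalIntegrable
    intro y hy; rw [Set.mem_uIcc] at hy
    rcases hy with h | h
    · exact le_trans ha h.1
    · exact le_trans hb h.1
  have hsplit : ∀ t : ℝ, 0 ≤ t → (∫ s in (0:ℝ)..t, q i s) = C₀ + ∫ s in r₀..t, q i s := by
    intro t ht
    rw [hC₀def]
    exact (intervalIntegral.integral_add_adjacent_intervals
      (hqInt 0 r₀ le_rfl hr₀.le) (hqInt r₀ t hr₀.le ht)).symm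
  set H : ℝ → ℝ := fun t => (∫ s in (0:ℝ)..t, q i s) / t ^ n with hHdef
  have hHnn : ∀ t, 0 < t → 0 ≤ H t := by
    intro t ht
    exact div_nonneg
      (intervalIntegral.integral_nonneg ht.le (fun s hs => hq_nn i s hs.1))
      (pow_nonneg ht.le n)
  have hP₀cont : ContinuousOn (fun t => ∫ s in (0:ℝ)..t, q i s) (Ioi 0) := by
    intro t ht
    exact ((primitive_hasDerivAt (hq_cont i) le_rfl ht).continuousAt).continuousWithinAt
  have hHcont : ContinuousOn H (Ioi 0) :=
    hP₀cont.div (continuous_pow n).continuousOn (fun t ht => (pow_pos ht n).ne')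
  -- boundedness of H near 0
  obtain ⟨M₁, hM₁⟩ := (isCompact_Icc (a := (0:ℝ)) (b := r₀)).exists_bound_of_continuousOn
    ((hp_cont i).mono Icc_subset_Ici_self)
  have hM₁nn : 0 ≤ M₁ := le_trans (norm_nonneg _) (hM₁ 0 (left_mem_Icc.2 hr₀.le))
  have hHbound : ∀ t ∈ Ioc (0:ℝ) r₀, ‖H t‖ ≤ M₁ * r₀ := by
    intro t ht
    have ht0 : 0 < t := ht.1
    have h2 : (0:ℝ) < t ^ n := pow_pos ht0 n
    have h1 : ‖∫ s in (0:ℝ)..t, q i s‖ ≤ t ^ n * M₁ * |t - 0| := by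
      apply intervalIntegral.norm_integral_le_of_norm_le_const
      intro s hs
      rw [Set.uIoc_of_le ht0.le] at hs
      have hs0 : 0 < s := hs.1
      have hqs : q i s = s ^ n * p i s := rfl
      rw [hqs, Real.norm_eq_abs, abs_mul, abs_of_nonneg (pow_nonneg hs0.le n)]
      have hM : |p i s| ≤ M₁ := by
        simpa [Real.norm_eq_abs] using hM₁ s (mem_Icc.2 ⟨hs0.le, le_trans hs.2 ht.2⟩)
      have hpow : s ^ n ≤ t ^ n := pow_le_pow_left₀ hs0.le hs.2 n
      nlinarith [abs_nonneg (p i s), pow_nonneg hs0.le n]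
    have hHt : ‖H t‖ = ‖∫ s in (0:ℝ)..t, q i s‖ / t ^ n := by
      have : H t = (∫ s in (0:ℝ)..t, q i s) / t ^ n := rfl
      rw [this, norm_div, Real.norm_eq_abs (t ^ n), abs_of_pos h2]
    rw [hHt, div_le_iff₀ h2]
    have habs : |t - 0| = t := by rw [sub_zero, abs_of_pos ht0]
    rw [habs] at h1
    calc ‖∫ s in (0:ℝ)..t, q i s‖ ≤ t ^ n * M₁ * t := h1
      _ ≤ t ^ n * M₁ * r₀ := mul_le_mul_of_nonneg_left ht.2 (mul_nonneg h2.le hM₁nn)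
      _ = M₁ * r₀ * t ^ n := by ring
  have hH_int0 : IntegrableOn H (Ioc 0 r₀) := by
    have hmeas : AEStronglyMeasurable H (volume.restrict (Ioc 0 r₀)) :=
      (hHcont.mono Ioc_subset_Ioi_self).aestronglyMeasurable measurableSet_Ioc
    exact ⟨hmeas, HasFiniteIntegral.restrict_of_bounded _ measure_Ioc_lt_top
      ((ae_restrict_iff' measurableSet_Ioc).2
        (Filter.Eventually.of_forall (fun t ht => hHbound t ht)))⟩
  have hHIntOn : ∀ a b : ℝ, 0 < a → 0 < b → IntervalIntegrable H volume a b := by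
    intro a b ha hb
    refine (hHcont.mono ?_).intervalIntegrable
    intro y hy; rw [Set.mem_uIcc] at hy
    rcases hy with h | h
    · exact lt_of_lt_of_le ha h.1
    · exact lt_of_lt_of_le hb h.1
  set I : ℝ → ℝ := fun r => ∫ t in r₀..r, H t with hIdef
  have hItend : Tendsto I atTop atTop := by
    rw [tendsto_atTop]
    intro M
    have hex : ∃ R, r₀ ≤ R ∧ M ≤ I R := by
      by_contra hcon
      push_neg at hcon
      apply hdivi
      rw [← Ioc_union_Ioi_eq_Ioi hr₀.le]
      refine hH_int0.union ?_
      refine integrableOn_Ioi_of_intervalIntegral_norm_bounded M r₀ (fun R => ?_)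
        (tendsto_id (α := ℝ)) ?_
      · by_cases hR : r₀ < R
        · exact ((hHIntOn r₀ R hr₀ (lt_trans hr₀ hR)).1)
        · rw [Ioc_eq_empty (by simpa using hR)]
          exact integrableOn_empty
      · filter_upwards [eventually_ge_atTop r₀] with R hR
        show (∫ t in r₀..(id R), ‖H t‖) ≤ M
        simp only [id_eq]
        have hnorm : (∫ t in r₀..R, ‖H t‖) = I R := by
          rw [hIdef]
          apply intervalIntegral.integral_congr
          intro t ht
          rw [Set.uIcc_of_le hR] at ht
          exact Real.norm_of_nonneg (hHnn t (lt_of_lt_of_le hr₀ ht.1))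
        rw [hnorm]
        exact le_of_lt (hcon R hR)
    obtain ⟨R, hRr₀, hMR⟩ := hex
    filter_upwards [eventually_ge_atTop R] with r hr
    have hR0 : 0 < R := lt_of_lt_of_le hr₀ hRr₀
    have h1 : I r = I R + ∫ t in R..r, H t := by
      rw [hIdef]
      exact (intervalIntegral.integral_add_adjacent_intervals
        (hHIntOn r₀ R hr₀ hR0) (hHIntOn R r hR0 (lt_of_lt_of_le hR0 hr))).symm
    have h2 : 0 ≤ ∫ t in R..r, H t :=
      intervalIntegral.integral_nonneg hr
        (fun t ht => hHnn t (lt_of_lt_of_le hR0 ht.1))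
    linarith
  -- bound for the inverse-power integral
  set K : ℝ := r₀ ^ ((1:ℤ) - n) / ((n:ℝ) - 1) with hKdef
  have hJle : ∀ r, r₀ ≤ r → (∫ t in r₀..r, ((t:ℝ) ^ n)⁻¹) ≤ K := by
    intro r hr
    have hr0 : 0 < r := lt_of_lt_of_le hr₀ hr
    have hcongr : (∫ t in r₀..r, ((t:ℝ) ^ n)⁻¹) = ∫ t in r₀..r, (t:ℝ) ^ (-(n:ℤ)) := by
      apply intervalIntegral.integral_congr
      intro t _
      show ((t:ℝ) ^ n)⁻¹ = (t:ℝ) ^ (-(n:ℤ))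
      rw [zpow_neg, zpow_natCast]
    rw [hcongr]
    rw [integral_zpow (Or.inr ⟨by omega, by
      rw [Set.uIcc_of_le hr]
      intro hmem
      exact absurd hmem.1 (not_le.2 hr₀)⟩)]
    have hn1 : (-(n:ℤ) + 1 : ℝ) = 1 - (n:ℝ) := by push_cast; ring
    have hrpos : (0:ℝ) < r ^ (-(n:ℤ) + 1) := zpow_pos hr0 _
    have hr₀pos : (0:ℝ) < r₀ ^ (-(n:ℤ) + 1) := zpow_pos hr₀ _
    have hneg : ((-(n:ℤ) + 1 : ℤ) : ℝ) < 0 := by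
      push_cast
      have : (2:ℝ) ≤ (n:ℝ) := by exact_mod_cast hn2
      linarith
    rw [hKdef]
    have hKeq : ((1:ℤ) - (n:ℤ)) = (-(n:ℤ) + 1) := by ring
    rw [hKeq]
    have hpos' : (0:ℝ) < (n:ℝ) - 1 := by
      have : (2:ℝ) ≤ (n:ℝ) := by exact_mod_cast hn2
      linarith
    push_cast
    have hd1 : (-((n:ℝ)) + 1) = -((n:ℝ) - 1) := by ring
    rw [hd1, div_neg, ← neg_div, neg_sub]
    gcongr
    linarith [hrpos]
  -- expressing ∫ Q in terms of I
  have hQeq : ∀ r, r₀ ≤ r →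
      (∫ t in r₀..r, Q t) = I r - C₀ * ∫ t in r₀..r, ((t:ℝ) ^ n)⁻¹ := by
    intro r hr
    have hr0 : 0 < r := lt_of_lt_of_le hr₀ hr
    have hinv_cont : ContinuousOn (fun t : ℝ => ((t:ℝ) ^ n)⁻¹) (uIcc r₀ r) := by
      apply ContinuousOn.inv₀ (continuous_pow n).continuousOn
      intro t ht
      rw [Set.uIcc_of_le hr] at ht
      exact (pow_pos (lt_of_lt_of_le hr₀ ht.1) n).ne'
    have hint1 : IntervalIntegrable H volume r₀ r := hHIntOn r₀ r hr₀ hr0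
    have hint2 : IntervalIntegrable (fun t : ℝ => C₀ * ((t:ℝ) ^ n)⁻¹) volume r₀ r :=
      (continuousOn_const.mul hinv_cont).intervalIntegrable
    have heq : EqOn Q (fun t => H t - C₀ * ((t:ℝ) ^ n)⁻¹) (uIcc r₀ r) := by
      intro t ht
      rw [Set.uIcc_of_le hr] at ht
      have ht0 : 0 < t := lt_of_lt_of_le hr₀ ht.1
      have htn : ((t:ℝ) ^ n) ≠ 0 := (pow_pos ht0 n).ne'
      have hsp := hsplit t ht0.le
      show Q t = H t - C₀ * ((t:ℝ) ^ n)⁻¹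
      have hQt : Q t = (∫ s in r₀..t, q i s) / t ^ n := rfl
      have hHt : H t = (∫ s in (0:ℝ)..t, q i s) / t ^ n := rfl
      rw [hQt, hHt, hsp]
      field_simp
      ring
    rw [intervalIntegral.integral_congr heq,
      intervalIntegral.integral_sub hint1 hint2, intervalIntegral.integral_const_mul]
  have hQge : ∀ r, r₀ ≤ r → I r - C₀ * K ≤ ∫ t in r₀..r, Q t := by
    intro r hr
    rw [hQeq r hr]
    have := mul_le_mul_of_nonneg_left (hJle r hr) hC₀nn
    linarith
  have hQtend : Tendsto (fun r => ∫ t in r₀..r, Q t) atTop atTop := by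
    have hbase : Tendsto (fun r => I r - C₀ * K) atTop atTop := by
      have := tendsto_atTop_add_const_right atTop (-(C₀ * K)) hItend
      simpa [sub_eq_add_neg] using this
    apply tendsto_atTop_mono' atTop ?_ hbase
    filter_upwards [eventually_ge_atTop r₀] with r hr
    exact hQge r hr
  have hφtend : Tendsto (φ i) atTop atTop := by
    have hbase : Tendsto (fun r => φ i r₀ + c i * ∫ t in r₀..r, Q t) atTop atTop :=
      tendsto_atTop_add_const_left atTop (φ i r₀) (hQtend.const_mul_atTop (hc i))
    apply tendsto_atTop_mono' atTop ?_ hbase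
    filter_upwards [eventually_ge_atTop r₀] with r hr
    exact hφlow r hr
  have hcomp : Tendsto (fun x : EuclideanSpace ℝ (Fin N) => φ i ‖x‖)
      (Filter.comap norm Filter.atTop) Filter.atTop := hφtend.comp tendsto_comap
  exact hcomp.congr (fun x => (hukφ i x).symm)
end

section
/- If f_1,…,f_d satisfy (C1)–(C2) and ∫₁^∞ (Σ_{i=1}^d f_i(s,…,s))^{-1} ds = ∞, then ∫₁^∞ (∫₀^t Σ_{i=1}^d f_i(s,…,s) ds)^{-1/2} dt = ∞. -/
open MeasureTheory Set Filter

theorem stmt7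
    (d : ℕ) (hd : 1 ≤ d)
    (f : Fin d → (Fin d → ℝ) → ℝ)
    -- (C1)
    (hf_nonneg : ∀ j v, (∀ i, 0 ≤ v i) → 0 ≤ f j v)
    (hC1 : ∀ j, ContDiffOn ℝ 1 (f j) {v : Fin d → ℝ | ∀ i, 0 ≤ v i})
    (hf0 : ∀ j, f j (fun _ => 0) = 0)
    (hfpos : ∀ j v, (∀ i, 0 ≤ v i) → (∃ i, 0 < v i) → 0 < f j v)
    -- (C2)
    (hC2 : ∀ j v w, (∀ i, 0 ≤ v i) → (∀ i, v i ≤ w i) → f j v ≤ f j w)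
    -- ∫₁^∞ (Σᵢ fᵢ(s,…,s))⁻¹ ds = ∞
    (hdiv : ¬ IntegrableOn (fun s : ℝ => (∑ i, f i (fun _ => s))⁻¹) (Ioi 1)) :
    -- conclusion: ∫₁^∞ (∫₀^t Σᵢ fᵢ(s,…,s) ds)^{-1/2} dt = ∞
    ¬ IntegrableOn
      (fun t : ℝ => (∫ s in (0:ℝ)..t, ∑ i, f i (fun _ => s)) ^ (-(1/2) : ℝ)) (Ioi 1) := by
  intro hint
  haveI : Nonempty (Fin d) := Fin.pos_iff_nonempty.mp hd
  set F : ℝ → ℝ := fun s => ∑ i, f i (fun _ => s) with hFdef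
  set G : ℝ → ℝ := fun t => ∫ s in (0:ℝ)..t, F s with hGdef
  have hint' : IntegrableOn (fun t : ℝ => (G t) ^ (-(1/2) : ℝ)) (Ioi 1) := hint
  have hdiv' : ¬ IntegrableOn (fun s : ℝ => (F s)⁻¹) (Ioi 1) := hdiv
  -- basic facts about F
  have hFmono : ∀ a b : ℝ, 0 ≤ a → a ≤ b → F a ≤ F b := by
    intro a b ha hab
    exact Finset.sum_le_sum fun j _ => hC2 j _ _ (fun _ => ha) (fun _ => hab)
  have hFnonneg : ∀ s : ℝ, 0 ≤ s → 0 ≤ F s :=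
    fun s hs => Finset.sum_nonneg fun j _ => hf_nonneg j _ (fun _ => hs)
  have hFpos : ∀ s : ℝ, 0 < s → 0 < F s := by
    intro s hs
    exact Finset.sum_pos (fun j _ => hfpos j _ (fun _ => hs.le) ⟨Classical.arbitrary _, hs⟩)
      Finset.univ_nonempty
  have hFcont : ContinuousOn F (Ici 0) := by
    apply continuousOn_finset_sum
    intro j _
    have h1 : ContinuousOn (f j) {v : Fin d → ℝ | ∀ i, 0 ≤ v i} := (hC1 j).continuousOn
    have h2 : Continuous (fun s : ℝ => (fun _ : Fin d => s)) := continuous_pi fun _ => continuous_id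
    exact h1.comp h2.continuousOn (fun s hs i => hs)
  have hFii : ∀ a b : ℝ, 0 ≤ a → 0 ≤ b → IntervalIntegrable F volume a b := by
    intro a b ha hb
    apply ContinuousOn.intervalIntegrable
    exact hFcont.mono (fun x hx => le_trans (le_min ha hb) hx.1)
  -- basic facts about G
  have hGmono : ∀ a b : ℝ, 0 ≤ a → a ≤ b → G a ≤ G b := by
    intro a b ha hab
    have hadd := intervalIntegral.integral_add_adjacent_intervals
      (hFii 0 a le_rfl ha) (hFii a b ha (ha.trans hab))
    have hpos : 0 ≤ ∫ s in a..b, F s :=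
      intervalIntegral.integral_nonneg hab (fun u hu => hFnonneg u (ha.trans hu.1))
    have : G b = G a + ∫ s in a..b, F s := hadd.symm
    linarith
  have hGpos : ∀ t : ℝ, 1 ≤ t → 0 < G t := by
    intro t ht
    have h0t : (0:ℝ) < t := lt_of_lt_of_le one_pos ht
    exact intervalIntegral.intervalIntegral_pos_of_pos_on (hFii 0 t le_rfl h0t.le)
      (fun x hx => hFpos x hx.1) h0t
  have hGle : ∀ t : ℝ, 1 ≤ t → G t ≤ t * F t := by
    intro t ht
    have h0t : (0:ℝ) ≤ t := le_trans zero_le_one ht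
    calc G t ≤ ∫ _ in (0:ℝ)..t, F t :=
          intervalIntegral.integral_mono_on h0t (hFii 0 t le_rfl h0t)
            intervalIntegrable_const (fun x hx => hFmono x t hx.1 hx.2)
      _ = t * F t := by simp
  -- rewrite hint' with square roots
  set h : ℝ → ℝ := fun t => (Real.sqrt (G t))⁻¹ with hhdef
  have hh_eq : ∀ t : ℝ, 1 ≤ t → (G t) ^ (-(1/2) : ℝ) = h t := by
    intro t ht
    show (G t) ^ (-(1/2) : ℝ) = (Real.sqrt (G t))⁻¹
    rw [Real.sqrt_eq_rpow, ← Real.rpow_neg (hGpos t ht).le]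
  have hint2 : IntegrableOn h (Ioi 1) := by
    apply hint'.congr_fun (fun t ht => hh_eq t (le_of_lt ht)) measurableSet_Ioi
  have hhnonneg : ∀ t : ℝ, 0 ≤ h t := fun t => inv_nonneg.mpr (Real.sqrt_nonneg _)
  have hhanti : ∀ a b : ℝ, 1 ≤ a → a ≤ b → h b ≤ h a := by
    intro a b ha hab
    have h1 : 0 < Real.sqrt (G a) := Real.sqrt_pos.mpr (hGpos a ha)
    exact inv_anti₀ h1 (Real.sqrt_le_sqrt (hGmono a b (le_trans zero_le_one ha) hab))
  -- h is interval integrable on subintervals of [1, ∞)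
  have hhii : ∀ a b : ℝ, 1 ≤ a → a ≤ b → IntervalIntegrable h volume a b := by
    intro a b ha hab
    rw [intervalIntegrable_iff_integrableOn_Ioc_of_le hab]
    exact hint2.mono_set (fun x hx => lt_of_le_of_lt ha hx.1)
  -- the tail integrals tend to zero
  set I : ℝ := ∫ x in Ioi (1:ℝ), h x with hIdef
  have hphi : Tendsto (fun t : ℝ => ∫ x in (1:ℝ)..t, h x) atTop (nhds I) :=
    MeasureTheory.intervalIntegral_tendsto_integral_Ioi 1 hint2 tendsto_id
  have hphi2 : Tendsto (fun t : ℝ => ∫ x in (1:ℝ)..(t/2), h x) atTop (nhds I) :=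
    hphi.comp (Tendsto.atTop_div_const two_pos tendsto_id)
  have hD : Tendsto (fun t : ℝ => (∫ x in (1:ℝ)..t, h x) - ∫ x in (1:ℝ)..(t/2), h x)
      atTop (nhds 0) := by
    have := hphi.sub hphi2
    simpa using this
  -- eventually t * h t < 1
  have hev : ∀ᶠ t : ℝ in atTop, t * h t < 1 := by
    have hD' : ∀ᶠ t : ℝ in atTop,
        (∫ x in (1:ℝ)..t, h x) - (∫ x in (1:ℝ)..(t/2), h x) < 1/2 := by
      have := hD.eventually (eventually_lt_nhds (by norm_num : (0:ℝ) < 1/2))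
      exact this
    filter_upwards [hD', eventually_ge_atTop (2:ℝ)] with t hDt ht2
    have h1t2 : (1:ℝ) ≤ t/2 := by linarith
    have ht2t : t/2 ≤ t := by linarith
    have hsplit : (∫ x in (1:ℝ)..(t/2), h x) + (∫ x in (t/2)..t, h x)
        = ∫ x in (1:ℝ)..t, h x :=
      intervalIntegral.integral_add_adjacent_intervals (hhii 1 (t/2) le_rfl h1t2)
        (hhii (t/2) t h1t2 ht2t)
    have hlow : (t/2) * h t ≤ ∫ x in (t/2)..t, h x := by
      have : ∫ _ in (t/2)..t, h t ≤ ∫ x in (t/2)..t, h x :=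
        intervalIntegral.integral_mono_on ht2t intervalIntegrable_const
          (hhii (t/2) t h1t2 ht2t) (fun x hx => hhanti x t (le_trans h1t2 hx.1) hx.2)
      calc (t/2) * h t = (t - t/2) * h t := by ring_nf
        _ = ∫ _ in (t/2)..t, h t := by simp [smul_eq_mul]
        _ ≤ ∫ x in (t/2)..t, h x := this
    have : (t/2) * h t < 1/2 := by
      have : (∫ x in (t/2)..t, h x) < 1/2 := by linarith
      linarith
    linarith
  obtain ⟨T, hT⟩ := (hev.and (eventually_ge_atTop (2:ℝ))).exists_forall_of_atTop
  have hT2 : (2:ℝ) ≤ T := (hT T le_rfl).2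
  have hT1 : (1:ℝ) < T := by linarith
  -- on [T, ∞), (F t)⁻¹ ≤ h t
  have hkey : ∀ t : ℝ, T ≤ t → (F t)⁻¹ ≤ h t := by
    intro t ht
    have ht1 : (1:ℝ) ≤ t := by linarith
    have ht0 : (0:ℝ) < t := by linarith
    have hGt : 0 < G t := hGpos t ht1
    have hst : 0 < Real.sqrt (G t) := Real.sqrt_pos.mpr hGt
    have hth : t * h t < 1 := (hT t ht).1
    -- t < sqrt (G t)
    have h1 : t < Real.sqrt (G t) := by
      have hd1 : t / Real.sqrt (G t) < 1 := by
        rw [div_eq_mul_inv]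
        simpa [hhdef] using hth
      exact (div_lt_one hst).mp hd1
    have h2 : t ^ 2 < G t := (Real.lt_sqrt ht0.le).mp h1
    have h3 : t < F t := by
      have := hGle t ht1
      nlinarith
    have h4 : Real.sqrt (G t) ≤ F t := by
      rw [Real.sqrt_le_left (hFpos t ht0).le]
      calc G t ≤ t * F t := hGle t ht1
        _ ≤ F t * F t := by nlinarith
        _ = (F t) ^ 2 := by ring
    calc (F t)⁻¹ ≤ (Real.sqrt (G t))⁻¹ := inv_anti₀ hst h4
      _ = h t := rfl
  -- build integrability of (F ·)⁻¹ on (1, ∞)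
  have hIoc : IntegrableOn (fun s : ℝ => (F s)⁻¹) (Ioc 1 T) := by
    apply IntegrableOn.mono_set (t := Icc 1 T) _ Ioc_subset_Icc_self
    apply ContinuousOn.integrableOn_Icc
    apply ContinuousOn.inv₀
    · exact hFcont.mono (fun x hx => le_trans zero_le_one hx.1)
    · intro x hx
      exact (hFpos x (lt_of_lt_of_le one_pos hx.1)).ne'
  have hIoiT : IntegrableOn (fun s : ℝ => (F s)⁻¹) (Ioi T) := by
    apply Integrable.mono' (hint2.mono_set (Set.Ioi_subset_Ioi hT1.le))
    · apply ContinuousOn.aestronglyMeasurable _ measurableSet_Ioi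
      apply ContinuousOn.inv₀
      · exact hFcont.mono (fun x hx => le_of_lt (lt_trans (by linarith : (0:ℝ) < T) hx))
      · intro x hx
        exact (hFpos x (lt_trans (by linarith : (0:ℝ) < T) hx)).ne'
    · rw [ae_restrict_iff' measurableSet_Ioi]
      filter_upwards with x
      intro hx
      have hx' : T ≤ x := le_of_lt hx
      have hb : (F x)⁻¹ ≤ h x := hkey x hx'
      have h0 : 0 ≤ (F x)⁻¹ := inv_nonneg.mpr (hFpos x (by linarith)).le
      rw [Real.norm_eq_abs, abs_of_nonneg h0]
      exact hb
  have : IntegrableOn (fun s : ℝ => (F s)⁻¹) (Ioi 1) := by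
    rw [← Ioc_union_Ioi_eq_Ioi hT1.le]
    exact hIoc.union hIoiT
  exact hdiv' this
end

section
/- Suppose (C1)–(C2) hold, φ_1,…,φ_d : [0,∞) → [0,∞) are continuous, R > 0, and set φ_i^R = max{φ_i(r) : 0 ≤ r ≤ R}. Let {w_i^k} be the successive approximations defined by w_i^0 ≡ 1/d and w_i^k(r) = 1/d + ∫₀^r t^{1-N} ∫₀^t s^{N-1} φ_i(s) f_i(w_1^{k-1}(s),…,w_d^{k-1}(s)) ds dt. Then for every k ≥ 1 and every 0 ≤ r ≤ R one has [(Σ_{i=1}^d w_i^k)'(r)]² ≤ 2 (Σ_{i=1}^d φ_i^R) ∫₁^{Σ_{i=1}^d w_i^k(r)} Σ_{i=1}^d f_i(s,…,s) ds. -/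
open MeasureTheory Set Filter Topology


namespace Stmt9Aux

lemma contAt {g : ℝ → ℝ} (hg : ContinuousOn g (Ici 0)) {t : ℝ} (ht : 0 < t) :
    ContinuousAt g t := hg.continuousAt (Ici_mem_nhds ht)

lemma intble {g : ℝ → ℝ} (hg : ContinuousOn g (Ici 0)) {a b : ℝ} (ha : 0 ≤ a) (hb : 0 ≤ b) :
    IntervalIntegrable g volume a b := by
  apply (hg.mono ?_).intervalIntegrable
  intro x hx
  rcases le_total a b with hab | hab
  · rw [uIcc_of_le hab] at hx; exact le_trans ha hx.1
  · rw [uIcc_of_ge hab] at hx; exact le_trans hb hx.1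

lemma primitive_cont {g : ℝ → ℝ} (hg : ContinuousOn g (Ici 0)) :
    ContinuousOn (fun r => ∫ t in (0:ℝ)..r, g t) (Ici 0) := by
  intro r hr
  have hr' : (0:ℝ) ≤ r := hr
  have h1 : ContinuousOn (fun x => ∫ t in (0:ℝ)..x, g t) (uIcc 0 (r+1)) := by
    apply intervalIntegral.continuousOn_primitive_interval
    rw [uIcc_of_le (by linarith)]
    exact (hg.mono (Icc_subset_Ici_self)).integrableOn_Icc
  rw [uIcc_of_le (by linarith)] at h1
  have h2 : ContinuousWithinAt (fun x => ∫ t in (0:ℝ)..x, g t) (Icc 0 (r+1)) r :=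
    h1 r ⟨hr', by linarith⟩
  apply h2.mono_of_mem_nhdsWithin
  have : Icc 0 (r+1) = Ici 0 ∩ Iic (r+1) := (Ici_inter_Iic).symm
  rw [this]
  exact inter_mem self_mem_nhdsWithin (mem_nhdsWithin_of_mem_nhds (Iic_mem_nhds (by linarith)))

lemma primitive_deriv {g : ℝ → ℝ} (hg : ContinuousOn g (Ici 0)) {r : ℝ} (hr : 0 < r) :
    HasDerivAt (fun ρ => ∫ t in (0:ℝ)..ρ, g t) (g r) r :=
  intervalIntegral.integral_hasDerivAt_right (intble hg le_rfl hr.le)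
    ⟨Ioi 0, Ioi_mem_nhds hr,
      ((hg.mono Ioi_subset_Ici_self).aestronglyMeasurable measurableSet_Ioi)⟩
    (contAt hg hr)

variable {G : ℝ → ℝ} {n : ℕ}

lemma sG_cont (hGc : ContinuousOn G (Ici 0)) :
    ContinuousOn (fun s => s ^ n * G s) (Ici 0) :=
  (continuous_pow n).continuousOn.mul hGc

lemma sG_nonneg (hGnn : ∀ s ≥ (0:ℝ), 0 ≤ G s) :
    ∀ s ≥ (0:ℝ), 0 ≤ s ^ n * G s := fun s hs =>
  mul_nonneg (pow_nonneg hs n) (hGnn s hs)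

lemma Phi_nonneg (hGnn : ∀ s ≥ (0:ℝ), 0 ≤ G s) {t : ℝ} (ht : 0 ≤ t) :
    0 ≤ ∫ s in (0:ℝ)..t, s ^ n * G s :=
  intervalIntegral.integral_nonneg ht (fun u hu => sG_nonneg hGnn u hu.1)

lemma H_nonneg (hGnn : ∀ s ≥ (0:ℝ), 0 ≤ G s) {t : ℝ} (ht : 0 ≤ t) :
    0 ≤ (∫ s in (0:ℝ)..t, s ^ n * G s) / t ^ n :=
  div_nonneg (Phi_nonneg hGnn ht) (pow_nonneg ht n)

lemma H_le_linear (hGc : ContinuousOn G (Ici 0)) (hGnn : ∀ s ≥ (0:ℝ), 0 ≤ G s)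
    {b : ℝ} (hb : 0 < b) :
    ∃ M ≥ (0:ℝ), ∀ t ∈ Ioc (0:ℝ) b, (∫ s in (0:ℝ)..t, s ^ n * G s) / t ^ n ≤ M * t := by
  obtain ⟨C, hC⟩ := (isCompact_Icc (a := (0:ℝ)) (b := b)).exists_bound_of_continuousOn
    (hGc.mono Icc_subset_Ici_self)
  have hC0 : 0 ≤ C := le_trans (norm_nonneg _) (hC 0 ⟨le_rfl, hb.le⟩)
  refine ⟨C, hC0, fun t ht => ?_⟩
  have htpos := ht.1
  have htb := ht.2
  have hint : (∫ s in (0:ℝ)..t, s ^ n * G s) ≤ ∫ _s in (0:ℝ)..t, t ^ n * C := by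
    apply intervalIntegral.integral_mono_on htpos.le
    · exact intble (sG_cont hGc) le_rfl htpos.le
    · exact intervalIntegrable_const
    · intro s hs
      have h1 : s ^ n ≤ t ^ n := pow_le_pow_left₀ hs.1 hs.2 n
      have h2 : G s ≤ C := le_trans (le_abs_self _) (hC s ⟨hs.1, le_trans hs.2 htb⟩)
      calc s ^ n * G s ≤ s ^ n * C :=
            mul_le_mul_of_nonneg_left h2 (pow_nonneg hs.1 n)
        _ ≤ t ^ n * C := mul_le_mul_of_nonneg_right h1 hC0
  rw [intervalIntegral.integral_const, smul_eq_mul, sub_zero] at hint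
  rw [div_le_iff₀ (pow_pos htpos n)]
  calc (∫ s in (0:ℝ)..t, s ^ n * G s) ≤ t * (t ^ n * C) := hint
    _ = C * t * t ^ n := by ring

lemma H_cont (hGc : ContinuousOn G (Ici 0)) (hGnn : ∀ s ≥ (0:ℝ), 0 ≤ G s) :
    ContinuousOn (fun t => (∫ s in (0:ℝ)..t, s ^ n * G s) / t ^ n) (Ici 0) := by
  intro t ht
  rcases eq_or_lt_of_le (show (0:ℝ) ≤ t from ht) with h0 | htpos
  · obtain ⟨M, hM0, hM⟩ := H_le_linear (n := n) hGc hGnn one_pos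
    have hval : (∫ s in (0:ℝ)..(0:ℝ), s ^ n * G s) / (0:ℝ) ^ n = 0 := by
      rw [intervalIntegral.integral_same, zero_div]
    rw [← h0]
    unfold ContinuousWithinAt
    rw [show (fun t => (∫ s in (0:ℝ)..t, s ^ n * G s) / t ^ n) (0:ℝ) = 0 from hval]
    apply squeeze_zero_norm' (a := fun t => M * t)
    · filter_upwards [inter_mem_nhdsWithin (Ici 0) (Metric.ball_mem_nhds (0:ℝ) one_pos)]
        with x hx
      obtain ⟨hx1, hx2⟩ := hx
      have hx1 : (0:ℝ) ≤ x := hx1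
      rcases eq_or_lt_of_le hx1 with h | h
      · rw [← h, hval]; simpa using mul_nonneg hM0 (le_refl 0 ▸ h ▸ le_rfl)
      · have hxb : x ≤ 1 := by
          have := abs_lt.1 (by simpa [Real.dist_eq] using hx2)
          linarith [this.2]
        rw [Real.norm_eq_abs, abs_of_nonneg (H_nonneg hGnn hx1)]
        exact hM x ⟨h, hxb⟩
    · have : Tendsto (fun t : ℝ => M * t) (𝓝 0) (𝓝 (M * 0)) :=
        (continuous_const.mul continuous_id).tendsto 0
      rw [mul_zero] at this
      exact this.mono_left nhdsWithin_le_nhds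
  · apply ContinuousAt.continuousWithinAt
    apply ContinuousAt.div
    · exact (primitive_deriv (sG_cont hGc) htpos).continuousAt
    · exact (continuous_pow n).continuousAt
    · exact ne_of_gt (pow_pos htpos n)

lemma H_deriv (hGc : ContinuousOn G (Ici 0)) (hGnn : ∀ s ≥ (0:ℝ), 0 ≤ G s)
    {t : ℝ} (ht : 0 < t) :
    ∃ D, HasDerivAt (fun u => (∫ s in (0:ℝ)..u, s ^ n * G s) / u ^ n) D t ∧ D ≤ G t := by
  have hnum : HasDerivAt (fun u => ∫ s in (0:ℝ)..u, s ^ n * G s) (t ^ n * G t) t :=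
    primitive_deriv (sG_cont hGc) ht
  have hden : HasDerivAt (fun u : ℝ => u ^ n) (n * t ^ (n - 1)) t := by
    simpa using hasDerivAt_pow n t
  have hne : t ^ n ≠ 0 := ne_of_gt (pow_pos ht n)
  refine ⟨_, hnum.div hden hne, ?_⟩
  have hΦ : 0 ≤ ∫ s in (0:ℝ)..t, s ^ n * G s := Phi_nonneg hGnn ht.le
  have hsub : (∫ s in (0:ℝ)..t, s ^ n * G s) * (n * t ^ (n - 1)) ≥ 0 :=
    mul_nonneg hΦ (mul_nonneg (Nat.cast_nonneg n) (pow_nonneg ht.le _))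
  have hpos : (0:ℝ) < (t ^ n) ^ 2 := pow_pos (pow_pos ht n) 2
  rw [div_le_iff₀ hpos]
  have : G t * (t ^ n) ^ 2 = t ^ n * G t * t ^ n := by ring
  nlinarith [hsub]

lemma H_mono {G₁ G₂ : ℝ → ℝ} (hG₁c : ContinuousOn G₁ (Ici 0)) (hG₂c : ContinuousOn G₂ (Ici 0))
    (hle : ∀ s ≥ (0:ℝ), G₁ s ≤ G₂ s) {t : ℝ} (ht : 0 ≤ t) :
    (∫ s in (0:ℝ)..t, s ^ n * G₁ s) / t ^ n ≤ (∫ s in (0:ℝ)..t, s ^ n * G₂ s) / t ^ n := by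
  rcases eq_or_lt_of_le ht with h0 | htpos
  · rw [← h0]; simp
  · have hint : (∫ s in (0:ℝ)..t, s ^ n * G₁ s) ≤ ∫ s in (0:ℝ)..t, s ^ n * G₂ s := by
      apply intervalIntegral.integral_mono_on ht (intble (sG_cont hG₁c) le_rfl ht)
        (intble (sG_cont hG₂c) le_rfl ht)
      intro s hs
      exact mul_le_mul_of_nonneg_left (hle s hs.1) (pow_nonneg hs.1 n)
    gcongr
end Stmt9Aux

open Stmt9Aux

theorem stmt9
    (N d : ℕ) (hN : 3 ≤ N) (hd : 1 ≤ d)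
    (f : Fin d → (Fin d → ℝ) → ℝ)
    -- (C1)
    (hf_nonneg : ∀ j v, (∀ i, 0 ≤ v i) → 0 ≤ f j v)
    (hC1 : ∀ j, ContDiffOn ℝ 1 (f j) {v : Fin d → ℝ | ∀ i, 0 ≤ v i})
    (hf0 : ∀ j, f j (fun _ => 0) = 0)
    (hfpos : ∀ j v, (∀ i, 0 ≤ v i) → (∃ i, 0 < v i) → 0 < f j v)
    -- (C2)
    (hC2 : ∀ j v w, (∀ i, 0 ≤ v i) → (∀ i, v i ≤ w i) → f j v ≤ f j w)
    -- continuous nonnegative coefficients φ₁,…,φ_d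
    (φ : Fin d → ℝ → ℝ)
    (hφ_cont : ∀ i, ContinuousOn (φ i) (Ici 0))
    (hφ_nonneg : ∀ i, ∀ t ≥ (0:ℝ), 0 ≤ φ i t)
    -- R > 0 and φᵢᴿ = max {φᵢ(r) : 0 ≤ r ≤ R}
    (R : ℝ) (hR : 0 < R)
    (φR : Fin d → ℝ)
    (hφR : ∀ i, IsGreatest (φ i '' Icc 0 R) (φR i))
    -- the successive approximations
    (w : ℕ → Fin d → ℝ → ℝ)
    (hw0 : ∀ i r, w 0 i r = 1 / (d : ℝ))
    (hwk : ∀ k i r, 0 ≤ r →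
      w (k + 1) i r = 1 / (d : ℝ) +
        ∫ t in (0:ℝ)..r,
          (∫ s in (0:ℝ)..t, s ^ (N - 1) * (φ i s * f i (fun j => w k j s))) / t ^ (N - 1)) :
    -- conclusion
    ∀ k ≥ 1, ∀ r, 0 ≤ r → r ≤ R →
      (deriv (fun ρ => ∑ i, w k i ρ) r) ^ 2 ≤
        2 * (∑ i, φR i) *
          ∫ s in (1:ℝ)..(∑ i, w k i r), ∑ i, f i (fun _ => s) := by
  have hd0 : (0:ℝ) < (d:ℝ) := by exact_mod_cast hd
  have hinv : (0:ℝ) ≤ 1 / (d:ℝ) := by positivity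
  have fcont : ∀ i, ContinuousOn (f i) {v : Fin d → ℝ | ∀ i, 0 ≤ v i} :=
    fun i => (hC1 i).continuousOn
  -- facts about the inner function G
  have Gfacts : ∀ k : ℕ, (∀ i, ContinuousOn (w k i) (Ici 0)) →
      (∀ i, ∀ r ≥ (0:ℝ), 1 / (d:ℝ) ≤ w k i r) →
      ∀ i, ContinuousOn (fun s => φ i s * f i (fun j => w k j s)) (Ici 0) ∧
           (∀ s ≥ (0:ℝ), 0 ≤ φ i s * f i (fun j => w k j s)) := by
    intro k hc hlb i
    constructor
    · apply (hφ_cont i).mul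
      exact (fcont i).comp (continuousOn_pi.mpr fun j => hc j)
        (fun s hs j => le_trans hinv (hlb j s hs))
    · intro s hs
      exact mul_nonneg (hφ_nonneg i s hs)
        (hf_nonneg i _ (fun j => le_trans hinv (hlb j s hs)))
  -- basic facts by induction on k
  have basics : ∀ k : ℕ, (∀ i, ContinuousOn (w k i) (Ici 0)) ∧
      (∀ i, ∀ r ≥ (0:ℝ), 1 / (d:ℝ) ≤ w k i r) ∧
      (∀ i, ∀ r ≥ (0:ℝ), w k i r ≤ w (k+1) i r) := by
    intro k
    induction k with
    | zero =>
      have hc0 : ∀ i, ContinuousOn (w 0 i) (Ici 0) := by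
        intro i
        have : w 0 i = fun _ => 1 / (d:ℝ) := funext fun r => hw0 i r
        rw [this]; exact continuousOn_const
      have hlb0 : ∀ i, ∀ r ≥ (0:ℝ), 1 / (d:ℝ) ≤ w 0 i r :=
        fun i r _ => le_of_eq (hw0 i r).symm
      refine ⟨hc0, hlb0, fun i r hr => ?_⟩
      rw [hw0, hwk 0 i r hr]
      have h0 : 0 ≤ ∫ t in (0:ℝ)..r,
          (∫ s in (0:ℝ)..t, s ^ (N-1) * (φ i s * f i (fun j => w 0 j s))) / t ^ (N-1) :=
        intervalIntegral.integral_nonneg hr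
          (fun t ht => H_nonneg (Gfacts 0 hc0 hlb0 i).2 ht.1)
      linarith
    | succ k ih =>
      obtain ⟨hc, hlb, hmono⟩ := ih
      have hGk := Gfacts k hc hlb
      have Hc : ∀ i : Fin d, ContinuousOn (fun t =>
          (∫ s in (0:ℝ)..t, s ^ (N-1) * (φ i s * f i (fun j => w k j s))) / t ^ (N-1))
          (Ici 0) := fun i => H_cont (hGk i).1 (hGk i).2
      have hck1 : ∀ i, ContinuousOn (w (k+1) i) (Ici 0) := by
        intro i
        apply ContinuousOn.congr (continuousOn_const.add (primitive_cont (Hc i)))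
        intro r hr
        exact hwk k i r hr
      have hlb1 : ∀ i, ∀ r ≥ (0:ℝ), 1 / (d:ℝ) ≤ w (k+1) i r := by
        intro i r hr
        rw [hwk k i r hr]
        have h0 : 0 ≤ ∫ t in (0:ℝ)..r,
            (∫ s in (0:ℝ)..t, s ^ (N-1) * (φ i s * f i (fun j => w k j s))) / t ^ (N-1) :=
          intervalIntegral.integral_nonneg hr (fun t ht => H_nonneg (hGk i).2 ht.1)
        linarith
      have hGk1 := Gfacts (k+1) hck1 hlb1
      have Hc1 : ∀ i : Fin d, ContinuousOn (fun t =>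
          (∫ s in (0:ℝ)..t, s ^ (N-1) * (φ i s * f i (fun j => w (k+1) j s))) / t ^ (N-1))
          (Ici 0) := fun i => H_cont (hGk1 i).1 (hGk1 i).2
      refine ⟨hck1, hlb1, fun i r hr => ?_⟩
      rw [hwk k i r hr, hwk (k+1) i r hr]
      have hGle : ∀ s ≥ (0:ℝ), φ i s * f i (fun j => w k j s) ≤
          φ i s * f i (fun j => w (k+1) j s) := by
        intro s hs
        exact mul_le_mul_of_nonneg_left
          (hC2 i _ _ (fun j => le_trans hinv (hlb j s hs)) (fun j => hmono j s hs))
          (hφ_nonneg i s hs)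
      have hint : (∫ t in (0:ℝ)..r,
            (∫ s in (0:ℝ)..t, s ^ (N-1) * (φ i s * f i (fun j => w k j s))) / t ^ (N-1)) ≤
          ∫ t in (0:ℝ)..r,
            (∫ s in (0:ℝ)..t, s ^ (N-1) * (φ i s * f i (fun j => w (k+1) j s))) / t ^ (N-1) := by
        apply intervalIntegral.integral_mono_on hr (intble (Hc i) le_rfl hr)
          (intble (Hc1 i) le_rfl hr)
        intro t ht
        exact H_mono (hGk i).1 (hGk1 i).1 hGle ht.1
      linarith
  -- main part
  intro k hk r hr hrR
  obtain ⟨m, rfl⟩ : ∃ m, k = m + 1 := ⟨k - 1, (Nat.succ_pred_eq_of_pos hk).symm⟩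
  have hGm := Gfacts m (basics m).1 (basics m).2.1
  have Hc : ∀ i : Fin d, ContinuousOn (fun t =>
      (∫ s in (0:ℝ)..t, s ^ (N-1) * (φ i s * f i (fun j => w m j s))) / t ^ (N-1))
      (Ici 0) := fun i => H_cont (hGm i).1 (hGm i).2
  have Hnn : ∀ i : Fin d, ∀ t ≥ (0:ℝ),
      0 ≤ (∫ s in (0:ℝ)..t, s ^ (N-1) * (φ i s * f i (fun j => w m j s))) / t ^ (N-1) :=
    fun i t ht => H_nonneg (hGm i).2 ht
  set h : ℝ → ℝ := fun t => ∑ i : Fin d,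
      (∫ s in (0:ℝ)..t, s ^ (N-1) * (φ i s * f i (fun j => w m j s))) / t ^ (N-1) with hh
  have hcont : ContinuousOn h (Ici 0) := continuousOn_finset_sum _ (fun i _ => Hc i)
  have hnn : ∀ t, 0 ≤ t → 0 ≤ h t :=
    fun t ht => Finset.sum_nonneg (fun i _ => Hnn i t ht)
  have h00 : h 0 = 0 := by
    apply Finset.sum_eq_zero
    intro i _
    rw [intervalIntegral.integral_same, zero_div]
  set hbar : ℝ → ℝ := fun t => h (max t 0) with hhbar
  have hbar_eq : ∀ t, 0 ≤ t → hbar t = h t := by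
    intro t ht
    show h (max t 0) = h t
    rw [max_eq_left ht]
  have hbar_cont : Continuous hbar :=
    hcont.comp_continuous (continuous_id.max continuous_const)
      (fun x => mem_Ici.mpr (le_max_right x 0))
  have hbar_nn : ∀ t, 0 ≤ hbar t := fun t => hnn _ (le_max_right t 0)
  have hb0 : hbar 0 = 0 := by
    show h (max 0 0) = 0
    rw [max_self]; exact h00
  set Wb : ℝ → ℝ := fun ρ => 1 + ∫ t in (0:ℝ)..ρ, hbar t with hWb
  have WbD : ∀ ρ, HasDerivAt Wb (hbar ρ) ρ := by
    intro ρ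
    apply HasDerivAt.const_add
    exact intervalIntegral.integral_hasDerivAt_right
      (hbar_cont.intervalIntegrable 0 ρ)
      hbar_cont.stronglyMeasurable.stronglyMeasurableAtFilter
      hbar_cont.continuousAt
  have Wbcont : Continuous Wb := by
    rw [continuous_iff_continuousAt]; exact fun ρ => (WbD ρ).continuousAt
  have Wb0 : Wb 0 = 1 := by
    show 1 + ∫ t in (0:ℝ)..(0:ℝ), hbar t = 1
    rw [intervalIntegral.integral_same, add_zero]
  have Weq : Set.EqOn (fun ρ => ∑ i, w (m+1) i ρ) Wb (Ici 0) := by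
    intro ρ hρ
    have hρ' : (0:ℝ) ≤ ρ := hρ
    show (∑ i, w (m+1) i ρ) = Wb ρ
    have e1 : (∑ i, w (m+1) i ρ) = ∑ i : Fin d, (1/(d:ℝ) +
        ∫ t in (0:ℝ)..ρ,
          (∫ s in (0:ℝ)..t, s ^ (N-1) * (φ i s * f i (fun j => w m j s))) / t ^ (N-1)) :=
      Finset.sum_congr rfl (fun i _ => hwk m i ρ hρ')
    rw [e1, Finset.sum_add_distrib,
      ← intervalIntegral.integral_finset_sum (fun i _ => intble (Hc i) le_rfl hρ')]
    have e2 : (∑ _i : Fin d, (1/(d:ℝ))) = 1 := by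
      rw [Finset.sum_const, Finset.card_univ, Fintype.card_fin, nsmul_eq_mul]
      field_simp
    rw [e2]
    have e3 : (∫ t in (0:ℝ)..ρ, ∑ i : Fin d,
        (∫ s in (0:ℝ)..t, s ^ (N-1) * (φ i s * f i (fun j => w m j s))) / t ^ (N-1)) =
        ∫ t in (0:ℝ)..ρ, hbar t := by
      apply intervalIntegral.integral_congr
      intro t ht
      rw [uIcc_of_le hρ'] at ht
      show (∑ i : Fin d, _) = hbar t
      rw [hbar_eq t ht.1]
    rw [e3]
  have WbGe : ∀ ρ, 0 ≤ ρ → 1 ≤ Wb ρ := by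
    intro ρ hρ
    have : 0 ≤ ∫ t in (0:ℝ)..ρ, hbar t :=
      intervalIntegral.integral_nonneg hρ (fun t _ => hbar_nn t)
    show 1 ≤ 1 + ∫ t in (0:ℝ)..ρ, hbar t
    linarith
  set p : ℝ → ℝ := fun u => ∑ i : Fin d, f i (fun _ => u) with hp
  have pcont : ContinuousOn p (Ici 0) := by
    apply continuousOn_finset_sum
    intro i _
    exact (fcont i).comp (continuous_pi fun _ => continuous_id).continuousOn
      (fun u hu j => hu)
  have pnn : ∀ u, 0 ≤ u → 0 ≤ p u :=
    fun u hu => Finset.sum_nonneg (fun i _ => hf_nonneg i _ (fun _ => hu))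
  set A : ℝ := ∑ i : Fin d, φR i with hA
  have φRnn : ∀ i, 0 ≤ φR i := by
    intro i
    obtain ⟨x, hx, hfx⟩ := (hφR i).1
    rw [← hfx]; exact hφ_nonneg i x hx.1
  have Ann : 0 ≤ A := Finset.sum_nonneg (fun i _ => φRnn i)
  have q0cont : ContinuousOn (fun s => p (Wb s) * hbar s) (Ici 0) :=
    (pcont.comp Wbcont.continuousOn
      (fun s hs => le_trans zero_le_one (WbGe s hs))).mul hbar_cont.continuousOn
  rcases eq_or_lt_of_le hr with h0 | hrpos
  · -- r = 0
    rw [← h0]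
    have hW0 : (∑ i, w (m+1) i 0) = 1 := by
      have := Weq self_mem_Ici
      simpa [Wb0] using this
    rw [hW0, intervalIntegral.integral_same, mul_zero]
    have hd0' : deriv (fun ρ => ∑ i, w (m+1) i ρ) 0 = 0 := by
      by_cases hdiff : DifferentiableAt ℝ (fun ρ => ∑ i, w (m+1) i ρ) 0
      · have h1 : HasDerivWithinAt (fun ρ => ∑ i, w (m+1) i ρ)
            (deriv (fun ρ => ∑ i, w (m+1) i ρ) 0) (Ici 0) 0 :=
          hdiff.hasDerivAt.hasDerivWithinAt
        have h2 : HasDerivWithinAt (fun ρ => ∑ i, w (m+1) i ρ) (hbar 0) (Ici 0) 0 :=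
          ((WbD 0).hasDerivWithinAt).congr (fun x hx => Weq hx) (Weq self_mem_Ici)
        have hu : UniqueDiffWithinAt ℝ (Ici (0:ℝ)) 0 := uniqueDiffOn_Ici 0 0 self_mem_Ici
        have e1 := h1.derivWithin hu
        have e2 := h2.derivWithin hu
        rw [← e1, e2, hb0]
      · exact deriv_zero_of_not_differentiableAt hdiff
    rw [hd0']
    norm_num
  · -- r > 0
    have hder : ∀ t, 0 < t → t ≤ R → ∃ D, HasDerivAt h D t ∧ D ≤ A * p (Wb t) := by
      intro t ht htR
      have hDs : ∀ i : Fin d, ∃ D, HasDerivAt (fun u =>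
          (∫ s in (0:ℝ)..u, s ^ (N-1) * (φ i s * f i (fun j => w m j s))) / u ^ (N-1)) D t ∧
          D ≤ φ i t * f i (fun j => w m j t) :=
        fun i => H_deriv (hGm i).1 (hGm i).2 ht
      choose D hD hDle using hDs
      refine ⟨∑ i, D i, HasDerivAt.fun_sum (fun i _ => hD i), ?_⟩
      have hwmle : ∀ j : Fin d, w m j t ≤ Wb t := by
        intro j
        calc w m j t ≤ w (m+1) j t := (basics m).2.2 j t ht.le
          _ ≤ ∑ i, w (m+1) i t := Finset.single_le_sum
              (fun i _ => le_trans hinv ((basics (m+1)).2.1 i t ht.le)) (Finset.mem_univ j)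
          _ = Wb t := Weq (mem_Ici.mpr ht.le)
      have step1 : ∀ i : Fin d, D i ≤ φR i * f i (fun _ => Wb t) := by
        intro i
        refine le_trans (hDle i) ?_
        apply mul_le_mul
        · exact (hφR i).2 ⟨t, ⟨ht.le, htR⟩, rfl⟩
        · exact hC2 i _ _ (fun j => le_trans hinv ((basics m).2.1 j t ht.le)) hwmle
        · exact hf_nonneg i _ (fun j => le_trans hinv ((basics m).2.1 j t ht.le))
        · exact φRnn i
      calc (∑ i, D i) ≤ ∑ i, φR i * f i (fun _ => Wb t) :=
            Finset.sum_le_sum (fun i _ => step1 i)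
        _ ≤ ∑ i, φR i * p (Wb t) := by
            apply Finset.sum_le_sum
            intro i _
            apply mul_le_mul_of_nonneg_left ?_ (φRnn i)
            exact Finset.single_le_sum
              (fun j _ => hf_nonneg j _ (fun _ => le_trans zero_le_one (WbGe t ht.le)))
              (Finset.mem_univ i)
        _ = A * p (Wb t) := by rw [← Finset.sum_mul]
    set K : ℝ → ℝ := fun t => 2 * A * ∫ s in (0:ℝ)..t, p (Wb s) * hbar s with hK
    have Kcont : ContinuousOn K (Ici 0) :=
      continuousOn_const.mul (primitive_cont q0cont)
    have K0 : K 0 = 0 := by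
      show 2 * A * ∫ s in (0:ℝ)..(0:ℝ), p (Wb s) * hbar s = 0
      rw [intervalIntegral.integral_same, mul_zero]
    have hE : ∀ t, t ∈ Ioo 0 r → ∃ v, HasDerivAt (fun u => K u - hbar u ^ 2) v t ∧ 0 ≤ v := by
      intro t ht
      have htR : t ≤ R := le_trans ht.2.le hrR
      obtain ⟨Dh, hDh, hDle⟩ := hder t ht.1 htR
      have hbarD : HasDerivAt hbar Dh t := by
        apply hDh.congr_of_eventuallyEq
        filter_upwards [Ioi_mem_nhds ht.1] with x hx
        exact hbar_eq x (le_of_lt hx)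
      have KD : HasDerivAt K (2 * A * (p (Wb t) * hbar t)) t :=
        (primitive_deriv q0cont ht.1).const_mul (2*A)
      refine ⟨_, KD.sub (hbarD.pow 2), ?_⟩
      have key : 0 ≤ hbar t * (A * p (Wb t) - Dh) :=
        mul_nonneg (hbar_nn t) (sub_nonneg.mpr hDle)
      have : ((2:ℕ):ℝ) = 2 := by norm_num
      rw [this, pow_one]
      nlinarith [hbar_nn t]
    have Emono : MonotoneOn (fun u => K u - hbar u ^ 2) (Icc 0 r) := by
      apply monotoneOn_of_deriv_nonneg (convex_Icc 0 r)
      · exact (Kcont.mono Icc_subset_Ici_self).sub (hbar_cont.pow 2).continuousOn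
      · rw [interior_Icc]
        intro t ht
        obtain ⟨v, hv, _⟩ := hE t ht
        exact hv.differentiableAt.differentiableWithinAt
      · rw [interior_Icc]
        intro t ht
        obtain ⟨v, hv, hv0⟩ := hE t ht
        rw [hv.deriv]
        exact hv0
    have hKr : hbar r ^ 2 ≤ K r := by
      have := Emono (left_mem_Icc.mpr hr) (right_mem_Icc.mpr hr) hr
      have e0 : K 0 - hbar 0 ^ 2 = 0 := by rw [K0, hb0]; ring
      simp only [e0] at this
      linarith
    have hsub : (∫ s in (0:ℝ)..r, p (Wb s) * hbar s) = ∫ u in (1:ℝ)..(Wb r), p u := by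
      have hIm : ContinuousOn p (Wb '' uIcc 0 r) := by
        apply pcont.mono
        rintro u ⟨x, hx, rfl⟩
        rw [uIcc_of_le hr] at hx
        exact le_trans zero_le_one (WbGe x hx.1)
      have := intervalIntegral.integral_comp_mul_deriv' (f := Wb) (f' := hbar) (g := p)
        (fun x _ => WbD x) hbar_cont.continuousOn hIm
      rw [Wb0] at this
      rw [← this]
      apply intervalIntegral.integral_congr
      intro x _
      show p (Wb x) * hbar x = (p ∘ Wb) x * hbar x
      rfl
    have hderiv_eq : deriv (fun ρ => ∑ i, w (m+1) i ρ) r = hbar r := by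
      have heq : (fun ρ => ∑ i, w (m+1) i ρ) =ᶠ[nhds r] Wb :=
        eventuallyEq_of_mem (Ici_mem_nhds hrpos) Weq
      rw [heq.deriv_eq, (WbD r).deriv]
    have Weq' : (∑ i, w (m+1) i r) = Wb r := Weq (mem_Ici.mpr hr)
    rw [hderiv_eq, Weq']
    calc hbar r ^ 2 ≤ K r := hKr
      _ = 2 * A * ∫ u in (1:ℝ)..(Wb r), p u := by
            have e : K r = 2 * A * ∫ s in (0:ℝ)..r, p (Wb s) * hbar s := rfl
            rw [e, hsub]
      _ = 2 * A * ∫ u in (1:ℝ)..(Wb r), ∑ i, f i (fun _ => u) := rfl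
end

section
/- Suppose (C1)–(C3) hold, φ_1,…,φ_d : [0,∞) → [0,∞) are continuous, R > 0, and set φ_i^R = max{φ_i(r) : 0 ≤ r ≤ R}. Let {w_i^k} be the successive approximations defined by w_i^0 ≡ 1/d and w_i^k(r) = 1/d + ∫₀^r t^{1-N} ∫₀^t s^{N-1} φ_i(s) f_i(w_1^{k-1}(s),…,w_d^{k-1}(s)) ds dt. Then for every k ≥ 1 the inequality ∫₁^{Σ_{i=1}^d w_i^k(R)} [∫₁^t Σ_{i=1}^d f_i(s,…,s) ds]^{-1/2} dt ≤ R √(2 Σ_{i=1}^d φ_i^R) holds; consequently Σ_{i=1}^d w_i^k(R) and (Σ_{i=1}^d w_i^k)'(R) are bounded above by constants independent of k. -/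
open MeasureTheory Set Filter

open intervalIntegral

private lemma uIcc_subset_Ici' {a b : ℝ} (ha : 0 ≤ a) (hb : 0 ≤ b) :
    Set.uIcc a b ⊆ Ici 0 := fun _x hx => le_trans (le_min ha hb) hx.1

private lemma helper_intInt {c : ℝ → ℝ} (hc : ContinuousOn c (Ici 0)) {a b : ℝ}
    (ha : 0 ≤ a) (hb : 0 ≤ b) : IntervalIntegrable c MeasureTheory.volume a b :=
  (hc.mono (uIcc_subset_Ici' ha hb)).intervalIntegrable

private lemma helper_primDeriv {c : ℝ → ℝ} (hc : ContinuousOn c (Ici 0)) {a r : ℝ}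
    (ha : 0 ≤ a) (hr : 0 < r) : HasDerivAt (fun x => ∫ t in a..x, c t) (c r) r := by
  have hIci : Ici (0:ℝ) ∈ nhds r := mem_of_superset (Ioi_mem_nhds hr) Ioi_subset_Ici_self
  exact integral_hasDerivAt_right (helper_intInt hc ha hr.le)
    ((hc.mono Ioi_subset_Ici_self).stronglyMeasurableAtFilter isOpen_Ioi r hr)
    (hc.continuousAt hIci)

private lemma helper_primCont {c : ℝ → ℝ} (hc : ContinuousOn c (Ici 0)) :
    ContinuousOn (fun x => ∫ t in (0:ℝ)..x, c t) (Ici 0) := by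
  intro r hr
  have hr0 : (0:ℝ) ≤ r := hr
  have h1 : ContinuousOn (fun x => ∫ t in (0:ℝ)..x, c t) (uIcc 0 (r+1)) :=
    continuousOn_primitive_interval
      ((hc.mono (uIcc_subset_Ici' le_rfl (by linarith))).integrableOn_compact isCompact_uIcc)
  have h2 : uIcc (0:ℝ) (r+1) ∈ nhdsWithin r (Ici 0) := by
    rw [uIcc_of_le (by linarith)]
    exact mem_nhdsWithin.2 ⟨Iio (r+1), isOpen_Iio, by simp [lt_add_one r],
      fun x hx => ⟨hx.2, le_of_lt hx.1⟩⟩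
  exact (h1 r (by rw [uIcc_of_le (by linarith)]; exact ⟨hr0, by linarith⟩)).mono_of_mem_nhdsWithin h2


private lemma helper_quot_nonneg {c : ℝ → ℝ} (hc0 : ∀ s ∈ Ici (0:ℝ), 0 ≤ c s) (n : ℕ)
    {t : ℝ} (ht : 0 ≤ t) : 0 ≤ (∫ s in (0:ℝ)..t, s ^ n * c s) / t ^ n :=
  div_nonneg (intervalIntegral.integral_nonneg ht
    (fun s hs => mul_nonneg (pow_nonneg hs.1 n) (hc0 s hs.1))) (pow_nonneg ht n)

private lemma helper_quot_le {c : ℝ → ℝ} (hc : ContinuousOn c (Ici 0))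
    (hc0 : ∀ s ∈ Ici (0:ℝ), 0 ≤ c s) {n : ℕ} (hn : n ≠ 0) {b M : ℝ}
    (hM : ∀ s ∈ Icc (0:ℝ) b, c s ≤ M) {t : ℝ} (ht : t ∈ Icc (0:ℝ) b) :
    (∫ s in (0:ℝ)..t, s ^ n * c s) / t ^ n ≤ t * M := by
  rcases eq_or_lt_of_le ht.1 with h0 | h0
  · simp [← h0, zero_pow hn]
  · have hMnn : 0 ≤ M := le_trans (hc0 t (le_of_lt h0)) (hM t ht)
    have hint : IntervalIntegrable (fun s => s ^ n * c s) MeasureTheory.volume 0 t :=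
      helper_intInt (((continuous_pow n).continuousOn).mul hc) le_rfl h0.le
    have hmono : (∫ s in (0:ℝ)..t, s ^ n * c s) ≤ ∫ _s in (0:ℝ)..t, t ^ n * M := by
      apply intervalIntegral.integral_mono_on h0.le hint intervalIntegrable_const
      intro s hs
      exact mul_le_mul (pow_le_pow_left₀ hs.1 hs.2 n) (hM s ⟨hs.1, hs.2.trans ht.2⟩)
        (hc0 s hs.1) (pow_nonneg ht.1 n)
    have : (∫ _s in (0:ℝ)..t, t ^ n * M) = t * (t ^ n * M) := by
      simp [intervalIntegral.integral_const]; ring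
    rw [this] at hmono
    rw [div_le_iff₀ (pow_pos h0 n)]
    calc (∫ s in (0:ℝ)..t, s ^ n * c s) ≤ t * (t ^ n * M) := hmono
      _ = t * M * t ^ n := by ring

private lemma helper_quotCont {c : ℝ → ℝ} (hc : ContinuousOn c (Ici 0))
    (hc0 : ∀ s ∈ Ici (0:ℝ), 0 ≤ c s) {n : ℕ} (hn : n ≠ 0) :
    ContinuousOn (fun t => (∫ s in (0:ℝ)..t, s ^ n * c s) / t ^ n) (Ici 0) := by
  have hmul : ContinuousOn (fun s => s ^ n * c s) (Ici 0) :=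
    ((continuous_pow n).continuousOn).mul hc
  intro r hr
  rcases eq_or_lt_of_le (show (0:ℝ) ≤ r from hr) with h0 | h0
  · subst h0
    obtain ⟨M, hM⟩ := (isCompact_Icc (a := (0:ℝ)) (b := 1)).exists_bound_of_continuousOn
      (hc.mono (fun x hx => hx.1))
    have hM' : ∀ s ∈ Icc (0:ℝ) 1, c s ≤ M := fun s hs =>
      le_trans (le_abs_self _) (hM s hs)
    have hval : (∫ s in (0:ℝ)..(0:ℝ), s ^ n * c s) / (0:ℝ) ^ n = 0 := by
      simp [zero_pow hn]
    unfold ContinuousWithinAt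
    simp only []
    rw [hval]
    apply squeeze_zero'
    · exact eventually_nhdsWithin_of_forall
        (fun t ht => helper_quot_nonneg hc0 n ht)
    · filter_upwards [Icc_mem_nhdsGE_of_mem (by norm_num : (0:ℝ) ∈ Ico (0:ℝ) 1)] with t ht
      exact helper_quot_le hc hc0 hn hM' ht
    · have : Tendsto (fun t : ℝ => t * M) (nhds 0) (nhds 0) := by
        simpa using ((continuous_mul_right M).tendsto (0:ℝ))
      exact this.mono_left nhdsWithin_le_nhds
  · exact ContinuousWithinAt.div ((helper_primCont hmul) r hr)
      ((continuous_pow n).continuousAt.continuousWithinAt) (ne_of_gt (pow_pos h0 n))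

set_option maxHeartbeats 1000000 in
theorem stmt10
    (N d : ℕ) (hN : 3 ≤ N) (hd : 1 ≤ d)
    (f : Fin d → (Fin d → ℝ) → ℝ)
    -- (C1)
    (hf_nonneg : ∀ j v, (∀ i, 0 ≤ v i) → 0 ≤ f j v)
    (hC1 : ∀ j, ContDiffOn ℝ 1 (f j) {v : Fin d → ℝ | ∀ i, 0 ≤ v i})
    (hf0 : ∀ j, f j (fun _ => 0) = 0)
    (hfpos : ∀ j v, (∀ i, 0 ≤ v i) → (∃ i, 0 < v i) → 0 < f j v)
    -- (C2)
    (hC2 : ∀ j v w, (∀ i, 0 ≤ v i) → (∀ i, v i ≤ w i) → f j v ≤ f j w)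
    -- (C3)
    (hC3 : ¬ IntegrableOn
      (fun s : ℝ => (∫ t in (0:ℝ)..s, ∑ i, f i (fun _ => t)) ^ (-(1/2) : ℝ)) (Ioi 1))
    -- continuous nonnegative coefficients φ₁,…,φ_d
    (φ : Fin d → ℝ → ℝ)
    (hφ_cont : ∀ i, ContinuousOn (φ i) (Ici 0))
    (hφ_nonneg : ∀ i, ∀ t ≥ (0:ℝ), 0 ≤ φ i t)
    -- R > 0 and φᵢᴿ = max {φᵢ(r) : 0 ≤ r ≤ R}
    (R : ℝ) (hR : 0 < R)
    (φR : Fin d → ℝ)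
    (hφR : ∀ i, IsGreatest (φ i '' Icc 0 R) (φR i))
    -- the successive approximations
    (w : ℕ → Fin d → ℝ → ℝ)
    (hw0 : ∀ i r, w 0 i r = 1 / (d : ℝ))
    (hwk : ∀ k i r, 0 ≤ r →
      w (k + 1) i r = 1 / (d : ℝ) +
        ∫ t in (0:ℝ)..r,
          (∫ s in (0:ℝ)..t, s ^ (N - 1) * (φ i s * f i (fun j => w k j s))) / t ^ (N - 1)) :
    -- conclusions
    (∀ k ≥ 1,
      ∫ t in (1:ℝ)..(∑ i, w k i R),
          (∫ s in (1:ℝ)..t, ∑ i, f i (fun _ => s)) ^ (-(1/2) : ℝ) ≤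
        R * Real.sqrt (2 * ∑ i, φR i)) ∧
    (∃ B₁ B₂ : ℝ, ∀ k ≥ 1,
      (∑ i, w k i R) ≤ B₁ ∧ deriv (fun ρ => ∑ i, w k i ρ) R ≤ B₂) := by
  classical
  have hd0 : 0 < d := hd
  have hdR : (0:ℝ) < d := by exact_mod_cast hd0
  haveI : Nonempty (Fin d) := ⟨⟨0, hd0⟩⟩
  have hNn : N - 1 ≠ 0 := by omega
  have hfc : ∀ j, ContinuousOn (f j) {v : Fin d → ℝ | ∀ i, 0 ≤ v i} :=
    fun j => (hC1 j).continuousOn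
  set g : ℝ → ℝ := fun t => ∑ i, f i (fun _ => t) with hgdef
  set G : ℝ → ℝ := fun x => ∫ t in (1:ℝ)..x, g t with hGdef
  set F : ℝ → ℝ := fun x => ∫ t in (0:ℝ)..x, g t with hFdef
  have hgc : ContinuousOn g (Ici 0) := by
    rw [hgdef]
    apply continuousOn_finset_sum
    intro i _
    exact (hfc i).comp (continuous_pi (fun _ => continuous_id)).continuousOn
      (fun t ht j => ht)
  have hgnn : ∀ t : ℝ, 0 ≤ t → 0 ≤ g t :=
    fun t ht => Finset.sum_nonneg (fun i _ => hf_nonneg i _ (fun _ => ht))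
  have hgpos : ∀ t : ℝ, 0 < t → 0 < g t := fun t ht =>
    Finset.sum_pos (fun i _ => hfpos i _ (fun _ => ht.le) ⟨⟨0, hd0⟩, ht⟩)
      Finset.univ_nonempty
  have hgmono : ∀ ⦃a b : ℝ⦄, 0 ≤ a → a ≤ b → g a ≤ g b :=
    fun a b ha hab => Finset.sum_le_sum
      (fun i _ => hC2 i _ _ (fun _ => ha) (fun _ => hab))
  have hfle_g : ∀ (i : Fin d) (t : ℝ), 0 ≤ t → f i (fun _ => t) ≤ g t := by
    intro i t ht
    rw [hgdef]
    exact Finset.single_le_sum (fun j _ => hf_nonneg j _ (fun _ => ht)) (Finset.mem_univ i)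
  -- L1 : continuity and lower bound of the iterates
  have L1 : ∀ m (i : Fin d), ContinuousOn (w m i) (Ici 0) ∧
      ∀ r : ℝ, 0 ≤ r → 1/(d:ℝ) ≤ w m i r := by
    intro m
    induction m with
    | zero =>
      intro i
      constructor
      · have : w 0 i = fun _ => 1/(d:ℝ) := funext (hw0 i)
        rw [this]; exact continuousOn_const
      · intro r _; rw [hw0]
    | succ m ih =>
      have hwmnn : ∀ (j : Fin d) (s : ℝ), 0 ≤ s → 0 ≤ w m j s :=
        fun j s hs => le_trans (by positivity) ((ih j).2 s hs)
      have hqc : ∀ i : Fin d,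
          ContinuousOn (fun s => φ i s * f i (fun j => w m j s)) (Ici 0) := by
        intro i
        apply (hφ_cont i).mul
        exact (hfc i).comp (continuousOn_pi.2 (fun j => (ih j).1))
          (fun s hs j => hwmnn j s hs)
      have hqnn : ∀ (i : Fin d), ∀ s ∈ Ici (0:ℝ), 0 ≤ φ i s * f i (fun j => w m j s) :=
        fun i s hs => mul_nonneg (hφ_nonneg i s hs) (hf_nonneg i _ (fun j => hwmnn j s hs))
      intro i
      constructor
      · have hcf : ContinuousOn (fun r => 1/(d:ℝ) +
            ∫ t in (0:ℝ)..r, (∫ s in (0:ℝ)..t, s ^ (N-1) *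
              (φ i s * f i (fun j => w m j s))) / t ^ (N-1)) (Ici 0) :=
          continuousOn_const.add (helper_primCont (helper_quotCont (hqc i) (hqnn i) hNn))
        exact hcf.congr (fun r hr => hwk m i r hr)
      · intro r hr
        rw [hwk m i r hr]
        have h0 : 0 ≤ ∫ t in (0:ℝ)..r, (∫ s in (0:ℝ)..t, s ^ (N-1) *
            (φ i s * f i (fun j => w m j s))) / t ^ (N-1) :=
          intervalIntegral.integral_nonneg hr
            (fun t ht => helper_quot_nonneg (hqnn i) _ ht.1)
        linarith
  have hwnn : ∀ m (j : Fin d) (s : ℝ), 0 ≤ s → 0 ≤ w m j s :=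
    fun m j s hs => le_trans (by positivity) ((L1 m j).2 s hs)
  -- basic continuity facts for level-m data
  have hqc : ∀ m (i : Fin d),
      ContinuousOn (fun s => φ i s * f i (fun j => w m j s)) (Ici 0) := by
    intro m i
    apply (hφ_cont i).mul
    exact (hfc i).comp (continuousOn_pi.2 (fun j => (L1 m j).1))
      (fun s hs j => hwnn m j s hs)
  have hqnn : ∀ m (i : Fin d), ∀ s ∈ Ici (0:ℝ), 0 ≤ φ i s * f i (fun j => w m j s) :=
    fun m i s hs => mul_nonneg (hφ_nonneg i s hs)
      (hf_nonneg i _ (fun j => hwnn m j s hs))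
  set hh : ℕ → Fin d → ℝ → ℝ := fun m i t =>
    (∫ s in (0:ℝ)..t, s ^ (N-1) * (φ i s * f i (fun j => w m j s))) / t ^ (N-1)
    with hhdef
  have hwk' : ∀ m (i : Fin d) (r : ℝ), 0 ≤ r →
      w (m+1) i r = 1/(d:ℝ) + ∫ t in (0:ℝ)..r, hh m i t := by
    intro m i r hr; rw [hwk m i r hr]
  have hhc : ∀ m (i : Fin d), ContinuousOn (hh m i) (Ici 0) := by
    intro m i; rw [hhdef]
    exact helper_quotCont (hqc m i) (hqnn m i) hNn
  have hhnn : ∀ m (i : Fin d) (t : ℝ), 0 ≤ t → 0 ≤ hh m i t := by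
    intro m i t ht; rw [hhdef]
    exact helper_quot_nonneg (hqnn m i) _ ht
  -- L2 : monotonicity in the iteration index
  have L2 : ∀ m (i : Fin d) (r : ℝ), 0 ≤ r → w m i r ≤ w (m+1) i r := by
    intro m
    induction m with
    | zero =>
      intro i r hr
      rw [hw0, hwk' 0 i r hr]
      have h0 : 0 ≤ ∫ t in (0:ℝ)..r, hh 0 i t :=
        intervalIntegral.integral_nonneg hr (fun t ht => hhnn 0 i t ht.1)
      linarith
    | succ m ih =>
      intro i r hr
      rw [hwk' m i r hr, hwk' (m+1) i r hr]
      have hmono : (∫ t in (0:ℝ)..r, hh m i t) ≤ ∫ t in (0:ℝ)..r, hh (m+1) i t := by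
        apply intervalIntegral.integral_mono_on hr
          (helper_intInt (hhc m i) le_rfl hr) (helper_intInt (hhc (m+1) i) le_rfl hr)
        intro t ht
        rw [hhdef]
        rcases eq_or_lt_of_le ht.1 with h0 | h0
        · simp [← h0, zero_pow hNn]
        · have hnum : (∫ s in (0:ℝ)..t, s ^ (N-1) * (φ i s * f i (fun j => w m j s))) ≤
              ∫ s in (0:ℝ)..t, s ^ (N-1) * (φ i s * f i (fun j => w (m+1) j s)) := by
            apply intervalIntegral.integral_mono_on h0.le
              (helper_intInt (((continuous_pow (N-1)).continuousOn).mul (hqc m i)) le_rfl h0.le)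
              (helper_intInt (((continuous_pow (N-1)).continuousOn).mul (hqc (m+1) i)) le_rfl h0.le)
            intro s hs
            have : f i (fun j => w m j s) ≤ f i (fun j => w (m+1) j s) :=
              hC2 i _ _ (fun j => hwnn m j s hs.1) (fun j => ih j s hs.1)
            have h1 : φ i s * f i (fun j => w m j s) ≤ φ i s * f i (fun j => w (m+1) j s) :=
              mul_le_mul_of_nonneg_left this (hφ_nonneg i s hs.1)
            exact mul_le_mul_of_nonneg_left h1 (pow_nonneg hs.1 _)
          exact (div_le_div_iff_of_pos_right (pow_pos h0 (N-1))).2 hnum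
      linarith
  -- summed quantities
  set Q : ℕ → ℝ → ℝ := fun m s => ∑ i, φ i s * f i (fun j => w m j s) with hQdef
  set A : ℕ → ℝ → ℝ := fun m t => ∫ s in (0:ℝ)..t, s ^ (N-1) * Q m s with hAdef
  set V : ℕ → ℝ → ℝ := fun m r => A m r / r ^ (N-1) with hVdef
  have hQc : ∀ m, ContinuousOn (Q m) (Ici 0) := by
    intro m; rw [hQdef]
    exact continuousOn_finset_sum _ (fun i _ => hqc m i)
  have hQnn : ∀ m, ∀ s ∈ Ici (0:ℝ), 0 ≤ Q m s := by
    intro m s hs; rw [hQdef]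
    exact Finset.sum_nonneg (fun i _ => hqnn m i s hs)
  have hsQc : ∀ m, ContinuousOn (fun s => s ^ (N-1) * Q m s) (Ici 0) :=
    fun m => ((continuous_pow (N-1)).continuousOn).mul (hQc m)
  have hVc : ∀ m, ContinuousOn (V m) (Ici 0) := by
    intro m; rw [hVdef, hAdef]
    exact helper_quotCont (hQc m) (hQnn m) hNn
  have hVnn : ∀ m (r : ℝ), 0 ≤ r → 0 ≤ V m r := by
    intro m r hr; rw [hVdef, hAdef]
    exact helper_quot_nonneg (hQnn m) _ hr
  have hAnn : ∀ m (t : ℝ), 0 ≤ t → 0 ≤ A m t := by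
    intro m t ht; rw [hAdef]
    exact intervalIntegral.integral_nonneg ht
      (fun s hs => mul_nonneg (pow_nonneg hs.1 _) (hQnn m s hs.1))
  have hAd : ∀ m (r : ℝ), 0 < r → HasDerivAt (A m) (r ^ (N-1) * Q m r) r := by
    intro m r hr; rw [hAdef]
    exact helper_primDeriv (hsQc m) le_rfl hr
  -- sum of the hh's is V
  have hsumhh : ∀ m (t : ℝ), 0 ≤ t → (∑ i, hh m i t) = V m t := by
    intro m t ht
    simp only [hhdef, hVdef, hAdef, hQdef]
    rw [← Finset.sum_div]
    congr 1
    rw [← intervalIntegral.integral_finset_sum]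
    · apply intervalIntegral.integral_congr
      intro s _
      simp [Finset.mul_sum]
    · intro i _
      exact helper_intInt (((continuous_pow (N-1)).continuousOn).mul (hqc m i)) le_rfl ht
  have hsum1 : (∑ _i : Fin d, 1/(d:ℝ)) = 1 := by
    rw [Finset.sum_const]
    simp [Finset.card_univ]
    field_simp
  -- formula for the sum W
  have hWform : ∀ m (r : ℝ), 0 ≤ r →
      (∑ i, w (m+1) i r) = 1 + ∫ t in (0:ℝ)..r, V m t := by
    intro m r hr
    have : (∑ i, w (m+1) i r) = ∑ i : Fin d, (1/(d:ℝ) + ∫ t in (0:ℝ)..r, hh m i t) :=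
      Finset.sum_congr rfl (fun i _ => hwk' m i r hr)
    rw [this, Finset.sum_add_distrib, hsum1,
        ← intervalIntegral.integral_finset_sum]
    · congr 1
      apply intervalIntegral.integral_congr
      intro t ht
      exact hsumhh m t ((uIcc_subset_Ici' le_rfl hr) ht)
    · intro i _
      exact helper_intInt (hhc m i) le_rfl hr
  have hWcont : ∀ k, ContinuousOn (fun r => ∑ i, w k i r) (Ici 0) :=
    fun k => continuousOn_finset_sum _ (fun i _ => (L1 k i).1)
  have hW1 : ∀ k (r : ℝ), 0 ≤ r → 1 ≤ ∑ i, w k i r := by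
    intro k r hr
    calc (1:ℝ) = ∑ _i : Fin d, 1/(d:ℝ) := hsum1.symm
      _ ≤ ∑ i, w k i r := Finset.sum_le_sum (fun i _ => (L1 k i).2 r hr)
  have hWderiv : ∀ m (r : ℝ), 0 < r →
      HasDerivAt (fun ρ => ∑ i, w (m+1) i ρ) (V m r) r := by
    intro m r hr
    have hev : (fun ρ => ∑ i, w (m+1) i ρ) =ᶠ[nhds r]
        (fun ρ => 1 + ∫ t in (0:ℝ)..ρ, V m t) := by
      filter_upwards [Ioi_mem_nhds hr] with ρ hρ
      exact hWform m ρ (le_of_lt hρ)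
    have hder : HasDerivAt (fun ρ => 1 + ∫ t in (0:ℝ)..ρ, V m t) (V m r) r :=
      (helper_primDeriv (hVc m) le_rfl hr).const_add 1
    exact hder.congr_of_eventuallyEq hev
  have hWmono : ∀ m (a b : ℝ), 0 ≤ a → a ≤ b →
      (∑ i, w (m+1) i a) ≤ ∑ i, w (m+1) i b := by
    intro m a b ha hab
    have := monotoneOn_of_deriv_nonneg (convex_Ici (0:ℝ)) (hWcont (m+1)) ?_ ?_
    · exact this ha (le_trans ha hab) hab
    · intro x hx
      rw [interior_Ici] at hx
      exact (hWderiv m x hx).differentiableAt.differentiableWithinAt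
    · intro x hx
      rw [interior_Ici] at hx
      rw [(hWderiv m x hx).deriv]
      exact hVnn m x hx.le
  -- Φ and the principal pointwise bound
  set Φ : ℝ := ∑ i, φR i with hΦdef
  have hφRnn : ∀ i, 0 ≤ φR i := by
    intro i
    obtain ⟨x, hx, hxe⟩ := (hφR i).1
    rw [← hxe]
    exact hφ_nonneg i x hx.1
  have hΦnn : 0 ≤ Φ := Finset.sum_nonneg (fun i _ => hφRnn i)
  have hQle : ∀ m (s : ℝ), s ∈ Icc (0:ℝ) R → Q m s ≤ Φ * g (∑ i, w (m+1) i s) := by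
    intro m s hs
    have hWs : ∀ j : Fin d, w m j s ≤ ∑ i, w (m+1) i s := fun j =>
      (L2 m j s hs.1).trans (Finset.single_le_sum
        (fun i _ => hwnn (m+1) i s hs.1) (Finset.mem_univ j))
    have hWsnn : (0:ℝ) ≤ ∑ i, w (m+1) i s :=
      le_trans zero_le_one (hW1 (m+1) s hs.1)
    rw [hQdef, hΦdef]
    calc (∑ i, φ i s * f i (fun j => w m j s))
        ≤ ∑ i, φR i * f i (fun _ => ∑ j, w (m+1) j s) := by
          apply Finset.sum_le_sum
          intro i _
          apply mul_le_mul ((hφR i).2 (mem_image_of_mem _ hs))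
            (hC2 i _ _ (fun j => hwnn m j s hs.1) hWs)
            (hf_nonneg i _ (fun j => hwnn m j s hs.1)) (hφRnn i)
      _ ≤ ∑ i, φR i * g (∑ j, w (m+1) j s) := by
          apply Finset.sum_le_sum
          intro i _
          exact mul_le_mul_of_nonneg_left (hfle_g i _ hWsnn) (hφRnn i)
      _ = (∑ i, φR i) * g (∑ j, w (m+1) j s) := by rw [Finset.sum_mul]
  -- facts about G
  have hGderiv : ∀ x : ℝ, 0 < x → HasDerivAt G (g x) x := by
    intro x hx; rw [hGdef]
    exact helper_primDeriv hgc zero_le_one hx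
  have hGnn : ∀ x : ℝ, 1 ≤ x → 0 ≤ G x := by
    intro x hx; rw [hGdef]
    exact intervalIntegral.integral_nonneg hx (fun t ht => hgnn t (le_trans zero_le_one ht.1))
  have hGlow : ∀ x : ℝ, 1 ≤ x → (x - 1) * g 1 ≤ G x := by
    intro x hx
    have : (∫ _t in (1:ℝ)..x, g 1) ≤ ∫ t in (1:ℝ)..x, g t := by
      apply intervalIntegral.integral_mono_on hx intervalIntegrable_const
        (helper_intInt hgc zero_le_one (le_trans zero_le_one hx))
      intro t ht
      exact hgmono zero_le_one ht.1
    rw [hGdef]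
    calc (x - 1) * g 1 = ∫ _t in (1:ℝ)..x, g 1 := by
          rw [intervalIntegral.integral_const]; simp
      _ ≤ ∫ t in (1:ℝ)..x, g t := this
  have hg1pos : 0 < g 1 := hgpos 1 zero_lt_one
  have hGpos : ∀ x : ℝ, 1 < x → 0 < G x := by
    intro x hx
    have := hGlow x hx.le
    nlinarith
  have hGadd : ∀ a b : ℝ, 1 ≤ a → a ≤ b → G b = G a + ∫ t in a..b, g t := by
    intro a b ha hab
    simp only [hGdef]
    rw [← intervalIntegral.integral_add_adjacent_intervals
      (helper_intInt hgc zero_le_one (le_trans zero_le_one ha))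
      (helper_intInt hgc (le_trans zero_le_one ha) (le_trans zero_le_one (ha.trans hab)))]
  have hGmono : ∀ a b : ℝ, 1 ≤ a → a ≤ b → G a ≤ G b := by
    intro a b ha hab
    rw [hGadd a b ha hab]
    have : 0 ≤ ∫ t in a..b, g t :=
      intervalIntegral.integral_nonneg hab
        (fun t ht => hgnn t (le_trans (le_trans zero_le_one ha) ht.1))
    linarith
  -- integrability of G ^ (-1/2) near 1
  have hGcont : ContinuousOn G (Ioi 0) :=
    fun x hx => ((hGderiv x hx).continuousAt).continuousWithinAt
  have hGrint : ∀ x : ℝ, 1 ≤ x →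
      IntervalIntegrable (fun t => G t ^ (-(1/2) : ℝ)) MeasureTheory.volume 1 x := by
    intro x hx
    have h0 : IntervalIntegrable (fun u : ℝ => u ^ (-(1/2) : ℝ))
        MeasureTheory.volume (0:ℝ) (x-1) := intervalIntegrable_rpow' (by norm_num)
    have h1 := (h0.comp_sub_right 1).const_mul ((g 1) ^ (-(1/2) : ℝ))
    have h1' : IntervalIntegrable (fun t : ℝ => (g 1) ^ (-(1/2) : ℝ) * (t - 1) ^ (-(1/2) : ℝ))
        MeasureTheory.volume 1 x := by
      have e1 : (0:ℝ) + 1 = 1 := by norm_num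
      have e2 : (x - 1) + 1 = x := by ring
      rwa [e1, e2] at h1
    apply h1'.mono_fun
    · have hcont : ContinuousOn (fun t => G t ^ (-(1/2) : ℝ)) (Ioc 1 x) := by
        intro t ht
        exact ((hGcont t (lt_trans zero_lt_one ht.1)).mono (fun y hy => lt_trans zero_lt_one hy.1)).rpow_const
          (Or.inl (ne_of_gt (hGpos t ht.1)))
      rw [uIoc_of_le hx]
      exact hcont.aestronglyMeasurable measurableSet_Ioc
    · rw [uIoc_of_le hx]
      refine (ae_restrict_iff' measurableSet_Ioc).2 (ae_of_all _ fun t ht => ?_)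
      have ht1 : 1 < t := ht.1
      have hGt : 0 < G t := hGpos t ht1
      have hlow : 0 < (t - 1) * g 1 := by nlinarith
      simp only [Real.norm_eq_abs]
      rw [abs_of_nonneg (Real.rpow_nonneg hGt.le _),
          abs_of_nonneg (mul_nonneg (Real.rpow_nonneg hg1pos.le _) (Real.rpow_nonneg (by linarith) _))]
      calc G t ^ (-(1/2) : ℝ) ≤ ((t - 1) * g 1) ^ (-(1/2) : ℝ) :=
            Real.rpow_le_rpow_of_nonpos hlow (hGlow t ht1.le) (by norm_num)
        _ = (t - 1) ^ (-(1/2) : ℝ) * (g 1) ^ (-(1/2) : ℝ) :=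
            Real.mul_rpow (by linarith) hg1pos.le
        _ = (g 1) ^ (-(1/2) : ℝ) * (t - 1) ^ (-(1/2) : ℝ) := mul_comm _ _
  -- the key per-level estimates
  have key : ∀ m : ℕ, (V m R) ^ 2 ≤ 2 * Φ * G (∑ i, w (m+1) i R) ∧
      (∫ t in (1:ℝ)..(∑ i, w (m+1) i R), G t ^ (-(1/2) : ℝ)) ≤ R * Real.sqrt (2 * Φ) := by
    intro m
    set W : ℝ → ℝ := fun r => ∑ i, w (m+1) i r with hWdef
    set M : ℝ := ∑ i, w (m+1) i R with hMdef
    have hWRM : W R = M := rfl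
    have hM1 : 1 ≤ M := hW1 (m+1) R hR.le
    have hWc : ContinuousOn W (Ici 0) := hWcont (m+1)
    have hWd : ∀ r : ℝ, 0 < r → HasDerivAt W (V m r) r := hWderiv m
    have hWm : ∀ a b : ℝ, 0 ≤ a → a ≤ b → W a ≤ W b := hWmono m
    have hW0 : W 0 = 1 := by
      simp only [hWdef]; rw [hWform m 0 le_rfl]; simp
    have hW1' : ∀ r : ℝ, 0 ≤ r → 1 ≤ W r := fun r hr => hW1 (m+1) r hr
    have hWle : ∀ r : ℝ, 0 ≤ r → r ≤ R → W r ≤ M := fun r h1 h2 => hWm r R h1 h2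
    have hgM : 0 ≤ g M := hgnn M (le_trans zero_le_one hM1)
    have hQleW : ∀ s : ℝ, s ∈ Icc (0:ℝ) R → Q m s ≤ Φ * g (W s) := hQle m
    have hQbd : ∀ s : ℝ, s ∈ Icc (0:ℝ) R → Q m s ≤ Φ * g M := by
      intro s hs
      refine (hQleW s hs).trans (mul_le_mul_of_nonneg_left
        (hgmono ?_ (hWle s hs.1 hs.2)) hΦnn)
      exact le_trans zero_le_one (hW1' s hs.1)
    -- derivative of V with an upper bound
    have hVd : ∀ r : ℝ, 0 < r → ∃ D, HasDerivAt (V m) D r ∧ D ≤ Q m r := by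
      intro r hr
      have hpow : HasDerivAt (fun x : ℝ => x ^ (N-1)) (((N-1:ℕ):ℝ) * r ^ (N-1-1)) r :=
        hasDerivAt_pow (N-1) r
      have hne : r ^ (N-1) ≠ 0 := ne_of_gt (pow_pos hr _)
      have hinv := hpow.inv hne
      have hprod := (hAd m r hr).mul hinv
      have h1 : r ^ (N-1) * Q m r * (r ^ (N-1))⁻¹ = Q m r := by field_simp
      refine ⟨Q m r + A m r * (-(((N-1:ℕ):ℝ) * r ^ (N-1-1)) / (r ^ (N-1)) ^ 2), ?_, ?_⟩
      · have heq : V m = fun x => A m x * (x ^ (N-1))⁻¹ := by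
          funext x; simp [hVdef, div_eq_mul_inv]
        rw [heq]
        convert hprod using 1
        all_goals first | rfl | rw [Pi.inv_apply, h1]
      ·
        have h2 : A m r * (-(((N-1:ℕ):ℝ) * r ^ (N-1-1)) / (r ^ (N-1)) ^ 2) ≤ 0 := by
          apply mul_nonpos_of_nonneg_of_nonpos (hAnn m r hr.le)
          apply div_nonpos_of_nonpos_of_nonneg _ (by positivity)
          simp only [neg_nonpos]
          positivity
        linarith
    -- the energy function ψ
    set ψ : ℝ → ℝ := fun r => 2 * Φ * G (W r) - (V m r) ^ 2 with hψdef
    have hψd : ∀ r : ℝ, r ∈ Ioc (0:ℝ) R → ∃ D, 0 ≤ D ∧ HasDerivAt ψ D r := by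
      intro r hr
      obtain ⟨D, hD, hDle⟩ := hVd r hr.1
      have hWpos : 0 < W r := lt_of_lt_of_le zero_lt_one (hW1' r hr.1.le)
      have hGW : HasDerivAt (fun x => G (W x)) (g (W r) * V m r) r :=
        (hGderiv (W r) hWpos).comp r (hWd r hr.1)
      have hψder : HasDerivAt ψ (2 * Φ * (g (W r) * V m r) - 2 * V m r * D) r := by
        have h1 := hGW.const_mul (2 * Φ)
        have h2 : HasDerivAt (fun x => (V m x) ^ 2) (2 * V m r * D) r := by
          have h3 := hD.pow 2
          convert h3 using 1 <;> norm_num <;> first | rfl | ring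
        simp only [hψdef]
        exact h1.sub h2
      refine ⟨_, ?_, hψder⟩
      have hQle' : Q m r ≤ Φ * g (W r) := hQleW r ⟨hr.1.le, hr.2⟩
      have hV0 : 0 ≤ V m r := hVnn m r hr.1.le
      have hmul : V m r * D ≤ V m r * (Φ * g (W r)) :=
        mul_le_mul_of_nonneg_left (hDle.trans hQle') hV0
      have hre : 2 * Φ * (g (W r) * V m r) - 2 * V m r * D
          = 2 * (V m r * (Φ * g (W r)) - V m r * D) := by ring
      rw [hre]
      linarith
    have hψmono : ∀ a r : ℝ, 0 < a → a ≤ r → r ≤ R → ψ a ≤ ψ r := by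
      intro a r ha har hrR
      rcases eq_or_lt_of_le har with rfl | h
      · exact le_rfl
      have hmem : ∀ x : ℝ, x ∈ Icc a r → x ∈ Ioc (0:ℝ) R :=
        fun x hx => ⟨lt_of_lt_of_le ha hx.1, hx.2.trans hrR⟩
      refine (monotoneOn_of_deriv_nonneg (convex_Icc a r) ?_ ?_ ?_)
        (left_mem_Icc.2 har) (right_mem_Icc.2 har) har
      · intro x hx
        exact ((hψd x (hmem x hx)).choose_spec.2).continuousAt.continuousWithinAt
      · intro x hx
        rw [interior_Icc] at hx
        exact ((hψd x (hmem x (Ioo_subset_Icc_self hx))).choose_spec.2).differentiableAt.differentiableWithinAt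
      · intro x hx
        rw [interior_Icc] at hx
        obtain ⟨D, hD0, hDd⟩ := hψd x (hmem x (Ioo_subset_Icc_self hx))
        rw [hDd.deriv]
        exact hD0
    -- limits at 0⁺
    have hVten : Tendsto (V m) (nhdsWithin 0 (Ioi 0)) (nhds 0) := by
      apply squeeze_zero'
      · filter_upwards [self_mem_nhdsWithin] with t ht
        exact hVnn m t (le_of_lt ht)
      · filter_upwards [Ioc_mem_nhdsGT_of_mem (left_mem_Ico.2 hR)] with t ht
        have hbd : (∫ s in (0:ℝ)..t, s ^ (N-1) * Q m s) / t ^ (N-1) ≤ t * (Φ * g M) :=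
          helper_quot_le (hQc m) (hQnn m) hNn hQbd ⟨ht.1.le, ht.2⟩
        simpa [hVdef, hAdef] using hbd
      · have hT : Tendsto (fun t : ℝ => t * (Φ * g M)) (nhds 0) (nhds 0) := by
          simpa using (continuous_mul_right (Φ * g M)).tendsto (0:ℝ)
        exact hT.mono_left nhdsWithin_le_nhds
    have hWten : Tendsto W (nhdsWithin 0 (Ioi 0)) (nhds 1) := by
      have hcw : Tendsto W (nhdsWithin 0 (Ici 0)) (nhds (W 0)) := hWc 0 Set.self_mem_Ici
      rw [hW0] at hcw
      exact hcw.mono_left (nhdsWithin_mono 0 Ioi_subset_Ici_self)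
    have hGWten : Tendsto (fun r => G (W r)) (nhdsWithin 0 (Ioi 0)) (nhds 0) := by
      apply squeeze_zero'
      · filter_upwards [self_mem_nhdsWithin] with t ht
        exact hGnn (W t) (hW1' t ht.le)
      · filter_upwards [Ioc_mem_nhdsGT_of_mem (left_mem_Ico.2 hR)] with t ht
        have h1 : 1 ≤ W t := hW1' t ht.1.le
        have h2 : W t ≤ M := hWle t ht.1.le ht.2
        calc G (W t) = ∫ u in (1:ℝ)..(W t), g u := by rw [hGdef]
          _ ≤ ∫ _u in (1:ℝ)..(W t), g M := by
              apply intervalIntegral.integral_mono_on h1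
                (helper_intInt hgc zero_le_one (by linarith)) intervalIntegrable_const
              intro u hu
              exact hgmono (le_trans zero_le_one hu.1) (hu.2.trans h2)
          _ = (W t - 1) * g M := by rw [intervalIntegral.integral_const]; simp
      · have h₁ : Tendsto (fun r => W r - 1) (nhdsWithin 0 (Ioi 0)) (nhds 0) := by
          simpa using hWten.sub (tendsto_const_nhds (x := (1:ℝ)))
        have h₂ : Tendsto (fun r : ℝ => (W r - 1) * g M) (nhdsWithin 0 (Ioi 0)) (nhds 0) := by
          simpa using h₁.mul (tendsto_const_nhds (x := g M))
        exact h₂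
    have hψten : Tendsto ψ (nhdsWithin 0 (Ioi 0)) (nhds 0) := by
      have h1 : Tendsto (fun r => 2 * Φ * G (W r)) (nhdsWithin 0 (Ioi 0)) (nhds 0) := by
        simpa using hGWten.const_mul (2*Φ)
      have h2 : Tendsto (fun r => (V m r)^2) (nhdsWithin 0 (Ioi 0)) (nhds 0) := by
        simpa using hVten.pow 2
      have h3 := h1.sub h2
      rw [sub_zero] at h3
      exact h3
    have hψnn : ∀ r : ℝ, r ∈ Ioc (0:ℝ) R → 0 ≤ ψ r := by
      intro r hr
      apply le_of_tendsto hψten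
      filter_upwards [Ioc_mem_nhdsGT_of_mem (left_mem_Ico.2 hr.1)] with δ hδ
      exact hψmono δ r hδ.1 hδ.2 hr.2
    have key1 : ∀ r : ℝ, r ∈ Ioc (0:ℝ) R → (V m r)^2 ≤ 2 * Φ * G (W r) := by
      intro r hr
      have h := hψnn r hr
      simp only [hψdef] at h
      linarith
    constructor
    · have h := key1 R ⟨hR, le_rfl⟩
      rwa [hWRM] at h
    · rcases eq_or_lt_of_le hM1 with hM1' | hM1'
      · rw [← hM1']
        simp only [intervalIntegral.integral_same]
        positivity
      · have keyV : ∀ x : ℝ, x ∈ Ioc (0:ℝ) R →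
            V m x ≤ Real.sqrt (2*Φ) * Real.sqrt (G (W x)) := by
          intro x hx
          have h2 := key1 x hx
          calc V m x = Real.sqrt ((V m x)^2) := (Real.sqrt_sq (hVnn m x hx.1.le)).symm
            _ ≤ Real.sqrt (2*Φ*G (W x)) := Real.sqrt_le_sqrt h2
            _ = Real.sqrt (2*Φ) * Real.sqrt (G (W x)) := Real.sqrt_mul (by positivity) _
        have hEps : ∀ ε : ℝ, 0 < ε → ε < M - 1 →
            (∫ t in (1:ℝ)..M, G t ^ (-(1/2) : ℝ)) ≤
              R * Real.sqrt (2 * Φ) + ∫ t in (1:ℝ)..(1+ε), G t ^ (-(1/2) : ℝ) := by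
          intro ε hε hεM
          obtain ⟨r₁, hr₁mem, hr₁⟩ : ∃ r₁ ∈ Icc (0:ℝ) R, W r₁ = 1 + ε := by
            have hsub := intermediate_value_Icc hR.le
              (hWc.mono (fun x (hx : x ∈ Icc (0:ℝ) R) => hx.1))
            have hmem : (1:ℝ) + ε ∈ Icc (W 0) (W R) := by
              rw [hW0, hWRM]
              constructor <;> linarith
            obtain ⟨r₁, h1, h2⟩ := hsub hmem
            exact ⟨r₁, h1, h2⟩
          have hr₁pos : 0 < r₁ := by
            rcases eq_or_lt_of_le hr₁mem.1 with h0 | h0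
            · exfalso
              rw [← h0, hW0] at hr₁
              linarith
            · exact h0
          have hr₁R : r₁ ≤ R := hr₁mem.2
          have huIcc : Set.uIcc r₁ R = Icc r₁ R := uIcc_of_le hr₁R
          have hsubIci : Set.uIcc r₁ R ⊆ Ici (0:ℝ) := uIcc_subset_Ici' hr₁pos.le hR.le
          have himg : ∀ x ∈ Icc r₁ R, 1 + ε ≤ W x ∧ W x ≤ M := by
            intro x hx
            exact ⟨hr₁ ▸ hWm r₁ x hr₁pos.le hx.1, hWle x (hr₁pos.le.trans hx.1) hx.2⟩
          have hgcont : ContinuousOn (fun t => G t ^ (-(1/2) : ℝ)) (W '' Set.uIcc r₁ R) := by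
            intro y hy
            rw [huIcc] at hy
            obtain ⟨x, hx, rfl⟩ := hy
            have h1 := (himg x hx).1
            exact ((hGderiv (W x) (by linarith)).continuousAt.continuousWithinAt).rpow_const
              (Or.inl (ne_of_gt (hGpos _ (by linarith))))
          have hsub : (∫ x in r₁..R, ((fun t => G t ^ (-(1/2):ℝ)) ∘ W) x * V m x)
              = ∫ t in (1+ε)..M, G t ^ (-(1/2) : ℝ) := by
            rw [← hr₁, ← hWRM]
            apply intervalIntegral.integral_comp_mul_deriv''
            · exact hWc.mono hsubIci
            · intro x hx
              rw [min_eq_left hr₁R, max_eq_right hr₁R] at hx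
              exact (hWd x (lt_trans hr₁pos hx.1)).hasDerivWithinAt
            · exact (hVc m).mono hsubIci
            · exact hgcont
          have hptwise : ∀ x ∈ Icc r₁ R,
              ((fun t => G t ^ (-(1/2):ℝ)) ∘ W) x * V m x ≤ Real.sqrt (2*Φ) := by
            intro x hx
            have h1 := (himg x hx).1
            have hGpos' : 0 < G (W x) := hGpos _ (by linarith)
            have hVle := keyV x ⟨lt_of_lt_of_le hr₁pos hx.1, hx.2⟩
            have hrpnn : 0 ≤ G (W x) ^ (-(1/2) : ℝ) := Real.rpow_nonneg (hGnn _ (by linarith)) _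
            calc G (W x) ^ (-(1/2):ℝ) * V m x
                ≤ G (W x) ^ (-(1/2):ℝ) * (Real.sqrt (2*Φ) * Real.sqrt (G (W x))) :=
                  mul_le_mul_of_nonneg_left hVle hrpnn
              _ = Real.sqrt (2*Φ) * (Real.sqrt (G (W x)) * G (W x) ^ (-(1/2):ℝ)) := by ring
              _ = Real.sqrt (2*Φ) := by
                  rw [Real.sqrt_eq_rpow (G (W x)), ← Real.rpow_add hGpos',
                    show (1/2 + -(1/2) : ℝ) = 0 by norm_num, Real.rpow_zero, mul_one]
          have hContInt : ContinuousOn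
              (fun x => ((fun t => G t ^ (-(1/2):ℝ)) ∘ W) x * V m x) (Set.uIcc r₁ R) :=
            (hgcont.comp (hWc.mono hsubIci) (mapsTo_image W _)).mul ((hVc m).mono hsubIci)
          have hle2 : (∫ x in r₁..R, ((fun t => G t ^ (-(1/2):ℝ)) ∘ W) x * V m x)
              ≤ ∫ _x in r₁..R, Real.sqrt (2*Φ) := by
            apply intervalIntegral.integral_mono_on hr₁R hContInt.intervalIntegrable
              intervalIntegrable_const
            intro x hx
            exact hptwise x hx
          have hconst : (∫ _x in r₁..R, Real.sqrt (2*Φ)) = (R - r₁) * Real.sqrt (2*Φ) := by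
            rw [intervalIntegral.integral_const]; simp
          have hsplit := intervalIntegral.integral_add_adjacent_intervals
            (hGrint (1+ε) (by linarith))
            ((hGrint M hM1).mono_set (by
              rw [uIcc_of_le hM1, uIcc_of_le (by linarith : (1:ℝ)+ε ≤ M)]
              exact Icc_subset_Icc (by linarith) le_rfl))
          have htail : (∫ t in (1+ε)..M, G t ^ (-(1/2):ℝ)) ≤ R * Real.sqrt (2*Φ) := by
            rw [← hsub]
            have hRr : (R - r₁) * Real.sqrt (2*Φ) ≤ R * Real.sqrt (2*Φ) :=
              mul_le_mul_of_nonneg_right (by linarith) (Real.sqrt_nonneg _)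
            calc (∫ x in r₁..R, ((fun t => G t ^ (-(1/2):ℝ)) ∘ W) x * V m x)
                ≤ ∫ _x in r₁..R, Real.sqrt (2*Φ) := hle2
              _ = (R - r₁) * Real.sqrt (2*Φ) := hconst
              _ ≤ R * Real.sqrt (2*Φ) := hRr
          linarith [hsplit]
        have hsmall : ∀ ε : ℝ, 0 < ε →
            (∫ t in (1:ℝ)..(1+ε), G t ^ (-(1/2):ℝ))
              ≤ (g 1) ^ (-(1/2):ℝ) * (2 * Real.sqrt ε) := by
          intro ε hε
          have hmajint : IntervalIntegrable
              (fun t : ℝ => (t-1) ^ (-(1/2):ℝ) * (g 1) ^ (-(1/2):ℝ))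
              MeasureTheory.volume 1 (1+ε) := by
            have h0 : IntervalIntegrable (fun u : ℝ => u ^ (-(1/2):ℝ))
                MeasureTheory.volume 0 ε := intervalIntegrable_rpow' (by norm_num)
            have h1 := (h0.comp_sub_right 1).mul_const ((g 1) ^ (-(1/2):ℝ))
            have e1 : (0:ℝ) + 1 = 1 := by norm_num
            have e2 : ε + 1 = 1 + ε := by ring
            rwa [e1, e2] at h1
          have hmono2 : (∫ t in (1:ℝ)..(1+ε), G t ^ (-(1/2):ℝ))
              ≤ ∫ t in (1:ℝ)..(1+ε), (t-1) ^ (-(1/2):ℝ) * (g 1) ^ (-(1/2):ℝ) := by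
            apply intervalIntegral.integral_mono_on (by linarith)
              (hGrint (1+ε) (by linarith)) hmajint
            intro t ht
            rcases eq_or_lt_of_le ht.1 with h1 | h1
            · have hG1 : G 1 = 0 := by rw [hGdef]; simp
              rw [← h1, hG1, Real.zero_rpow (by norm_num), sub_self,
                Real.zero_rpow (by norm_num), zero_mul]
            · have hlow : 0 < (t - 1) * g 1 := by nlinarith
              calc G t ^ (-(1/2):ℝ) ≤ ((t-1) * g 1) ^ (-(1/2):ℝ) :=
                    Real.rpow_le_rpow_of_nonpos hlow (hGlow t h1.le) (by norm_num)
                _ = (t-1) ^ (-(1/2):ℝ) * (g 1) ^ (-(1/2):ℝ) :=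
                    Real.mul_rpow (by linarith) hg1pos.le
          have hcomp : (∫ t in (1:ℝ)..(1+ε), (t-1) ^ (-(1/2):ℝ) * (g 1) ^ (-(1/2):ℝ))
              = (∫ u in (0:ℝ)..ε, u ^ (-(1/2):ℝ)) * (g 1) ^ (-(1/2):ℝ) := by
            rw [intervalIntegral.integral_mul_const]
            congr 1
            have hcs := intervalIntegral.integral_comp_sub_right
              (a := (1:ℝ)) (b := 1+ε) (fun u => u ^ (-(1/2):ℝ)) 1
            simpa using hcs
          have hval : (∫ u in (0:ℝ)..ε, u ^ (-(1/2):ℝ)) = 2 * Real.sqrt ε := by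
            rw [integral_rpow (Or.inl (by norm_num : (-1:ℝ) < -(1/2)))]
            have he : (-(1/2) : ℝ) + 1 = 1/2 := by norm_num
            rw [he, Real.zero_rpow (by norm_num), Real.sqrt_eq_rpow]
            ring
          calc (∫ t in (1:ℝ)..(1+ε), G t ^ (-(1/2):ℝ))
              ≤ ∫ t in (1:ℝ)..(1+ε), (t-1) ^ (-(1/2):ℝ) * (g 1) ^ (-(1/2):ℝ) := hmono2
            _ = (∫ u in (0:ℝ)..ε, u ^ (-(1/2):ℝ)) * (g 1) ^ (-(1/2):ℝ) := hcomp
            _ = (g 1) ^ (-(1/2):ℝ) * (2 * Real.sqrt ε) := by rw [hval]; ring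
        have hTen : Tendsto
            (fun ε : ℝ => R * Real.sqrt (2*Φ) + (g 1) ^ (-(1/2):ℝ) * (2 * Real.sqrt ε))
            (nhdsWithin 0 (Ioi 0)) (nhds (R * Real.sqrt (2 * Φ))) := by
          have hcont : Continuous
              (fun ε : ℝ => R * Real.sqrt (2*Φ) + (g 1) ^ (-(1/2):ℝ) * (2 * Real.sqrt ε)) :=
            continuous_const.add (continuous_const.mul (continuous_const.mul Real.continuous_sqrt))
          have h2 := hcont.tendsto 0
          simp only [Real.sqrt_zero, mul_zero, add_zero] at h2
          exact h2.mono_left nhdsWithin_le_nhds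
        apply ge_of_tendsto hTen
        filter_upwards [Ioo_mem_nhdsGT_of_mem
          (left_mem_Ico.2 (by linarith : (0:ℝ) < M - 1))] with ε hε
        exact (hEps ε hε.1 hε.2).trans (by linarith [hsmall ε hε.1])
  -- existence of x₀ with large integral, from (C3)
  have hFG : ∀ s : ℝ, 1 ≤ s → G s ≤ F s := by
    intro s hs
    have hsplit : F 1 + G s = F s := by
      simp only [hFdef, hGdef]
      rw [intervalIntegral.integral_add_adjacent_intervals
        (helper_intInt hgc le_rfl zero_le_one)
        (helper_intInt hgc zero_le_one (zero_le_one.trans hs))]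
    have hF1 : 0 ≤ F 1 := by
      simp only [hFdef]
      exact intervalIntegral.integral_nonneg zero_le_one (fun t ht => hgnn t ht.1)
    linarith
  have hx₀ : ∃ x₀ : ℝ, 1 ≤ x₀ ∧
      R * Real.sqrt (2*Φ) < ∫ t in (1:ℝ)..x₀, G t ^ (-(1/2):ℝ) := by
    by_contra hcon
    push_neg at hcon
    have hInt : IntegrableOn (fun t : ℝ => G t ^ (-(1/2):ℝ)) (Ioi 1) := by
      apply MeasureTheory.integrableOn_Ioi_of_intervalIntegral_norm_bounded
        (R * Real.sqrt (2*Φ)) 1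
        (fun n : ℕ => ((hGrint (1 + (n:ℝ)) (by simp : (1:ℝ) ≤ 1 + (n:ℝ))).1))
        (tendsto_atTop_add_const_left atTop 1 tendsto_natCast_atTop_atTop)
      apply Filter.Eventually.of_forall
      intro n
      have hnn : (1:ℝ) ≤ 1 + (n:ℝ) := by simp
      have hcongr : (∫ x in (1:ℝ)..(1+(n:ℝ)), ‖G x ^ (-(1/2):ℝ)‖)
          = ∫ x in (1:ℝ)..(1+(n:ℝ)), G x ^ (-(1/2):ℝ) := by
        apply intervalIntegral.integral_congr
        intro t ht
        rw [uIcc_of_le hnn] at ht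
        exact Real.norm_of_nonneg (Real.rpow_nonneg (hGnn t ht.1) _)
      rw [hcongr]
      exact hcon _ hnn
    apply hC3
    have hFcont : ∀ s : ℝ, 0 < s → ContinuousAt F s := by
      intro s hs
      have hder := helper_primDeriv hgc le_rfl hs
      rw [hFdef]
      exact hder.continuousAt
    have hmeas : AEStronglyMeasurable (fun s : ℝ => F s ^ (-(1/2):ℝ))
        (MeasureTheory.volume.restrict (Ioi 1)) := by
      have hcont : ContinuousOn (fun s : ℝ => F s ^ (-(1/2):ℝ)) (Ioi 1) := by
        intro s hs
        have hFs : 0 < F s := lt_of_lt_of_le (hGpos s hs) (hFG s (le_of_lt hs))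
        exact ((hFcont s (lt_trans zero_lt_one hs)).continuousWithinAt).rpow_const
          (Or.inl (ne_of_gt hFs))
      exact hcont.aestronglyMeasurable measurableSet_Ioi
    have hIntF : IntegrableOn (fun s : ℝ => F s ^ (-(1/2):ℝ)) (Ioi 1) := by
      apply MeasureTheory.Integrable.mono hInt hmeas
      refine (ae_restrict_iff' measurableSet_Ioi).2 (ae_of_all _ fun s hs => ?_)
      have h1 : (1:ℝ) < s := hs
      have hGs : 0 < G s := hGpos s h1
      have hFs : 0 < F s := lt_of_lt_of_le hGs (hFG s h1.le)
      simp only [Real.norm_eq_abs]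
      rw [abs_of_nonneg (Real.rpow_nonneg hFs.le _), abs_of_nonneg (Real.rpow_nonneg hGs.le _)]
      exact Real.rpow_le_rpow_of_nonpos hGs (hFG s h1.le) (by norm_num)
    exact hIntF
  obtain ⟨x₀, hx₀1, hx₀⟩ := hx₀
  constructor
  · -- first conclusion
    intro k hk
    obtain ⟨m, rfl⟩ : ∃ m, k = m + 1 := ⟨k - 1, (Nat.succ_pred_eq_of_pos hk).symm⟩
    exact (key m).2
  · -- second conclusion
    refine ⟨x₀, Real.sqrt (2*Φ) * Real.sqrt (G x₀), ?_⟩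
    intro k hk
    obtain ⟨m, rfl⟩ : ∃ m, k = m + 1 := ⟨k - 1, (Nat.succ_pred_eq_of_pos hk).symm⟩
    have hM1 : 1 ≤ ∑ i, w (m+1) i R := hW1 (m+1) R hR.le
    have hMle : (∑ i, w (m+1) i R) ≤ x₀ := by
      by_contra hgt
      push_neg at hgt
      have hsplit := intervalIntegral.integral_add_adjacent_intervals
        (hGrint x₀ hx₀1) ((hGrint _ hM1).mono_set (by
          rw [uIcc_of_le hgt.le, uIcc_of_le hM1]
          exact Icc_subset_Icc hx₀1 le_rfl))
      have htail : 0 ≤ ∫ t in x₀..(∑ i, w (m+1) i R), G t ^ (-(1/2):ℝ) :=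
        intervalIntegral.integral_nonneg hgt.le
          (fun t ht => Real.rpow_nonneg (hGnn t (le_trans hx₀1 ht.1)) _)
      have hkey := (key m).2
      linarith
    refine ⟨hMle, ?_⟩
    have hder := hWderiv m R hR
    rw [hder.deriv]
    have h1 := (key m).1
    have hV0 : 0 ≤ V m R := hVnn m R hR.le
    have h2 : V m R ≤ Real.sqrt (2*Φ) * Real.sqrt (G (∑ i, w (m+1) i R)) := by
      calc V m R = Real.sqrt ((V m R)^2) := (Real.sqrt_sq hV0).symm
        _ ≤ Real.sqrt (2*Φ*G (∑ i, w (m+1) i R)) := Real.sqrt_le_sqrt h1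
        _ = _ := Real.sqrt_mul (by positivity) _
    have h3 : Real.sqrt (G (∑ i, w (m+1) i R)) ≤ Real.sqrt (G x₀) :=
      Real.sqrt_le_sqrt (hGmono _ _ hM1 hMle)
    exact h2.trans (mul_le_mul_of_nonneg_left h3 (Real.sqrt_nonneg _))
end

section
/- Suppose (C1)–(C2) hold, φ_1,…,φ_d : [0,∞) → [0,∞) are continuous, and r ↦ r^{2N-2} Σ_{i=1}^d φ_i(r) is nondecreasing on [R,∞) for some R > 0. Let {w_i^k} be the successive approximations defined by w_i^0 ≡ 1/d and w_i^k(r) = 1/d + ∫₀^r t^{1-N} ∫₀^t s^{N-1} φ_i(s) f_i(w_1^{k-1}(s),…,w_d^{k-1}(s)) ds dt, and set C = [R^{N-1} (Σ_{i=1}^d w_i^k)'(R)]². Then for every k ≥ 1 and every r ≥ R one has (Σ_{i=1}^d w_i^k)'(r) ≤ √C · r^{1-N} + √(2 Σ_{i=1}^d φ_i(r)) · [F(Σ_{i=1}^d w_i^k(r))]^{1/2}, where F(s) = ∫₀^s Σ_{i=1}^d f_i(t,…,t) dt. -/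
open MeasureTheory Set Filter intervalIntegral

lemma aux_intInt {h : ℝ → ℝ} (hc : ContinuousOn h (Ici 0)) {a b : ℝ} (ha : 0 ≤ a) (hb : 0 ≤ b) :
    IntervalIntegrable h volume a b := by
  apply (hc.mono ?_).intervalIntegrable
  intro x hx
  exact le_trans (le_min ha hb) hx.1

lemma aux_primitive_cont {h : ℝ → ℝ} (hc : ContinuousOn h (Ici 0)) :
    ContinuousOn (fun r => ∫ s in (0:ℝ)..r, h s) (Ici 0) := by
  intro x hx
  have hx0 : (0:ℝ) ≤ x := hx
  have hint : IntegrableOn h (uIcc 0 (x+1)) volume := by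
    rw [uIcc_of_le (by linarith)]
    exact (hc.mono Icc_subset_Ici_self).integrableOn_Icc
  have h1 := intervalIntegral.continuousOn_primitive_interval hint
  rw [uIcc_of_le (by linarith)] at h1
  have h2 := h1 x ⟨hx0, by linarith⟩
  refine h2.mono_of_mem_nhdsWithin ?_
  rw [← Set.Ici_inter_Iic]
  exact inter_mem self_mem_nhdsWithin
    (mem_nhdsWithin_of_mem_nhds (Iic_mem_nhds (by linarith)))

lemma aux_primitive_deriv {h : ℝ → ℝ} (hc : ContinuousOn h (Ici 0)) {x : ℝ} (hx : 0 < x) :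
    HasDerivAt (fun r => ∫ s in (0:ℝ)..r, h s) (h x) x :=
  intervalIntegral.integral_hasDerivAt_right (aux_intInt hc le_rfl hx.le)
    (ContinuousOn.stronglyMeasurableAtFilter isOpen_Ioi (hc.mono Ioi_subset_Ici_self) x hx)
    (hc.continuousAt (Ici_mem_nhds hx))

lemma aux_sqrt_add {a b : ℝ} (ha : 0 ≤ a) (hb : 0 ≤ b) :
    Real.sqrt (a + b) ≤ Real.sqrt a + Real.sqrt b := by
  have h1 : a + b ≤ (Real.sqrt a + Real.sqrt b) ^ 2 := by
    nlinarith [Real.sq_sqrt ha, Real.sq_sqrt hb, Real.sqrt_nonneg a, Real.sqrt_nonneg b]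
  calc Real.sqrt (a + b) ≤ Real.sqrt ((Real.sqrt a + Real.sqrt b) ^ 2) := Real.sqrt_le_sqrt h1
    _ = Real.sqrt a + Real.sqrt b := Real.sqrt_sq (by positivity)

theorem stmt11
    (N d : ℕ) (hN : 3 ≤ N) (hd : 1 ≤ d)
    (f : Fin d → (Fin d → ℝ) → ℝ)
    -- (C1)
    (hf_nonneg : ∀ j v, (∀ i, 0 ≤ v i) → 0 ≤ f j v)
    (hC1 : ∀ j, ContDiffOn ℝ 1 (f j) {v : Fin d → ℝ | ∀ i, 0 ≤ v i})
    (hf0 : ∀ j, f j (fun _ => 0) = 0)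
    (hfpos : ∀ j v, (∀ i, 0 ≤ v i) → (∃ i, 0 < v i) → 0 < f j v)
    -- (C2)
    (hC2 : ∀ j v w, (∀ i, 0 ≤ v i) → (∀ i, v i ≤ w i) → f j v ≤ f j w)
    -- continuous nonnegative coefficients φ₁,…,φ_d
    (φ : Fin d → ℝ → ℝ)
    (hφ_cont : ∀ i, ContinuousOn (φ i) (Ici 0))
    (hφ_nonneg : ∀ i, ∀ t ≥ (0:ℝ), 0 ≤ φ i t)
    -- r ↦ r^{2N-2} Σᵢ φᵢ(r) is nondecreasing on [R, ∞) for some R > 0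
    (R : ℝ) (hR : 0 < R)
    (hmono : MonotoneOn (fun r : ℝ => r ^ (2 * N - 2) * ∑ i, φ i r) (Ici R))
    -- the successive approximations
    (w : ℕ → Fin d → ℝ → ℝ)
    (hw0 : ∀ i r, w 0 i r = 1 / (d : ℝ))
    (hwk : ∀ k i r, 0 ≤ r →
      w (k + 1) i r = 1 / (d : ℝ) +
        ∫ t in (0:ℝ)..r,
          (∫ s in (0:ℝ)..t, s ^ (N - 1) * (φ i s * f i (fun j => w k j s))) / t ^ (N - 1)) :
    -- conclusion, with C = [R^{N-1} (Σᵢ wᵢᵏ)'(R)]² and F(s) = ∫₀^s Σᵢ fᵢ(t,…,t) dt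
    ∀ k ≥ 1, ∀ r ≥ R,
      deriv (fun ρ => ∑ i, w k i ρ) r ≤
        Real.sqrt ((R ^ (N - 1) * deriv (fun ρ => ∑ i, w k i ρ) R) ^ 2) * (r ^ (N - 1))⁻¹ +
          Real.sqrt (2 * ∑ i, φ i r) *
            Real.sqrt (∫ t in (0:ℝ)..(∑ i, w k i r), ∑ i, f i (fun _ => t)) := by
  intro k hk r hr
  have hd0 : (0:ℝ) < (d:ℝ) := by exact_mod_cast Nat.lt_of_lt_of_le Nat.zero_lt_one hd
  have hdinv : (0:ℝ) < 1 / (d:ℝ) := by positivity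
  have hfc : ∀ j, ContinuousOn (f j) {v : Fin d → ℝ | ∀ i, 0 ≤ v i} := fun j => (hC1 j).continuousOn
  -- package for the integrand g at one level
  have gpack : ∀ kk : ℕ, (∀ i, ContinuousOn (w kk i) (Ici 0)) →
      (∀ i r, 0 ≤ r → 1/(d:ℝ) ≤ w kk i r) →
      ∀ i : Fin d,
        ContinuousOn (fun s : ℝ => s ^ (N - 1) * (φ i s * f i (fun j => w kk j s))) (Ici 0) ∧
        ContinuousOn (fun t : ℝ =>
          (∫ s in (0:ℝ)..t, s ^ (N - 1) * (φ i s * f i (fun j => w kk j s))) / t ^ (N - 1)) (Ici 0) ∧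
        (∀ t : ℝ, 0 ≤ t →
          0 ≤ (∫ s in (0:ℝ)..t, s ^ (N - 1) * (φ i s * f i (fun j => w kk j s))) / t ^ (N - 1)) := by
    intro kk hcont hlb i
    have hwnn : ∀ j s, 0 ≤ s → (0:ℝ) ≤ w kk j s := fun j s hs => le_trans hdinv.le (hlb j s hs)
    have hψc : ContinuousOn (fun s => φ i s * f i (fun j => w kk j s)) (Ici 0) := by
      refine (hφ_cont i).mul ?_
      refine (hfc i).comp (continuousOn_pi.mpr fun j => hcont j) ?_
      intro s hs
      exact fun j => hwnn j s hs
    have hψnn : ∀ s, 0 ≤ s → 0 ≤ φ i s * f i (fun j => w kk j s) :=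
      fun s hs => mul_nonneg (hφ_nonneg i s hs) (hf_nonneg i _ (fun j => hwnn j s hs))
    have hhc : ContinuousOn (fun s : ℝ => s ^ (N - 1) * (φ i s * f i (fun j => w kk j s))) (Ici 0) :=
      (continuous_pow (N-1)).continuousOn.mul hψc
    have hhnn : ∀ s : ℝ, 0 ≤ s → 0 ≤ s ^ (N - 1) * (φ i s * f i (fun j => w kk j s)) :=
      fun s hs => mul_nonneg (pow_nonneg hs _) (hψnn s hs)
    have hHc : ContinuousOn (fun t : ℝ => ∫ s in (0:ℝ)..t, s ^ (N - 1) * (φ i s * f i (fun j => w kk j s))) (Ici 0) :=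
      aux_primitive_cont hhc
    have hHnn : ∀ t : ℝ, 0 ≤ t → 0 ≤ ∫ s in (0:ℝ)..t, s ^ (N - 1) * (φ i s * f i (fun j => w kk j s)) :=
      fun t ht => intervalIntegral.integral_nonneg ht (fun s hs => hhnn s hs.1)
    have hgnn : ∀ t : ℝ, 0 ≤ t →
        0 ≤ (∫ s in (0:ℝ)..t, s ^ (N - 1) * (φ i s * f i (fun j => w kk j s))) / t ^ (N - 1) :=
      fun t ht => div_nonneg (hHnn t ht) (pow_nonneg ht _)
    refine ⟨hhc, ?_, hgnn⟩
    intro x hx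
    rcases eq_or_lt_of_le (Set.mem_Ici.mp hx) with hx0 | hx0
    · -- continuity at 0 via squeeze
      obtain ⟨M, hM⟩ := (isCompact_Icc : IsCompact (Icc (0:ℝ) 1)).exists_bound_of_continuousOn
        (hψc.mono Icc_subset_Ici_self)
      set M' := max M 0 with hM'
      have hM'nn : 0 ≤ M' := le_max_right _ _
      have hbound : ∀ t ∈ Icc (0:ℝ) 1,
          (∫ s in (0:ℝ)..t, s ^ (N - 1) * (φ i s * f i (fun j => w kk j s))) / t ^ (N - 1) ≤ M' * t := by
        rintro t ⟨ht0, ht1⟩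
        rcases eq_or_lt_of_le ht0 with ht0' | htpos
        · rw [← ht0']
          simp
        · have hHle : (∫ s in (0:ℝ)..t, s ^ (N - 1) * (φ i s * f i (fun j => w kk j s)))
              ≤ M' * (t ^ N / N) := by
            have h1 : (∫ s in (0:ℝ)..t, s ^ (N - 1) * (φ i s * f i (fun j => w kk j s)))
                ≤ ∫ s in (0:ℝ)..t, M' * s ^ (N-1) := by
              apply intervalIntegral.integral_mono_on ht0 (aux_intInt hhc le_rfl ht0)
                ((continuous_const.mul (continuous_pow _)).intervalIntegrable _ _)
              rintro s ⟨hs0, hst⟩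
              have hψM : φ i s * f i (fun j => w kk j s) ≤ M' :=
                le_trans (le_trans (le_abs_self _) (hM s ⟨hs0, le_trans hst ht1⟩)) (le_max_left _ _)
              calc s ^ (N-1) * (φ i s * f i (fun j => w kk j s)) ≤ s ^ (N-1) * M' :=
                    mul_le_mul_of_nonneg_left hψM (pow_nonneg hs0 _)
                _ = M' * s ^ (N-1) := mul_comm _ _
            rw [intervalIntegral.integral_const_mul, integral_pow] at h1
            rw [show N - 1 + 1 = N from by omega] at h1
            have hNc : ((N - 1 : ℕ) : ℝ) + 1 = (N : ℝ) := by
              rw [Nat.cast_sub (by omega : 1 ≤ N)]; ring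
            rw [hNc] at h1
            have hz : ((0:ℝ)) ^ N = 0 := by
              exact zero_pow (by omega : N ≠ 0)
            rw [hz] at h1
            calc (∫ s in (0:ℝ)..t, s ^ (N - 1) * (φ i s * f i (fun j => w kk j s)))
                ≤ M' * ((t ^ N - 0) / N) := h1
              _ = M' * (t ^ N / N) := by ring
          have htp : (0:ℝ) < t ^ (N-1) := pow_pos htpos _
          rw [div_le_iff₀ htp]
          have hN1 : (1:ℝ) ≤ (N:ℝ) := by exact_mod_cast Nat.one_le_of_lt (by omega : 1 < N)
          have htN : t ^ N = t * t ^ (N-1) := by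
            rw [← pow_succ']
            congr 1
            omega
          have h2 : M' * (t ^ N / N) ≤ M' * t ^ N :=
            mul_le_mul_of_nonneg_left (div_le_self (by positivity) hN1) hM'nn
          calc (∫ s in (0:ℝ)..t, s ^ (N - 1) * (φ i s * f i (fun j => w kk j s)))
              ≤ M' * t ^ N := le_trans hHle h2
            _ = M' * t * t ^ (N-1) := by rw [htN]; ring
      rw [← hx0]
      have hzero : (fun t : ℝ => (∫ s in (0:ℝ)..t, s ^ (N - 1) * (φ i s * f i (fun j => w kk j s))) / t ^ (N - 1)) (0:ℝ) = 0 := by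
        simp
      unfold ContinuousWithinAt
      rw [hzero]
      apply squeeze_zero'
      · filter_upwards [self_mem_nhdsWithin] with t ht using hgnn t ht
      · filter_upwards [self_mem_nhdsWithin,
          mem_nhdsWithin_of_mem_nhds (Iic_mem_nhds one_pos)] with t ht h1
        exact hbound t ⟨ht, h1⟩
      · have : Tendsto (fun t : ℝ => M' * t) (nhds 0) (nhds (M' * 0)) :=
          (continuous_const.mul continuous_id).tendsto 0
        rw [mul_zero] at this
        exact this.mono_left nhdsWithin_le_nhds
    · have hIoi : ContinuousOn (fun t : ℝ =>
          (∫ s in (0:ℝ)..t, s ^ (N - 1) * (φ i s * f i (fun j => w kk j s))) / t ^ (N - 1)) (Ioi 0) :=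
        (hHc.mono Ioi_subset_Ici_self).div ((continuous_pow _).continuousOn)
          (fun t ht => pow_ne_zero _ (ne_of_gt ht))
      exact (hIoi.continuousAt (Ioi_mem_nhds hx0)).continuousWithinAt
  -- basic properties of all iterates
  have keyP : ∀ k : ℕ, (∀ i, ContinuousOn (w k i) (Ici 0)) ∧ (∀ i r, 0 ≤ r → 1/(d:ℝ) ≤ w k i r) := by
    intro k
    induction k with
    | zero =>
      constructor
      · intro i
        have : w 0 i = fun _ => 1/(d:ℝ) := funext fun r => hw0 i r
        rw [this]; exact continuousOn_const
      · intro i r _; rw [hw0]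
    | succ kk ih =>
      obtain ⟨ihc, ihl⟩ := ih
      have gp := gpack kk ihc ihl
      constructor
      · intro i
        have hform : ContinuousOn (fun r => 1/(d:ℝ) +
            ∫ t in (0:ℝ)..r, (∫ s in (0:ℝ)..t, s ^ (N - 1) * (φ i s * f i (fun j => w kk j s))) / t ^ (N - 1)) (Ici 0) :=
          continuousOn_const.add (aux_primitive_cont (gp i).2.1)
        exact hform.congr (fun r hr => hwk kk i r hr)
      · intro i r hr
        rw [hwk kk i r hr]
        have h1 : 0 ≤ ∫ t in (0:ℝ)..r,
            (∫ s in (0:ℝ)..t, s ^ (N - 1) * (φ i s * f i (fun j => w kk j s))) / t ^ (N - 1) :=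
          intervalIntegral.integral_nonneg hr (fun t ht => (gp i).2.2 t ht.1)
        linarith
  -- the iterates are nondecreasing in k
  have hstep : ∀ kk i (r:ℝ), 0 ≤ r → w kk i r ≤ w (kk+1) i r := by
    intro kk
    induction kk with
    | zero =>
      intro i r hr
      rw [hw0]
      exact (keyP 1).2 i r hr
    | succ n ih =>
      intro i r hr
      rw [hwk n i r hr, hwk (n+1) i r hr]
      have gpn := gpack n (keyP n).1 (keyP n).2
      have gpn1 := gpack (n+1) (keyP (n+1)).1 (keyP (n+1)).2
      apply add_le_add_right
      apply intervalIntegral.integral_mono_on hr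
        (aux_intInt (gpn i).2.1 le_rfl hr) (aux_intInt (gpn1 i).2.1 le_rfl hr)
      intro t ht
      rcases eq_or_lt_of_le ht.1 with ht0 | ht0
      · rw [← ht0]; simp
      · rw [div_le_div_iff_of_pos_right (pow_pos ht0 _)]
        apply intervalIntegral.integral_mono_on ht.1
          (aux_intInt (gpn i).1 le_rfl ht.1) (aux_intInt (gpn1 i).1 le_rfl ht.1)
        intro s hs
        refine mul_le_mul_of_nonneg_left ?_ (pow_nonneg hs.1 _)
        refine mul_le_mul_of_nonneg_left ?_ (hφ_nonneg i s hs.1)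
        exact hC2 i _ _ (fun j => le_trans hdinv.le ((keyP n).2 j s hs.1)) (fun j => ih j s hs.1)
  -- derivative of each iterate
  have hwderiv : ∀ kk i x, 0 < x → HasDerivAt (w (kk+1) i)
      ((∫ s in (0:ℝ)..x, s ^ (N-1) * (φ i s * f i fun j => w kk j s)) / x ^ (N-1)) x := by
    intro kk i x hx
    have gp := gpack kk (keyP kk).1 (keyP kk).2
    have h1 := (aux_primitive_deriv (gp i).2.1 hx).const_add (1/(d:ℝ))
    exact h1.congr_of_eventuallyEq
      (eventuallyEq_of_mem (Ioi_mem_nhds hx) fun y hy => hwk kk i y (le_of_lt hy))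
  -- derivative of the sum ofiterates
  have hSumderiv : ∀ kk (x:ℝ), 0 < x → HasDerivAt (fun ρ => ∑ i, w (kk+1) i ρ)
      ((∫ s in (0:ℝ)..x, s ^ (N-1) * ∑ i, (φ i s * f i fun j => w kk j s)) / x ^ (N-1)) x := by
    intro kk x hx
    have h1 : HasDerivAt (fun ρ => ∑ i, w (kk+1) i ρ)
        (∑ i, (∫ s in (0:ℝ)..x, s ^ (N-1) * (φ i s * f i fun j => w kk j s)) / x ^ (N-1)) x :=
      HasDerivAt.fun_sum (fun i _ => hwderiv kk i x hx)
    convert h1 using 1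
    rw [← Finset.sum_div]
    congr 1
    rw [← intervalIntegral.integral_finset_sum]
    · apply intervalIntegral.integral_congr
      intro s _
      simp only [Finset.mul_sum]
    · intro i _
      exact aux_intInt ((gpack kk (keyP kk).1 (keyP kk).2 i).1) le_rfl hx.le
  obtain ⟨m, rfl⟩ : ∃ m, k = m + 1 := ⟨k - 1, by omega⟩
  have hr0 : (0:ℝ) < r := lt_of_lt_of_le hR hr
  have hRr : R ≤ r := hr
  have gpm := gpack m (keyP m).1 (keyP m).2
  -- G : the diagonal sum of the fᵢ
  set G : ℝ → ℝ := fun u => ∑ j, f j (fun _ => u) with hG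
  have hGc : ContinuousOn G (Ici 0) := by
    rw [hG]
    apply continuousOn_finset_sum
    intro j _
    exact (hfc j).comp (continuous_pi fun _ => continuous_id).continuousOn
      (fun u hu i => hu)
  have hGnn : ∀ u : ℝ, 0 ≤ u → 0 ≤ G u := by
    intro u hu
    rw [hG]
    exact Finset.sum_nonneg fun j _ => hf_nonneg j _ (fun _ => hu)
  -- basic facts about S := Σ w^(m+1)
  have hSc : ContinuousOn (fun ρ => ∑ i, w (m+1) i ρ) (Ici 0) :=
    continuousOn_finset_sum _ fun i _ => (keyP (m+1)).1 i
  have hSnn : ∀ x : ℝ, 0 ≤ x → 0 ≤ ∑ i, w (m+1) i x := fun x hx =>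
    Finset.sum_nonneg fun i _ => le_trans hdinv.le ((keyP (m+1)).2 i x hx)
  have hSpos : ∀ x : ℝ, 0 ≤ x → 0 < ∑ i, w (m+1) i x := by
    intro x hx
    have h1 : ∑ _i : Fin d, (1/(d:ℝ)) ≤ ∑ i, w (m+1) i x :=
      Finset.sum_le_sum fun i _ => (keyP (m+1)).2 i x hx
    have h2 : ∑ _i : Fin d, (1/(d:ℝ)) = 1 := by
      rw [Finset.sum_const, Finset.card_univ, Fintype.card_fin, nsmul_eq_mul]
      field_simp
    rw [h2] at h1
    linarith
  have hwmle : ∀ (j : Fin d) (s : ℝ), 0 ≤ s → w m j s ≤ ∑ i, w (m+1) i s := fun j s hs =>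
    le_trans (hstep m j s hs)
      (Finset.single_le_sum (fun i _ => le_trans hdinv.le ((keyP (m+1)).2 i s hs))
        (Finset.mem_univ j))
  -- the summed integrand and its primitive E
  have hsumc : ContinuousOn (fun s : ℝ => s ^ (N-1) * ∑ i, (φ i s * f i fun j => w m j s)) (Ici 0) := by
    have h1 := continuousOn_finset_sum (Finset.univ)
      (fun (i : Fin d) (_ : i ∈ Finset.univ) => (gpm i).1)
    exact h1.congr (fun s _ => by simp only [Finset.mul_sum])
  have hsumnn : ∀ s : ℝ, 0 ≤ s → 0 ≤ s ^ (N-1) * ∑ i, (φ i s * f i fun j => w m j s) := fun s hs =>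
    mul_nonneg (pow_nonneg hs _)
      (Finset.sum_nonneg fun i _ => mul_nonneg (hφ_nonneg i s hs)
        (hf_nonneg i _ fun j => le_trans hdinv.le ((keyP m).2 j s hs)))
  set E : ℝ → ℝ := fun x => ∫ s in (0:ℝ)..x, s ^ (N-1) * ∑ i, (φ i s * f i fun j => w m j s) with hE
  have hEc : ContinuousOn E (Ici 0) := by
    rw [hE]; exact aux_primitive_cont hsumc
  have hEnn : ∀ x : ℝ, 0 ≤ x → 0 ≤ E x := by
    intro x hx
    simp only [hE]
    exact intervalIntegral.integral_nonneg hx fun s hs => hsumnn s hs.1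
  have hEd : ∀ x : ℝ, 0 < x →
      HasDerivAt E (x ^ (N-1) * ∑ i, (φ i x * f i fun j => w m j x)) x := by
    intro x hx
    simp only [hE]
    exact aux_primitive_deriv hsumc hx
  have hSd : ∀ x : ℝ, 0 < x →
      HasDerivAt (fun ρ => ∑ i, w (m+1) i ρ) (E x / x ^ (N-1)) x := by
    intro x hx
    simp only [hE]
    exact hSumderiv m x hx
  have hDeq : ∀ x : ℝ, 0 < x →
      deriv (fun ρ => ∑ i, w (m+1) i ρ) x = E x / x ^ (N-1) := fun x hx => (hSd x hx).deriv
  -- continuity of auxiliary integrands on [R,r]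
  have hsub1 : Icc R r ⊆ Ici (0:ℝ) := fun x hx => le_trans hR.le hx.1
  have hGSc : ContinuousOn (fun s => G (∑ i, w (m+1) i s)) (Ici 0) :=
    hGc.comp hSc (fun s hs => hSnn s hs)
  have hDc : ContinuousOn (fun s => E s / s ^ (N-1)) (Icc R r) := by
    apply ContinuousOn.div ((hEc.mono hsub1)) ((continuous_pow _).continuousOn)
    intro x hx
    exact pow_ne_zero _ (ne_of_gt (lt_of_lt_of_le hR hx.1))
  -- energy identity
  have hsq : (E r)^2 = (E R)^2 +
      ∫ s in R..r, 2 * E s * (s ^ (N-1) * ∑ i, (φ i s * f i fun j => w m j s)) := by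
    have hder : ∀ x ∈ uIcc R r, HasDerivAt (fun y => (E y)^2)
        (2 * E x * (x ^ (N-1) * ∑ i, (φ i x * f i fun j => w m j x))) x := by
      intro x hx'
      rw [uIcc_of_le hRr] at hx'
      have hx0 : 0 < x := lt_of_lt_of_le hR hx'.1
      have h1 := (hEd x hx0).pow 2
      norm_num at h1
      exact h1
    have hint : IntervalIntegrable
        (fun x => 2 * E x * (x ^ (N-1) * ∑ i, (φ i x * f i fun j => w m j x))) volume R r :=
      aux_intInt ((continuousOn_const.mul hEc).mul hsumc) hR.le hr0.le
    have h2 := intervalIntegral.integral_eq_sub_of_hasDerivAt hder hint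
    try simp only [] at h2
    linarith
  -- pointwise bound for the energy integrand
  have hibound : (∫ s in R..r, 2 * E s * (s ^ (N-1) * ∑ i, (φ i s * f i fun j => w m j s)))
      ≤ ∫ s in R..r, (2 * (r ^ (2*N-2) * ∑ i, φ i r)) *
          (G (∑ i, w (m+1) i s) * (E s / s ^ (N-1))) := by
    have hint1 : IntervalIntegrable
        (fun x => 2 * E x * (x ^ (N-1) * ∑ i, (φ i x * f i fun j => w m j x))) volume R r :=
      aux_intInt ((continuousOn_const.mul hEc).mul hsumc) hR.le hr0.le
    have hint2 : IntervalIntegrable (fun s => (2 * (r ^ (2*N-2) * ∑ i, φ i r)) *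
        (G (∑ i, w (m+1) i s) * (E s / s ^ (N-1)))) volume R r := by
      apply ContinuousOn.intervalIntegrable
      rw [uIcc_of_le hRr]
      exact continuousOn_const.mul (((hGSc.mono hsub1)).mul hDc)
    apply intervalIntegral.integral_mono_on hRr hint1 hint2
    intro s hs
    have hs0 : 0 < s := lt_of_lt_of_le hR hs.1
    have hPne : (s:ℝ) ^ (N-1) ≠ 0 := pow_ne_zero _ hs0.ne'
    have hpow2 : s ^ (2*N-2) = s ^ (N-1) * s ^ (N-1) := by
      rw [← pow_add]; congr 1; omega
    have hψle : ∑ i, (φ i s * f i fun j => w m j s)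
        ≤ (∑ i, φ i s) * G (∑ i, w (m+1) i s) := by
      rw [Finset.sum_mul]
      refine Finset.sum_le_sum fun i _ => ?_
      refine mul_le_mul_of_nonneg_left ?_ (hφ_nonneg i s hs0.le)
      refine le_trans (hC2 i _ (fun _ => ∑ i, w (m+1) i s)
        (fun j => le_trans hdinv.le ((keyP m).2 j s hs0.le))
        (fun j => hwmle j s hs0.le)) ?_
      rw [hG]
      exact Finset.single_le_sum (fun j _ => hf_nonneg j _ (fun _ => hSnn s hs0.le))
        (Finset.mem_univ i)
    have hwm : s ^ (2*N-2) * (∑ i, φ i s) ≤ r ^ (2*N-2) * (∑ i, φ i r) :=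
      hmono (show s ∈ Ici R from hs.1) (show r ∈ Ici R from hr) hs.2
    have hDnn : 0 ≤ E s / s^(N-1) := div_nonneg (hEnn s hs0.le) (pow_nonneg hs0.le _)
    have hGSnn : 0 ≤ G (∑ i, w (m+1) i s) := hGnn _ (hSnn s hs0.le)
    calc 2 * E s * (s ^ (N-1) * ∑ i, (φ i s * f i fun j => w m j s))
        = (2 * (E s / s ^ (N-1))) * (s ^ (2*N-2) * ∑ i, (φ i s * f i fun j => w m j s)) := by
          rw [hpow2]; field_simp
      _ ≤ (2 * (E s / s ^ (N-1))) *
            ((s ^ (2*N-2) * (∑ i, φ i s)) * G (∑ i, w (m+1) i s)) := by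
          refine mul_le_mul_of_nonneg_left ?_ (mul_nonneg (by norm_num) hDnn)
          calc s ^ (2*N-2) * ∑ i, (φ i s * f i fun j => w m j s)
              ≤ s ^ (2*N-2) * ((∑ i, φ i s) * G (∑ i, w (m+1) i s)) :=
                mul_le_mul_of_nonneg_left hψle (pow_nonneg hs0.le _)
            _ = (s ^ (2*N-2) * (∑ i, φ i s)) * G (∑ i, w (m+1) i s) := by ring
      _ ≤ (2 * (E s / s ^ (N-1))) *
            ((r ^ (2*N-2) * (∑ i, φ i r)) * G (∑ i, w (m+1) i s)) :=
          mul_le_mul_of_nonneg_left (mul_le_mul_of_nonneg_right hwm hGSnn)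
            (mul_nonneg (by norm_num) hDnn)
      _ = (2 * (r ^ (2*N-2) * ∑ i, φ i r)) *
            (G (∑ i, w (m+1) i s) * (E s / s ^ (N-1))) := by ring
  -- pull out the constant
  have hconst : (∫ s in R..r, (2 * (r ^ (2*N-2) * ∑ i, φ i r)) *
        (G (∑ i, w (m+1) i s) * (E s / s ^ (N-1))))
      = (2 * (r ^ (2*N-2) * ∑ i, φ i r)) *
        ∫ s in R..r, G (∑ i, w (m+1) i s) * (E s / s ^ (N-1)) :=
    intervalIntegral.integral_const_mul _ _
  -- FTC for F ∘ S
  have hFTC2 : (∫ s in R..r, G (∑ i, w (m+1) i s) * (E s / s ^ (N-1)))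
      = (∫ t in (0:ℝ)..(∑ i, w (m+1) i r), G t) - ∫ t in (0:ℝ)..(∑ i, w (m+1) i R), G t := by
    have hder : ∀ x ∈ uIcc R r,
        HasDerivAt (fun y => ∫ t in (0:ℝ)..(∑ i, w (m+1) i y), G t)
          (G (∑ i, w (m+1) i x) * (E x / x ^ (N-1))) x := by
      intro x hx'
      rw [uIcc_of_le hRr] at hx'
      have hx0 : 0 < x := lt_of_lt_of_le hR hx'.1
      have hSx : 0 < ∑ i, w (m+1) i x := hSpos x hx0.le
      have h1 : HasDerivAt (fun u => ∫ t in (0:ℝ)..u, G t)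
          (G (∑ i, w (m+1) i x)) (∑ i, w (m+1) i x) :=
        intervalIntegral.integral_hasDerivAt_right (aux_intInt hGc le_rfl hSx.le)
          (ContinuousOn.stronglyMeasurableAtFilter isOpen_Ioi (hGc.mono Ioi_subset_Ici_self)
            _ hSx)
          (hGc.continuousAt (Ici_mem_nhds hSx))
      exact h1.comp x (hSd x hx0)
    have hint : IntervalIntegrable
        (fun s => G (∑ i, w (m+1) i s) * (E s / s ^ (N-1))) volume R r := by
      apply ContinuousOn.intervalIntegrable
      rw [uIcc_of_le hRr]
      exact (hGSc.mono hsub1).mul hDc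
    have h2 := intervalIntegral.integral_eq_sub_of_hasDerivAt hder hint
    simpa using h2
  have hFR : 0 ≤ ∫ t in (0:ℝ)..(∑ i, w (m+1) i R), G t :=
    intervalIntegral.integral_nonneg (hSnn R hR.le) (fun t ht => hGnn t ht.1)
  have hFr : 0 ≤ ∫ t in (0:ℝ)..(∑ i, w (m+1) i r), G t :=
    intervalIntegral.integral_nonneg (hSnn r hr0.le) (fun t ht => hGnn t ht.1)
  have hΦr : 0 ≤ ∑ i, φ i r := Finset.sum_nonneg fun i _ => hφ_nonneg i r hr0.le
  have hWnn : 0 ≤ 2 * (r ^ (2*N-2) * ∑ i, φ i r) := by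
    have := mul_nonneg (pow_nonneg hr0.le (2*N-2)) hΦr
    linarith
  -- key quadratic inequality
  have hkey : (E r)^2 ≤ (E R)^2 + (2 * (r ^ (2*N-2) * ∑ i, φ i r)) *
      ∫ t in (0:ℝ)..(∑ i, w (m+1) i r), G t := by
    rw [hFTC2] at hconst
    have h4 : (2 * (r ^ (2*N-2) * ∑ i, φ i r)) *
        ((∫ t in (0:ℝ)..(∑ i, w (m+1) i r), G t) - ∫ t in (0:ℝ)..(∑ i, w (m+1) i R), G t)
        = (2 * (r ^ (2*N-2) * ∑ i, φ i r)) * (∫ t in (0:ℝ)..(∑ i, w (m+1) i r), G t)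
          - (2 * (r ^ (2*N-2) * ∑ i, φ i r)) * ∫ t in (0:ℝ)..(∑ i, w (m+1) i R), G t := by
      ring
    have h5 := mul_nonneg hWnn hFR
    linarith
  -- from squares to square roots
  have hp2 : ((r:ℝ) ^ (N-1))^2 = r ^ (2*N-2) := by
    rw [← pow_mul]; congr 1; omega
  have hBnn : 0 ≤ (2 * ∑ i, φ i r) * (∫ t in (0:ℝ)..(∑ i, w (m+1) i r), G t) * (r ^ (N-1))^2 :=
    mul_nonneg (mul_nonneg (by linarith) hFr) (sq_nonneg _)
  have hErle : E r ≤ Real.sqrt ((E R)^2) +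
      Real.sqrt ((2 * ∑ i, φ i r) * (∫ t in (0:ℝ)..(∑ i, w (m+1) i r), G t) * (r ^ (N-1))^2) := by
    have hre : (2 * (r ^ (2*N-2) * ∑ i, φ i r)) * (∫ t in (0:ℝ)..(∑ i, w (m+1) i r), G t)
        = (2 * ∑ i, φ i r) * (∫ t in (0:ℝ)..(∑ i, w (m+1) i r), G t) * (r ^ (N-1))^2 := by
      rw [hp2]; ring
    calc E r = Real.sqrt ((E r)^2) := (Real.sqrt_sq (hEnn r hr0.le)).symm
      _ ≤ Real.sqrt ((E R)^2 +
            (2 * ∑ i, φ i r) * (∫ t in (0:ℝ)..(∑ i, w (m+1) i r), G t) * (r ^ (N-1))^2) := by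
          apply Real.sqrt_le_sqrt
          rw [← hre]
          exact hkey
      _ ≤ _ := aux_sqrt_add (sq_nonneg _) hBnn
  have hsplit : Real.sqrt ((2 * ∑ i, φ i r) * (∫ t in (0:ℝ)..(∑ i, w (m+1) i r), G t) * (r ^ (N-1))^2)
      = Real.sqrt (2 * ∑ i, φ i r) *
        Real.sqrt (∫ t in (0:ℝ)..(∑ i, w (m+1) i r), G t) * r ^ (N-1) := by
    rw [Real.sqrt_mul (mul_nonneg (by linarith) hFr), Real.sqrt_sq (pow_nonneg hr0.le _),
      Real.sqrt_mul (by linarith)]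
  -- final assembly
  rw [hDeq r hr0, hDeq R hR]
  have hRE : R ^ (N-1) * (E R / R ^ (N-1)) = E R := by
    field_simp
  rw [hRE]
  rw [div_le_iff₀ (pow_pos hr0 (N-1))]
  rw [hsplit] at hErle
  calc E r ≤ Real.sqrt ((E R)^2) + Real.sqrt (2 * ∑ i, φ i r) *
        Real.sqrt (∫ t in (0:ℝ)..(∑ i, w (m+1) i r), G t) * r ^ (N-1) := hErle
    _ = (Real.sqrt ((E R)^2) * (r ^ (N-1))⁻¹ + Real.sqrt (2 * ∑ i, φ i r) *
        Real.sqrt (∫ t in (0:ℝ)..(∑ i, w (m+1) i r), G t)) * r ^ (N-1) := by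
      field_simp
end
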